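/- arXiv:1503.03742 — 4 statements merged into one kernel-verified Lean document; each statement's English description precedes it below -/
import Mathlib

section
/- Let n ≥ 1, let u ∈ ℤⁿ with u_i ≥ 1 for all i, and let γ, θ ∈ rect(u) with γ ⪯ θ. Then conv({x ∈ rect(u) : γ ⪯ x ⪯ θ}) = conv({x ∈ rect(u) : γ ⪯ x}) ∩ conv({x ∈ rect(u) : x ⪯ θ}); that is, the convex hull operator distributes over the intersection of the ⪰-set and the ⪯-set. -/
def lexLe {n : ℕ} (y x : Fin n → ℤ) : Prop :=
  y = x ∨ ∃ s : Fin n, y s < x s ∧ ∀ k : Fin n, s < k → y k = x k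

noncomputable def toReal {n : ℕ} (x : Fin n → ℤ) : Fin n → ℝ := fun i => (x i : ℝ)

namespace Stmt12

open Finset Set

def BOX {n : ℕ} (u : Fin n → ℤ) : Set (Fin n → ℤ) := {x | ∀ i, 0 ≤ x i ∧ x i ≤ u i}
def LS {n : ℕ} (u γ : Fin n → ℤ) : Set (Fin n → ℤ) := {x | x ∈ BOX u ∧ lexLe γ x}
def US {n : ℕ} (u θ : Fin n → ℤ) : Set (Fin n → ℤ) := {x | x ∈ BOX u ∧ lexLe x θ}
def BAND {n : ℕ} (u γ θ : Fin n → ℤ) : Set (Fin n → ℤ) :=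
  {x | x ∈ BOX u ∧ lexLe γ x ∧ lexLe x θ}

noncomputable def hull {n : ℕ} (S : Set (Fin n → ℤ)) : Set (Fin n → ℝ) :=
  convexHull ℝ (toReal '' S)

theorem lexLe_refl {n : ℕ} (x : Fin n → ℤ) : lexLe x x := Or.inl rfl

theorem lexLe_succ_iff {n : ℕ} (γ x : Fin (n+1) → ℤ) :
    lexLe γ x ↔ γ (Fin.last n) < x (Fin.last n) ∨
      (γ (Fin.last n) = x (Fin.last n) ∧ lexLe (Fin.init γ) (Fin.init x)) := by
  constructor
  · rintro (rfl | ⟨s, hs, hk⟩)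
    · exact Or.inr ⟨rfl, Or.inl rfl⟩
    · rcases eq_or_ne s (Fin.last n) with rfl | hne
      · exact Or.inl hs
      · have hlt : s < Fin.last n := Fin.lt_last_iff_ne_last.mpr hne
        obtain ⟨s', rfl⟩ := Fin.exists_castSucc_eq.mpr hne
        refine Or.inr ⟨hk _ hlt, Or.inr ⟨s', hs, fun k' hk' => hk _ ?_⟩⟩
        exact Fin.castSucc_lt_castSucc_iff.mpr hk'
  · rintro (h | ⟨he, (hinit | ⟨s', hs', hk'⟩)⟩)
    · exact Or.inr ⟨Fin.last n, h, fun k hk => absurd hk (not_lt.mpr (Fin.le_last k))⟩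
    · refine Or.inl ?_
      funext k
      refine Fin.lastCases he (fun i => congrFun hinit i) k
    · refine Or.inr ⟨s'.castSucc, hs', fun k hk => ?_⟩
      refine Fin.lastCases (motive := fun k => s'.castSucc < k → γ k = x k)
        (fun _ => he) (fun i hik => hk' i (Fin.castSucc_lt_castSucc_iff.mp hik)) k hk

theorem lexLe_last_le {n : ℕ} {γ x : Fin (n+1) → ℤ} (h : lexLe γ x) :
    γ (Fin.last n) ≤ x (Fin.last n) := by
  rcases (lexLe_succ_iff γ x).1 h with h | ⟨h, _⟩
  · exact le_of_lt h
  · exact le_of_eq h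

theorem lexLe_init {n : ℕ} {γ x : Fin (n+1) → ℤ} (h : lexLe γ x)
    (he : γ (Fin.last n) = x (Fin.last n)) : lexLe (Fin.init γ) (Fin.init x) := by
  rcases (lexLe_succ_iff γ x).1 h with h' | ⟨_, h'⟩
  · exact absurd he (ne_of_lt h')
  · exact h'

theorem lexLe_of_last_lt {n : ℕ} {γ x : Fin (n+1) → ℤ}
    (h : γ (Fin.last n) < x (Fin.last n)) : lexLe γ x :=
  (lexLe_succ_iff γ x).2 (Or.inl h)

theorem lexLe_of_last_eq {n : ℕ} {γ x : Fin (n+1) → ℤ}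
    (he : γ (Fin.last n) = x (Fin.last n)) (h : lexLe (Fin.init γ) (Fin.init x)) : lexLe γ x :=
  (lexLe_succ_iff γ x).2 (Or.inr ⟨he, h⟩)

-- box facts
theorem init_mem_BOX {n : ℕ} {u : Fin (n+1) → ℤ} {x : Fin (n+1) → ℤ} (h : x ∈ BOX u) :
    Fin.init x ∈ BOX (Fin.init u) := fun i => h i.castSucc

theorem snoc_mem_BOX {n : ℕ} {u : Fin (n+1) → ℤ} {a : Fin n → ℤ} {k : ℤ}
    (ha : a ∈ BOX (Fin.init u)) (h0 : 0 ≤ k) (h1 : k ≤ u (Fin.last n)) :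
    Fin.snoc a k ∈ BOX u := by
  intro i
  refine Fin.lastCases ?_ (fun j => ?_) i
  · simpa using ⟨h0, h1⟩
  · simpa [Fin.init] using ha j

theorem zero_mem_BOX {n : ℕ} {u : Fin n → ℤ} (hu : ∀ i, 1 ≤ u i) :
    (fun _ => 0 : Fin n → ℤ) ∈ BOX u := fun i => ⟨le_refl 0, le_trans one_pos.le (hu i)⟩



-- LS/US facts in dim n+1
section SetFacts
variable {n : ℕ} {u γ θ : Fin (n+1) → ℤ}

theorem LS_last_lb {x : Fin (n+1) → ℤ} (h : x ∈ LS u γ) :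
    γ (Fin.last n) ≤ x (Fin.last n) := lexLe_last_le h.2

theorem US_last_ub {x : Fin (n+1) → ℤ} (h : x ∈ US u θ) :
    x (Fin.last n) ≤ θ (Fin.last n) := lexLe_last_le h.2

theorem LS_init_of_last_eq {x : Fin (n+1) → ℤ} (h : x ∈ LS u γ)
    (he : x (Fin.last n) = γ (Fin.last n)) :
    Fin.init x ∈ LS (Fin.init u) (Fin.init γ) :=
  ⟨init_mem_BOX h.1, lexLe_init h.2 he.symm⟩

theorem US_init_of_last_eq {x : Fin (n+1) → ℤ} (h : x ∈ US u θ)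
    (he : x (Fin.last n) = θ (Fin.last n)) :
    Fin.init x ∈ US (Fin.init u) (Fin.init θ) :=
  ⟨init_mem_BOX h.1, lexLe_init h.2 he⟩

theorem snoc_mem_LS_base {a : Fin n → ℤ} (hγ : γ ∈ BOX u)
    (ha : a ∈ LS (Fin.init u) (Fin.init γ)) :
    Fin.snoc a (γ (Fin.last n)) ∈ LS u γ := by
  refine ⟨snoc_mem_BOX ha.1 (hγ (Fin.last n)).1 (hγ (Fin.last n)).2, ?_⟩
  refine lexLe_of_last_eq (by simp) ?_
  rw [Fin.init_snoc]; exact ha.2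

theorem snoc_mem_LS_upper (hγ : γ ∈ BOX u) {b : Fin n → ℤ} {k : ℤ} (hb : b ∈ BOX (Fin.init u))
    (hk : γ (Fin.last n) + 1 ≤ k) (hk' : k ≤ u (Fin.last n)) :
    Fin.snoc b k ∈ LS u γ := by
  have h0 : (0:ℤ) ≤ k := le_trans (hγ (Fin.last n)).1 (by omega)
  refine ⟨snoc_mem_BOX hb h0 hk', lexLe_of_last_lt ?_⟩
  simp only [Fin.snoc_last]; omega

theorem snoc_mem_US_base {a : Fin n → ℤ} (hθ : θ ∈ BOX u)
    (ha : a ∈ US (Fin.init u) (Fin.init θ)) :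
    Fin.snoc a (θ (Fin.last n)) ∈ US u θ := by
  refine ⟨snoc_mem_BOX ha.1 (hθ (Fin.last n)).1 (hθ (Fin.last n)).2, ?_⟩
  refine lexLe_of_last_eq (by simp) ?_
  rw [Fin.init_snoc]; exact ha.2

theorem snoc_mem_US_lower (hθ : θ ∈ BOX u) {b : Fin n → ℤ} {k : ℤ} (hb : b ∈ BOX (Fin.init u))
    (hk : 0 ≤ k) (hk' : k + 1 ≤ θ (Fin.last n)) :
    Fin.snoc b k ∈ US u θ := by
  have h1 : k ≤ u (Fin.last n) := le_trans (by omega) (hθ (Fin.last n)).2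
  refine ⟨snoc_mem_BOX hb hk h1, lexLe_of_last_lt ?_⟩
  simp only [Fin.snoc_last]; omega

theorem snoc_mem_BAND_g (hγ : γ ∈ BOX u) (hgt : γ (Fin.last n) < θ (Fin.last n))
    {a : Fin n → ℤ} (ha : a ∈ LS (Fin.init u) (Fin.init γ)) :
    Fin.snoc a (γ (Fin.last n)) ∈ BAND u γ θ := by
  have h := snoc_mem_LS_base hγ ha
  refine ⟨h.1, h.2, lexLe_of_last_lt ?_⟩
  simp only [Fin.snoc_last]; omega

theorem snoc_mem_BAND_t (hθ : θ ∈ BOX u) (hgt : γ (Fin.last n) < θ (Fin.last n))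
    {a : Fin n → ℤ} (ha : a ∈ US (Fin.init u) (Fin.init θ)) :
    Fin.snoc a (θ (Fin.last n)) ∈ BAND u γ θ := by
  have h := snoc_mem_US_base hθ ha
  refine ⟨h.1, lexLe_of_last_lt ?_, h.2⟩
  simp only [Fin.snoc_last]; omega

theorem snoc_mem_BAND_mid (hγ : γ ∈ BOX u) (hθ : θ ∈ BOX u) {b : Fin n → ℤ} {k : ℤ}
    (hb : b ∈ BOX (Fin.init u)) (hk : γ (Fin.last n) + 1 ≤ k) (hk' : k + 1 ≤ θ (Fin.last n)) :
    Fin.snoc b k ∈ BAND u γ θ := by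
  have h1 := snoc_mem_LS_upper hγ hb hk (le_trans (by omega) (hθ (Fin.last n)).2)
  have h2 := snoc_mem_US_lower hθ hb (le_trans (hγ (Fin.last n)).1 (by omega)) hk'
  exact ⟨h1.1, h1.2, h2.2⟩

theorem snoc_mem_BAND_eq (hγ : γ ∈ BOX u) (hgt : γ (Fin.last n) = θ (Fin.last n))
    {a : Fin n → ℤ} (ha : a ∈ BAND (Fin.init u) (Fin.init γ) (Fin.init θ)) :
    Fin.snoc a (γ (Fin.last n)) ∈ BAND u γ θ := by
  have h := snoc_mem_LS_base hγ ⟨ha.1, ha.2.1⟩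
  refine ⟨h.1, h.2, lexLe_of_last_eq (by simp [hgt]) ?_⟩
  rw [Fin.init_snoc]; exact ha.2.2

end SetFacts

-- hull helpers
section HullFacts
variable {n : ℕ}

theorem mem_hull_of_mem {S : Set (Fin n → ℤ)} {q : Fin n → ℤ} (hq : q ∈ S) :
    toReal q ∈ hull S := subset_convexHull ℝ _ (Set.mem_image_of_mem _ hq)

theorem hull_mono {S T : Set (Fin n → ℤ)} (h : S ⊆ T) : hull S ⊆ hull T :=
  convexHull_mono (Set.image_mono h)

theorem hull_convex (S : Set (Fin n → ℤ)) : Convex ℝ (hull S) := convex_convexHull ℝ _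

theorem toReal_snoc (p : Fin n → ℤ) (k : ℤ) :
    toReal (Fin.snoc p k) = Fin.snoc (toReal p) (k : ℝ) := by
  funext i
  refine Fin.lastCases ?_ (fun j => ?_) i <;> simp [toReal]

theorem snoc_smul (c : ℝ) (y : Fin n → ℝ) (h : ℝ) :
    c • (Fin.snoc y h : Fin (n+1) → ℝ) = Fin.snoc (c • y) (c * h) := by
  funext i
  refine Fin.lastCases ?_ (fun j => ?_) i <;> simp

theorem snoc_add (y z : Fin n → ℝ) (a b : ℝ) :
    (Fin.snoc y a : Fin (n+1) → ℝ) + Fin.snoc z b = Fin.snoc (y + z) (a + b) := by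
  funext i
  refine Fin.lastCases ?_ (fun j => ?_) i <;> simp

theorem snoc_combo2 (y z : Fin n → ℝ) (a b c d : ℝ) :
    c • (Fin.snoc y a : Fin (n+1) → ℝ) + d • (Fin.snoc z b : Fin (n+1) → ℝ)
      = (Fin.snoc (c • y + d • z) (c * a + d * b) : Fin (n+1) → ℝ) := by
  rw [snoc_smul, snoc_smul, snoc_add]

-- sum of weighted points equals total weight • centerMass
theorem sum_smul_eq_centerMass {ι : Type*} (s : Finset ι) (w : ι → ℝ) (v : ι → Fin n → ℝ)
    (hw : ∀ i ∈ s, 0 ≤ w i) :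
    ∑ i ∈ s, w i • v i = (∑ i ∈ s, w i) • s.centerMass w v := by
  rcases eq_or_ne (∑ i ∈ s, w i) 0 with h0 | h0
  · rw [h0, zero_smul]
    refine Finset.sum_eq_zero (fun i hi => ?_)
    have : w i = 0 := by
      have := (Finset.sum_eq_zero_iff_of_nonneg hw).1 h0 i hi
      exact this
    rw [this, zero_smul]
  · rw [Finset.centerMass, smul_smul, mul_inv_cancel₀ h0, one_smul]

theorem snoc_int_mem_hull {T : Set (Fin n → ℤ)} {S : Set (Fin (n+1) → ℤ)} (k : ℤ)
    (hS : ∀ p ∈ T, Fin.snoc p k ∈ S) {b : Fin n → ℝ} (hb : b ∈ hull T) :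
    (Fin.snoc b (k : ℝ) : Fin (n+1) → ℝ) ∈ hull S := by
  rw [hull, _root_.convexHull_eq] at hb
  obtain ⟨ι, t, w, z, hw0, hw1, hz, hcm⟩ := hb
  have hb' : b = ∑ i ∈ t, w i • z i := by
    rw [← hcm, Finset.centerMass_eq_of_sum_1 _ _ hw1]
  have key : (Fin.snoc b (k:ℝ) : Fin (n+1) → ℝ)
      = ∑ i ∈ t, w i • (Fin.snoc (z i) (k : ℝ) : Fin (n+1) → ℝ) := by
    funext i
    refine Fin.lastCases ?_ (fun j => ?_) i
    · simp only [Fin.snoc_last, Finset.sum_apply, Pi.smul_apply, smul_eq_mul]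
      rw [← Finset.sum_mul, hw1, one_mul]
    · simp only [Fin.snoc_castSucc, Finset.sum_apply, Pi.smul_apply, smul_eq_mul, hb']
  rw [key]
  refine Convex.sum_mem (hull_convex S) hw0 hw1 (fun i hi => ?_)
  obtain ⟨p, hp, hpe⟩ := hz i hi
  rw [← hpe, ← toReal_snoc]
  exact mem_hull_of_mem (hS p hp)

theorem slice_mem_hull {T : Set (Fin n → ℤ)} {S : Set (Fin (n+1) → ℤ)} {c d : ℤ}
    (hcd : c ≤ d) (hSc : ∀ p ∈ T, Fin.snoc p c ∈ S) (hSd : ∀ p ∈ T, Fin.snoc p d ∈ S)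
    {b : Fin n → ℝ} (hb : b ∈ hull T) {h : ℝ} (h1 : (c:ℝ) ≤ h) (h2 : h ≤ (d:ℝ)) :
    (Fin.snoc b h : Fin (n+1) → ℝ) ∈ hull S := by
  rcases eq_or_lt_of_le hcd with rfl | hlt
  · have : h = (c:ℝ) := le_antisymm h2 h1
    rw [this]; exact snoc_int_mem_hull c hSc hb
  · have hdc : (0:ℝ) < (d:ℝ) - (c:ℝ) := by
      have : (c:ℝ) < (d:ℝ) := by exact_mod_cast hlt
      linarith
    set σ : ℝ := (h - c) / (d - c) with hσ
    have hσ0 : 0 ≤ σ := div_nonneg (by linarith) hdc.le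
    have hσ1 : σ ≤ 1 := by
      rw [div_le_one hdc]; linarith
    have key : (Fin.snoc b h : Fin (n+1) → ℝ)
        = (1 - σ) • (Fin.snoc b (c:ℝ) : Fin (n+1) → ℝ) + σ • (Fin.snoc b (d:ℝ) : Fin (n+1) → ℝ) := by
      rw [snoc_combo2]
      have e1 : (1 - σ) • b + σ • b = b := by
        rw [← add_smul]; norm_num
      have e2 : (1 - σ) * (c:ℝ) + σ * (d:ℝ) = h := by
        have hne : (d:ℝ) - (c:ℝ) ≠ 0 := hdc.ne'
        rw [hσ]
        field_simp
        ring
      rw [e1, e2]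
    rw [key]
    exact (hull_convex S) (snoc_int_mem_hull c hSc hb) (snoc_int_mem_hull d hSd hb)
      (by linarith) hσ0 (by ring)

theorem shrink {C : Set (Fin n → ℝ)} (hC : Convex ℝ C) {y z x : Fin n → ℝ}
    (hy : y ∈ C) (hz : z ∈ C) {lam lam' : ℝ} (h0 : 0 ≤ lam') (h1 : lam' ≤ lam) (h2 : lam ≤ 1)
    (hx : x = lam • y + (1 - lam) • z) :
    ∃ z', z' ∈ C ∧ x = lam' • y + (1 - lam') • z' := by
  rcases eq_or_ne lam' 1 with rfl | hne
  · have : lam = 1 := le_antisymm h2 h1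
    subst this
    exact ⟨z, hz, hx⟩
  · have hpos : 0 < 1 - lam' := by
      rcases lt_or_eq_of_le (le_trans h1 h2) with h | h
      · linarith
      · exact absurd h hne
    refine ⟨((lam - lam') / (1 - lam')) • y + ((1 - lam) / (1 - lam')) • z, ?_, ?_⟩
    · refine hC hy hz (div_nonneg (by linarith) hpos.le) (div_nonneg (by linarith) hpos.le) ?_
      field_simp
      ring
    · rw [hx, smul_add, smul_smul, smul_smul]
      rw [mul_div_cancel₀ _ hpos.ne', mul_div_cancel₀ _ hpos.ne']
      rw [← add_assoc, ← add_smul]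
      ring_nf
  
theorem merge2 {C : Set (Fin n → ℝ)} (hC : Convex ℝ C) {p q x a : Fin n → ℝ}
    (hp : p ∈ C) (hq : q ∈ C) {lam c1 c2 : ℝ} (hc1 : 0 ≤ c1) (hc2 : 0 ≤ c2)
    (hsum : lam + c1 + c2 = 1) (hx : x = lam • a + c1 • p + c2 • q) :
    ∃ b, b ∈ C ∧ x = lam • a + (1 - lam) • b := by
  rcases eq_or_ne (1 - lam) 0 with h0 | h0
  · have hc10 : c1 = 0 := by linarith
    have hc20 : c2 = 0 := by linarith
    refine ⟨p, hp, ?_⟩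
    rw [hx, hc10, hc20, h0]; simp
  · have hpos : 0 < 1 - lam := by
      rcases lt_or_eq_of_le (by linarith : (0:ℝ) ≤ 1 - lam) with h | h
      · exact h
      · exact absurd h.symm h0
    refine ⟨(c1 / (1 - lam)) • p + (c2 / (1 - lam)) • q, ?_, ?_⟩
    · refine hC hp hq (div_nonneg hc1 hpos.le) (div_nonneg hc2 hpos.le) ?_
      field_simp; linarith
    · rw [hx, smul_add, smul_smul, smul_smul]
      rw [mul_div_cancel₀ _ h0, mul_div_cancel₀ _ h0, add_assoc]

theorem conv3 {C : Set (Fin n → ℝ)} (hC : Convex ℝ C) {x1 x2 x3 : Fin n → ℝ}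
    (h1 : x1 ∈ C) (h2 : x2 ∈ C) (h3 : x3 ∈ C) {a b c : ℝ}
    (ha : 0 ≤ a) (hb : 0 ≤ b) (hc : 0 ≤ c) (habc : a + b + c = 1) :
    a • x1 + b • x2 + c • x3 ∈ C := by
  have := Convex.sum_mem (t := (Finset.univ : Finset (Fin 3))) hC
    (w := ![a, b, c]) (z := ![x1, x2, x3]) ?_ ?_ ?_
  · simpa [Fin.sum_univ_three, add_assoc] using this
  · intro i _; fin_cases i <;> simpa
  · simp [Fin.sum_univ_three]; linarith
  · intro i _; fin_cases i <;> simpa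

theorem split2 {a1 b1 a2 b2 S : ℝ} (h1 : a1 ≤ b1) (h2 : a2 ≤ b2)
    (hlo : a1 + a2 ≤ S) (hhi : S ≤ b1 + b2) :
    ∃ s1, a1 ≤ s1 ∧ s1 ≤ b1 ∧ a2 ≤ S - s1 ∧ S - s1 ≤ b2 := by
  refine ⟨min b1 (max a1 (S - b2)), ?_, ?_, ?_, ?_⟩
  · exact le_min h1 (le_max_left _ _)
  · exact min_le_left _ _
  · rcases le_total b1 (max a1 (S - b2)) with h | h
    · rw [min_eq_left h]
      rcases le_total a1 (S - b2) with h' | h'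
      · rw [max_eq_right h'] at h; linarith
      · rw [max_eq_left h'] at h; linarith
    · rw [min_eq_right h]
      rcases le_total a1 (S - b2) with h' | h'
      · rw [max_eq_right h']; linarith
      · rw [max_eq_left h']; linarith
  · rcases le_total b1 (max a1 (S - b2)) with h | h
    · rw [min_eq_left h]; linarith
    · rw [min_eq_right h]
      rcases le_total a1 (S - b2) with h' | h'
      · rw [max_eq_right h']; linarith
      · rw [max_eq_left h']; linarith

theorem split3 {a1 b1 a2 b2 a3 b3 S : ℝ} (h1 : a1 ≤ b1) (h2 : a2 ≤ b2) (h3 : a3 ≤ b3)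
    (hlo : a1 + a2 + a3 ≤ S) (hhi : S ≤ b1 + b2 + b3) :
    ∃ s1 s2 s3, a1 ≤ s1 ∧ s1 ≤ b1 ∧ a2 ≤ s2 ∧ s2 ≤ b2 ∧ a3 ≤ s3 ∧ s3 ≤ b3 ∧
      s1 + s2 + s3 = S := by
  obtain ⟨s1, hs1a, hs1b, hr1, hr2⟩ :=
    split2 h1 (add_le_add h2 h3) (by linarith) (by linarith)
  obtain ⟨s2, hs2a, hs2b, hr3, hr4⟩ := split2 h2 h3 hr1 hr2
  exact ⟨s1, s2, S - s1 - s2, hs1a, hs1b, hs2a, hs2b, by linarith, by linarith, by ring⟩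

end HullFacts

-- decomposition machinery
section Decomp
variable {n : ℕ}

theorem subhull {ι : Type} {t' : Finset ι} {w : ι → ℝ} {T : Set (Fin n → ℤ)}
    {Q : ι → Fin n → ℤ} (hw : ∀ i ∈ t', 0 ≤ w i) (hmem : ∀ i ∈ t', Q i ∈ T)
    (hT : T.Nonempty) :
    ∃ aa, aa ∈ hull T ∧ ∑ i ∈ t', w i • toReal (Q i) = (∑ i ∈ t', w i) • aa := by
  rcases eq_or_ne (∑ i ∈ t', w i) 0 with h0 | h0
  · obtain ⟨q, hq⟩ := hT
    refine ⟨toReal q, mem_hull_of_mem hq, ?_⟩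
    rw [h0, zero_smul]
    exact Finset.sum_eq_zero (fun i hi => by
      rw [(Finset.sum_eq_zero_iff_of_nonneg hw).1 h0 i hi, zero_smul])
  · refine ⟨t'.centerMass w (fun i => toReal (Q i)), ?_, ?_⟩
    · exact Finset.centerMass_mem_convexHull _ hw
        (lt_of_le_of_ne (Finset.sum_nonneg hw) (Ne.symm h0))
        (fun i hi => Set.mem_image_of_mem _ (hmem i hi))
    · rw [sum_smul_eq_centerMass _ _ _ hw]

theorem Ldec {u γ : Fin (n+1) → ℤ} (hu : ∀ i, 1 ≤ u i) (hγ : γ ∈ BOX u)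
    {x : Fin (n+1) → ℝ} (hx : x ∈ hull (LS u γ)) :
    ∃ (l : ℝ) (a b : Fin n → ℝ), 0 ≤ l ∧ l ≤ 1 ∧
      a ∈ hull (LS (Fin.init u) (Fin.init γ)) ∧ b ∈ hull (BOX (Fin.init u)) ∧
      Fin.init x = (1 - l) • a + l • b ∧
      (γ (Fin.last n) : ℝ) + l ≤ x (Fin.last n) ∧
      x (Fin.last n) ≤ (γ (Fin.last n) : ℝ)
        + l * ((u (Fin.last n) : ℝ) - (γ (Fin.last n) : ℝ)) := by
  classical
  rw [hull, _root_.convexHull_eq] at hx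
  obtain ⟨ι, t, w, z, hw0, hw1, hz, hcm⟩ := hx
  have hrep : ∀ i : ι, ∃ p, i ∈ t → (p ∈ LS u γ ∧ toReal p = z i) := by
    intro i
    by_cases hi : i ∈ t
    · obtain ⟨p, hp, he⟩ := hz i hi; exact ⟨p, fun _ => ⟨hp, he⟩⟩
    · exact ⟨γ, fun h => absurd h hi⟩
  choose P hP using hrep
  set g := γ (Fin.last n) with hgdef
  set m := u (Fin.last n) with hmdef
  set pred : ι → Prop := fun i => P i (Fin.last n) = g with hpred
  set t1 := t.filter pred with ht1
  set t2 := t.filter (fun i => ¬ pred i) with ht2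
  set l := ∑ i ∈ t2, w i with hldef
  have hsplit : ∑ i ∈ t1, w i + ∑ i ∈ t2, w i = 1 := by
    rw [ht1, ht2, Finset.sum_filter_add_sum_filter_not]; exact hw1
  have hl0 : 0 ≤ l := Finset.sum_nonneg (fun i hi => hw0 i (Finset.mem_filter.1 hi).1)
  have hW10 : 0 ≤ ∑ i ∈ t1, w i :=
    Finset.sum_nonneg (fun i hi => hw0 i (Finset.mem_filter.1 hi).1)
  have hl1 : l ≤ 1 := by linarith
  have hW1 : ∑ i ∈ t1, w i = 1 - l := by rw [hldef]; linarith
  have ht1mem : ∀ i ∈ t1, Fin.init (P i) ∈ LS (Fin.init u) (Fin.init γ) := by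
    intro i hi
    have h1 := Finset.mem_filter.1 hi
    exact LS_init_of_last_eq ((hP i h1.1).1) h1.2
  have ht2mem : ∀ i ∈ t2, Fin.init (P i) ∈ BOX (Fin.init u) := by
    intro i hi
    have h1 := Finset.mem_filter.1 hi
    exact init_mem_BOX ((hP i h1.1).1).1
  have ht2lb : ∀ i ∈ t2, g + 1 ≤ P i (Fin.last n) := by
    intro i hi
    have h1 := Finset.mem_filter.1 hi
    have h2 := LS_last_lb ((hP i h1.1).1)
    have h3 : ¬ P i (Fin.last n) = g := h1.2
    omega
  have ht2ub : ∀ i ∈ t2, P i (Fin.last n) ≤ m := by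
    intro i hi
    have h1 := Finset.mem_filter.1 hi
    exact (((hP i h1.1).1).1 (Fin.last n)).2
  have hxsum : x = ∑ i ∈ t, w i • z i := by
    rw [← hcm, Finset.centerMass_eq_of_sum_1 _ _ hw1]
  have hinit : Fin.init x = ∑ i ∈ t, w i • toReal (Fin.init (P i)) := by
    funext j
    have e1 : Fin.init x j = x (Fin.castSucc j) := rfl
    rw [e1, hxsum]
    simp only [Finset.sum_apply, Pi.smul_apply, smul_eq_mul]
    refine Finset.sum_congr rfl (fun i hi => ?_)
    rw [← (hP i hi).2]
    rfl
  have hlast : x (Fin.last n) = ∑ i ∈ t, w i * ((P i (Fin.last n) : ℝ)) := by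
    conv_lhs => rw [hxsum]
    simp only [Finset.sum_apply, Pi.smul_apply, smul_eq_mul]
    refine Finset.sum_congr rfl (fun i hi => ?_)
    rw [← (hP i hi).2]
    rfl
  obtain ⟨a, ha, haeq⟩ := subhull (T := LS (Fin.init u) (Fin.init γ))
    (fun i hi => hw0 i (Finset.mem_filter.1 hi).1) ht1mem
    ⟨Fin.init γ, init_mem_BOX hγ, lexLe_refl _⟩
  obtain ⟨b, hb, hbeq⟩ := subhull (T := BOX (Fin.init u))
    (fun i hi => hw0 i (Finset.mem_filter.1 hi).1) ht2mem
    ⟨fun _ => 0, zero_mem_BOX (fun i => hu _)⟩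
  refine ⟨l, a, b, hl0, hl1, ha, hb, ?_, ?_, ?_⟩
  · rw [hinit, ← Finset.sum_filter_add_sum_filter_not t pred
      (fun i => w i • toReal (Fin.init (P i))), ← ht1, ← ht2, haeq, hbeq, hW1]
  · rw [hlast, ← Finset.sum_filter_add_sum_filter_not t pred
      (fun i => w i * ((P i (Fin.last n) : ℝ))), ← ht1, ← ht2]
    have e1 : ∑ i ∈ t1, w i * ((P i (Fin.last n) : ℝ)) = (1 - l) * (g : ℝ) := by
      rw [← hW1, Finset.sum_mul]
      refine Finset.sum_congr rfl (fun i hi => ?_)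
      rw [(Finset.mem_filter.1 hi).2]
    have e2 : l * ((g:ℝ) + 1) ≤ ∑ i ∈ t2, w i * ((P i (Fin.last n) : ℝ)) := by
      rw [hldef, Finset.sum_mul]
      refine Finset.sum_le_sum (fun i hi => ?_)
      have h1 := ht2lb i hi
      have h2 : ((g:ℝ) + 1) ≤ ((P i (Fin.last n) : ℝ)) := by exact_mod_cast h1
      exact mul_le_mul_of_nonneg_left h2 (hw0 i (Finset.mem_filter.1 hi).1)
    rw [e1]
    nlinarith [e2]
  · rw [hlast, ← Finset.sum_filter_add_sum_filter_not t pred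
      (fun i => w i * ((P i (Fin.last n) : ℝ))), ← ht1, ← ht2]
    have e1 : ∑ i ∈ t1, w i * ((P i (Fin.last n) : ℝ)) = (1 - l) * (g : ℝ) := by
      rw [← hW1, Finset.sum_mul]
      refine Finset.sum_congr rfl (fun i hi => ?_)
      rw [(Finset.mem_filter.1 hi).2]
    have e2 : ∑ i ∈ t2, w i * ((P i (Fin.last n) : ℝ)) ≤ l * (m:ℝ) := by
      rw [hldef, Finset.sum_mul]
      refine Finset.sum_le_sum (fun i hi => ?_)
      have h1 := ht2ub i hi
      have h2 : ((P i (Fin.last n) : ℝ)) ≤ (m:ℝ) := by exact_mod_cast h1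
      exact mul_le_mul_of_nonneg_left h2 (hw0 i (Finset.mem_filter.1 hi).1)
    rw [e1]
    nlinarith [e2]

end Decomp

section Decomp2
variable {n : ℕ}

theorem Udec {u θ : Fin (n+1) → ℤ} (hu : ∀ i, 1 ≤ u i) (hθ : θ ∈ BOX u)
    {x : Fin (n+1) → ℝ} (hx : x ∈ hull (US u θ)) :
    ∃ (l : ℝ) (a b : Fin n → ℝ), 0 ≤ l ∧ l ≤ 1 ∧
      a ∈ hull (US (Fin.init u) (Fin.init θ)) ∧ b ∈ hull (BOX (Fin.init u)) ∧
      Fin.init x = (1 - l) • a + l • b ∧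
      (θ (Fin.last n) : ℝ) - l * (θ (Fin.last n) : ℝ) ≤ x (Fin.last n) ∧
      x (Fin.last n) ≤ (θ (Fin.last n) : ℝ) - l := by
  classical
  rw [hull, _root_.convexHull_eq] at hx
  obtain ⟨ι, t, w, z, hw0, hw1, hz, hcm⟩ := hx
  have hrep : ∀ i : ι, ∃ p, i ∈ t → (p ∈ US u θ ∧ toReal p = z i) := by
    intro i
    by_cases hi : i ∈ t
    · obtain ⟨p, hp, he⟩ := hz i hi; exact ⟨p, fun _ => ⟨hp, he⟩⟩
    · exact ⟨θ, fun h => absurd h hi⟩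
  choose P hP using hrep
  set tt := θ (Fin.last n) with htdef
  set pred : ι → Prop := fun i => P i (Fin.last n) = tt with hpred
  set t1 := t.filter pred with ht1
  set t2 := t.filter (fun i => ¬ pred i) with ht2
  set l := ∑ i ∈ t2, w i with hldef
  have hsplit : ∑ i ∈ t1, w i + ∑ i ∈ t2, w i = 1 := by
    rw [ht1, ht2, Finset.sum_filter_add_sum_filter_not]; exact hw1
  have hl0 : 0 ≤ l := Finset.sum_nonneg (fun i hi => hw0 i (Finset.mem_filter.1 hi).1)
  have hW10 : 0 ≤ ∑ i ∈ t1, w i :=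
    Finset.sum_nonneg (fun i hi => hw0 i (Finset.mem_filter.1 hi).1)
  have hl1 : l ≤ 1 := by linarith
  have hW1 : ∑ i ∈ t1, w i = 1 - l := by rw [hldef]; linarith
  have ht1mem : ∀ i ∈ t1, Fin.init (P i) ∈ US (Fin.init u) (Fin.init θ) := by
    intro i hi
    have h1 := Finset.mem_filter.1 hi
    exact US_init_of_last_eq ((hP i h1.1).1) h1.2
  have ht2mem : ∀ i ∈ t2, Fin.init (P i) ∈ BOX (Fin.init u) := by
    intro i hi
    have h1 := Finset.mem_filter.1 hi
    exact init_mem_BOX ((hP i h1.1).1).1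
  have ht2ub : ∀ i ∈ t2, P i (Fin.last n) ≤ tt - 1 := by
    intro i hi
    have h1 := Finset.mem_filter.1 hi
    have h2 := US_last_ub ((hP i h1.1).1)
    have h3 : ¬ P i (Fin.last n) = tt := h1.2
    omega
  have ht2lb : ∀ i ∈ t2, 0 ≤ P i (Fin.last n) := by
    intro i hi
    have h1 := Finset.mem_filter.1 hi
    exact (((hP i h1.1).1).1 (Fin.last n)).1
  have hxsum : x = ∑ i ∈ t, w i • z i := by
    rw [← hcm, Finset.centerMass_eq_of_sum_1 _ _ hw1]
  have hinit : Fin.init x = ∑ i ∈ t, w i • toReal (Fin.init (P i)) := by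
    funext j
    have e1 : Fin.init x j = x (Fin.castSucc j) := rfl
    rw [e1, hxsum]
    simp only [Finset.sum_apply, Pi.smul_apply, smul_eq_mul]
    refine Finset.sum_congr rfl (fun i hi => ?_)
    rw [← (hP i hi).2]
    rfl
  have hlast : x (Fin.last n) = ∑ i ∈ t, w i * ((P i (Fin.last n) : ℝ)) := by
    conv_lhs => rw [hxsum]
    simp only [Finset.sum_apply, Pi.smul_apply, smul_eq_mul]
    refine Finset.sum_congr rfl (fun i hi => ?_)
    rw [← (hP i hi).2]
    rfl
  obtain ⟨a, ha, haeq⟩ := subhull (T := US (Fin.init u) (Fin.init θ))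
    (fun i hi => hw0 i (Finset.mem_filter.1 hi).1) ht1mem
    ⟨Fin.init θ, init_mem_BOX hθ, lexLe_refl _⟩
  obtain ⟨b, hb, hbeq⟩ := subhull (T := BOX (Fin.init u))
    (fun i hi => hw0 i (Finset.mem_filter.1 hi).1) ht2mem
    ⟨fun _ => 0, zero_mem_BOX (fun i => hu _)⟩
  have e1 : ∑ i ∈ t1, w i * ((P i (Fin.last n) : ℝ)) = (1 - l) * (tt : ℝ) := by
    rw [← hW1, Finset.sum_mul]
    refine Finset.sum_congr rfl (fun i hi => ?_)
    rw [(Finset.mem_filter.1 hi).2]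
  refine ⟨l, a, b, hl0, hl1, ha, hb, ?_, ?_, ?_⟩
  · rw [hinit, ← Finset.sum_filter_add_sum_filter_not t pred
      (fun i => w i • toReal (Fin.init (P i))), ← ht1, ← ht2, haeq, hbeq, hW1]
  · rw [hlast, ← Finset.sum_filter_add_sum_filter_not t pred
      (fun i => w i * ((P i (Fin.last n) : ℝ))), ← ht1, ← ht2, e1]
    have e2 : (0:ℝ) ≤ ∑ i ∈ t2, w i * ((P i (Fin.last n) : ℝ)) := by
      refine Finset.sum_nonneg (fun i hi => ?_)
      have h2 : (0:ℝ) ≤ ((P i (Fin.last n) : ℝ)) := by exact_mod_cast ht2lb i hi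
      exact mul_nonneg (hw0 i (Finset.mem_filter.1 hi).1) h2
    nlinarith [e2]
  · rw [hlast, ← Finset.sum_filter_add_sum_filter_not t pred
      (fun i => w i * ((P i (Fin.last n) : ℝ))), ← ht1, ← ht2, e1]
    have e2 : ∑ i ∈ t2, w i * ((P i (Fin.last n) : ℝ)) ≤ l * ((tt:ℝ) - 1) := by
      rw [hldef, Finset.sum_mul]
      refine Finset.sum_le_sum (fun i hi => ?_)
      have h2 : ((P i (Fin.last n) : ℝ)) ≤ (tt:ℝ) - 1 := by
        have := ht2ub i hi; push_cast; exact_mod_cast this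
      exact mul_le_mul_of_nonneg_left h2 (hw0 i (Finset.mem_filter.1 hi).1)
    nlinarith [e2]

theorem Bdec {u : Fin (n+1) → ℤ} {x : Fin (n+1) → ℝ} (hx : x ∈ hull (BOX u)) :
    Fin.init x ∈ hull (BOX (Fin.init u)) ∧ 0 ≤ x (Fin.last n) ∧
      x (Fin.last n) ≤ (u (Fin.last n) : ℝ) := by
  classical
  rw [hull, _root_.convexHull_eq] at hx
  obtain ⟨ι, t, w, z, hw0, hw1, hz, hcm⟩ := hx
  have hrep : ∀ i : ι, ∃ p, i ∈ t → (p ∈ BOX u ∧ toReal p = z i) := by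
    intro i
    by_cases hi : i ∈ t
    · obtain ⟨p, hp, he⟩ := hz i hi; exact ⟨p, fun _ => ⟨hp, he⟩⟩
    · exact ⟨u, fun h => absurd h hi⟩
  choose P hP using hrep
  have hxsum : x = ∑ i ∈ t, w i • z i := by
    rw [← hcm, Finset.centerMass_eq_of_sum_1 _ _ hw1]
  have hinit : Fin.init x = ∑ i ∈ t, w i • toReal (Fin.init (P i)) := by
    funext j
    have e1 : Fin.init x j = x (Fin.castSucc j) := rfl
    rw [e1, hxsum]
    simp only [Finset.sum_apply, Pi.smul_apply, smul_eq_mul]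
    refine Finset.sum_congr rfl (fun i hi => ?_)
    rw [← (hP i hi).2]
    rfl
  have hlast : x (Fin.last n) = ∑ i ∈ t, w i * ((P i (Fin.last n) : ℝ)) := by
    conv_lhs => rw [hxsum]
    simp only [Finset.sum_apply, Pi.smul_apply, smul_eq_mul]
    refine Finset.sum_congr rfl (fun i hi => ?_)
    rw [← (hP i hi).2]
    rfl
  refine ⟨?_, ?_, ?_⟩
  · rw [hinit]
    refine Convex.sum_mem (hull_convex _) hw0 hw1 (fun i hi => ?_)
    exact mem_hull_of_mem (init_mem_BOX ((hP i hi).1))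
  · rw [hlast]
    refine Finset.sum_nonneg (fun i hi => ?_)
    have h2 : (0:ℝ) ≤ ((P i (Fin.last n) : ℝ)) := by
      exact_mod_cast (((hP i hi).1) (Fin.last n)).1
    exact mul_nonneg (hw0 i hi) h2
  · rw [hlast]
    calc ∑ i ∈ t, w i * ((P i (Fin.last n) : ℝ))
        ≤ ∑ i ∈ t, w i * ((u (Fin.last n) : ℝ)) := by
          refine Finset.sum_le_sum (fun i hi => ?_)
          have h2 : ((P i (Fin.last n) : ℝ)) ≤ ((u (Fin.last n) : ℝ)) := by
            exact_mod_cast (((hP i hi).1) (Fin.last n)).2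
          exact mul_le_mul_of_nonneg_left h2 (hw0 i hi)
      _ = (u (Fin.last n) : ℝ) := by rw [← Finset.sum_mul, hw1, one_mul]

end Decomp2

-- arithmetic selection lemmas
section Arith

theorem EX {α β lam mu g t m S : ℝ}
    (hl0 : 0 ≤ lam) (hlα : lam ≤ α) (hm0 : 0 ≤ mu) (hmβ : mu ≤ β) (hαβ : α + β ≤ 1)
    (hg0 : 0 ≤ g) (hgm : g ≤ m) (ht0 : 0 ≤ t) (htm : t ≤ m)
    (hgmZ : g = m ∨ g + 1 ≤ m) (htZ : t = 0 ∨ 1 ≤ t)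
    (hPne : α - lam ≤ (α - lam) * (m - g)) (hUne : mu * t ≤ β * t - (β - mu))
    (hS1 : α * g + (α - lam) ≤ S) (hS2 : mu * t ≤ S)
    (hS3 : S ≤ α * g + (α - lam) * (m - g) + (1 - α) * m)
    (hS4 : S ≤ β * t - (β - mu) + (1 - β) * m) :
    ∃ lamR muR, 0 ≤ lamR ∧ lamR ≤ lam ∧ 0 ≤ muR ∧ muR ≤ mu ∧
      (α - lamR) ≤ (α - lamR) * (m - g) ∧ muR * t ≤ β * t - (β - muR) ∧
      α * g + (α - lamR) + muR * t ≤ S ∧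
      S ≤ α * g + (α - lamR) * (m - g) + β * t - (β - muR) + (1 - α - β) * m := by
  have hβmu : 0 ≤ β - mu := by linarith
  have hαlam : 0 ≤ α - lam := by linarith
  have hm0' : 0 ≤ m := le_trans hg0 hgm
  have hrest : 0 ≤ (1 - α - β) * m := mul_nonneg (by linarith) hm0'
  by_cases hb : mu * t ≤ S - (α * g + (α - lam))
  · by_cases hub : S ≤ α * g + (α - lam) * (m - g) + β * t - (β - mu) + (1 - α - β) * m
    · exact ⟨lam, mu, hl0, le_refl _, hm0, le_refl _, hPne, hUne, by linarith, hub⟩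
    · push_neg at hub
      obtain ⟨K, hKdef⟩ : ∃ K : ℝ, K = β * t - (β - mu) + (1 - α - β) * m := ⟨_, rfl⟩
      have hub' : α * g + (α - lam) * (m - g) + K < S := by rw [hKdef]; linarith
      have hup : S ≤ α * m + K := by rw [hKdef]; linarith
      have hmgpos : 0 < m - g := by
        rcases hgmZ with h | h
        · exfalso
          have h0 : α * g + (α - lam) * (m - g) + K = α * m + K := by rw [h]; ring
          linarith
        · linarith
      have hmg1 : 1 ≤ m - g := by
        rcases hgmZ with h | h
        · exfalso
          have h0 : m - g = 0 := by rw [h]; ring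
          linarith
        · linarith
      obtain ⟨lamR, hlamRdef⟩ : ∃ lamR : ℝ, lamR = α - (S - α * g - K) / (m - g) := ⟨_, rfl⟩
      have hαlamR : α - lamR = (S - α * g - K) / (m - g) := by rw [hlamRdef]; ring
      have hkey : (α - lamR) * (m - g) = S - α * g - K := by
        rw [hαlamR]
        exact div_mul_cancel₀ _ hmgpos.ne'
      have hgt : (α - lam) * (m - g) < (α - lamR) * (m - g) := by
        rw [hkey]; linarith
      have h1 : lamR ≤ lam := by
        have := (mul_lt_mul_iff_of_pos_right hmgpos).1 hgt
        linarith
      have h2 : 0 ≤ lamR := by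
        have hle : (α - lamR) * (m - g) ≤ α * (m - g) := by
          rw [hkey]
          have : α * (m - g) = α * m - α * g := by ring
          linarith
        have := (mul_le_mul_iff_of_pos_right hmgpos).1 hle
        linarith
      have hαlamR0 : 0 ≤ α - lamR := by linarith
      have h3 : α - lamR ≤ (α - lamR) * (m - g) := by nlinarith
      have hβμt : 0 ≤ (β - mu) * (t - 1) := by
        rcases htZ with h | h
        · have hμβ : β ≤ mu := by
            have := hUne; rw [h] at this; simp at this; linarith
          have : β = mu := le_antisymm hμβ hmβ
          rw [this]; ring_nf; simp
        · exact mul_nonneg hβmu (by linarith)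
      have hSeq : S = α * g + (α - lamR) * (m - g) + K := by rw [hkey]; ring
      have hid1 : (α - lamR) * (m - g) - (α - lamR) = (α - lamR) * (m - g - 1) := by ring
      have hid1' : 0 ≤ (α - lamR) * (m - g - 1) := mul_nonneg hαlamR0 (by linarith)
      refine ⟨lamR, mu, h2, h1, hm0, le_refl _, h3, hUne, ?_, ?_⟩
      · rw [hSeq, hKdef]
        have hid2 : (β * t - (β - mu)) - mu * t = (β - mu) * (t - 1) := by ring
        linarith
      · rw [hSeq, hKdef]; linarith
  · push_neg at hb
    have hD0 : 0 ≤ S - (α * g + (α - lam)) := by linarith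
    have htpos : 0 < t := by
      rcases htZ with h | h
      · exfalso; rw [h] at hb; simp at hb; linarith
      · linarith
    have ht1 : 1 ≤ t := by
      rcases htZ with h | h
      · exfalso; rw [h] at htpos; linarith
      · exact h
    obtain ⟨muR, hmuRdef⟩ : ∃ muR : ℝ, muR = (S - (α * g + (α - lam))) / t := ⟨_, rfl⟩
    have hkey : muR * t = S - (α * g + (α - lam)) := by
      rw [hmuRdef]
      exact div_mul_cancel₀ _ htpos.ne'
    have h1 : 0 ≤ muR := by rw [hmuRdef]; exact div_nonneg hD0 htpos.le
    have h2 : muR ≤ mu := by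
      have hlt : muR * t < mu * t := by rw [hkey]; linarith
      have := (mul_lt_mul_iff_of_pos_right htpos).1 hlt
      linarith
    have hmggood : 0 ≤ (α - lam) * (m - g - 1) := by
      rcases hgmZ with h | h
      · have h0 : m - g = 0 := by rw [h]; ring
        have hle : α - lam ≤ 0 := by
          have := hPne; rw [h0] at this; simpa using this
        have heq : α - lam = 0 := le_antisymm hle hαlam
        rw [heq]; ring_nf; simp
      · exact mul_nonneg hαlam (by linarith)
    have hid2 : (β * t - (β - muR)) - muR * t = (β - muR) * (t - 1) := by ring
    have hid2' : 0 ≤ (β - muR) * (t - 1) := mul_nonneg (by linarith) (by linarith)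
    have hSeq : S = α * g + (α - lam) + muR * t := by rw [hkey]; ring
    refine ⟨lam, muR, hl0, le_refl _, h1, h2, hPne, by linarith, by linarith, ?_⟩
    rw [hSeq]
    have hid1 : (α - lam) * (m - g) - (α - lam) = (α - lam) * (m - g - 1) := by ring
    linarith

theorem EXM {lam mu g t S : ℝ}
    (hl0 : 0 ≤ lam) (hl1 : lam ≤ 1) (hm0 : 0 ≤ mu) (hm1 : mu ≤ 1)
    (hgt : g + 1 ≤ t) (hint : t = g + 1 ∨ g + 2 ≤ t)
    (hS1 : g + (1 - lam) ≤ S) (hS2 : S ≤ t - (1 - mu)) :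
    ∃ lamR muR, 0 ≤ lamR ∧ lamR ≤ lam ∧ 0 ≤ muR ∧ muR ≤ mu ∧ lamR + muR ≤ 1 ∧
      (1 - lamR - muR = 0 ∨ g + 2 ≤ t) ∧
      lamR * g + muR * t + (1 - lamR - muR) * (g + 1) ≤ S ∧
      S ≤ lamR * g + muR * t + (1 - lamR - muR) * (t - 1) := by
  rcases hint with ht1 | ht2
  · subst ht1
    refine ⟨1 - (S - g), S - g, by linarith, by linarith, by linarith, by linarith,
      by linarith, Or.inl (by ring), by nlinarith, by nlinarith⟩
  · by_cases hub : S ≤ (t - 1) - lam * (t - 1 - g)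
    · refine ⟨lam, 0, hl0, le_refl _, le_refl _, hm0, by linarith, Or.inr ht2, ?_, ?_⟩
      · nlinarith
      · nlinarith
    · push_neg at hub
      obtain ⟨D, hDdef⟩ : ∃ D : ℝ, D = lam * (t - 1 - g) + mu := ⟨_, rfl⟩
      have hDpos : 0 < D := by
        rw [hDdef]
        nlinarith
      obtain ⟨τ, hτdef⟩ : ∃ τ : ℝ, τ = (S - ((t-1) - lam * (t - 1 - g))) / D := ⟨_, rfl⟩
      have hτD : τ * D = S - ((t-1) - lam * (t - 1 - g)) := by
        rw [hτdef]; exact div_mul_cancel₀ _ hDpos.ne'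
      have hτ0 : 0 ≤ τ := by rw [hτdef]; exact div_nonneg (by linarith) hDpos.le
      have hτ1 : τ ≤ 1 := by
        rw [hτdef, div_le_one hDpos, hDdef]
        linarith
      obtain ⟨lamR, hlamRdef⟩ : ∃ lamR : ℝ, lamR = lam * (1 - τ) := ⟨_, rfl⟩
      obtain ⟨muR, hmuRdef⟩ : ∃ muR : ℝ, muR = mu * τ := ⟨_, rfl⟩
      have hkey : lamR * g + muR * t + (1 - lamR - muR) * (t - 1) = S := by
        have e1 : lamR * g + muR * t + (1 - lamR - muR) * (t - 1)
            = (t - 1) - lam * (t - 1 - g) + τ * D := by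
          rw [hlamRdef, hmuRdef, hDdef]; ring
        rw [e1, hτD]; ring
      have h1 : 0 ≤ lamR := by rw [hlamRdef]; exact mul_nonneg hl0 (by linarith)
      have h2 : lamR ≤ lam := by rw [hlamRdef]; nlinarith
      have h3 : 0 ≤ muR := by rw [hmuRdef]; exact mul_nonneg hm0 hτ0
      have h4 : muR ≤ mu := by rw [hmuRdef]; nlinarith
      have h5 : lamR + muR ≤ 1 := by rw [hlamRdef, hmuRdef]; nlinarith
      have hrest : 0 ≤ 1 - lamR - muR := by linarith
      refine ⟨lamR, muR, h1, h2, h3, h4, h5, Or.inr ht2, ?_, le_of_eq hkey.symm⟩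
      have hid : (1 - lamR - muR) * (t - 1) - (1 - lamR - muR) * (g + 1)
          = (1 - lamR - muR) * (t - g - 2) := by ring
      have hid' : 0 ≤ (1 - lamR - muR) * (t - g - 2) := mul_nonneg hrest (by linarith)
      linarith [hkey]

end Arith

-- component construction lemmas
section Comp
variable {n : ℕ}

theorem zero_snoc_zero : (Fin.snoc (0 : Fin n → ℝ) (0:ℝ) : Fin (n+1) → ℝ) = 0 := by
  funext i
  refine Fin.lastCases ?_ (fun j => ?_) i <;> simp

theorem Lcomp {u γ : Fin (n+1) → ℤ} (hu : ∀ i, 1 ≤ u i) (hγ : γ ∈ BOX u)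
    {a e : Fin n → ℝ} (ha : a ∈ hull (LS (Fin.init u) (Fin.init γ)))
    (he : e ∈ hull (BOX (Fin.init u))) {lam lamR hL : ℝ}
    (h0R : 0 ≤ lamR) (hRl : lamR ≤ lam) (hlam1 : lam ≤ 1)
    (hne : lam - lamR ≤ (lam - lamR) * ((u (Fin.last n) : ℝ) - (γ (Fin.last n) : ℝ)))
    (hhL1 : lam * (γ (Fin.last n) : ℝ) + (lam - lamR) ≤ hL)
    (hhL2 : hL ≤ lam * (γ (Fin.last n) : ℝ)
      + (lam - lamR) * ((u (Fin.last n) : ℝ) - (γ (Fin.last n) : ℝ))) :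
    ∃ Y, Y ∈ hull (LS u γ) ∧
      lam • Y = (Fin.snoc (lamR • a + (lam - lamR) • e) hL : Fin (n+1) → ℝ) := by
  have hbase : ∀ p ∈ LS (Fin.init u) (Fin.init γ), Fin.snoc p (γ (Fin.last n)) ∈ LS u γ :=
    fun p hp => snoc_mem_LS_base hγ hp
  rcases eq_or_lt_of_le (le_trans h0R hRl) with hlam | hlampos
  · -- lam = 0
    have hlamR : lamR = 0 := le_antisymm (hlam ▸ hRl) h0R
    have hL1' : 0 ≤ hL := by rw [← hlam, hlamR] at hhL1; simpa using hhL1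
    have hL2' : hL ≤ 0 := by rw [← hlam, hlamR] at hhL2; simpa using hhL2
    have hL0 : hL = 0 := le_antisymm hL2' hL1'
    refine ⟨toReal γ, mem_hull_of_mem ⟨hγ, lexLe_refl γ⟩, ?_⟩
    rw [← hlam, hlamR, hL0]
    funext i
    refine Fin.lastCases ?_ (fun j => ?_) i <;> simp
  · -- 0 < lam
    have hlamne : lam ≠ 0 := hlampos.ne'
    obtain ⟨l, hldef⟩ : ∃ l : ℝ, l = (lam - lamR) / lam := ⟨_, rfl⟩
    have hlaml : lam * l = lam - lamR := by rw [hldef]; field_simp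
    have hl0 : 0 ≤ l := by rw [hldef]; exact div_nonneg (by linarith) hlampos.le
    have hl1 : l ≤ 1 := by
      rw [hldef, div_le_one hlampos]; linarith
    obtain ⟨hY, hhYdef⟩ : ∃ hY : ℝ, hY = hL / lam := ⟨_, rfl⟩
    have hlamhY : lam * hY = hL := by rw [hhYdef]; field_simp
    have hYlb : (γ (Fin.last n) : ℝ) + l ≤ hY := by
      rw [hhYdef, le_div_iff₀ hlampos]
      calc ((γ (Fin.last n) : ℝ) + l) * lam = lam * (γ (Fin.last n) : ℝ) + lam * l := by ring
        _ = lam * (γ (Fin.last n) : ℝ) + (lam - lamR) := by rw [hlaml]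
        _ ≤ hL := hhL1
    have hYub : hY ≤ (γ (Fin.last n) : ℝ)
        + l * ((u (Fin.last n) : ℝ) - (γ (Fin.last n) : ℝ)) := by
      rw [hhYdef, div_le_iff₀ hlampos]
      calc hL ≤ lam * (γ (Fin.last n) : ℝ)
            + (lam - lamR) * ((u (Fin.last n) : ℝ) - (γ (Fin.last n) : ℝ)) := hhL2
        _ = ((γ (Fin.last n) : ℝ) + l * ((u (Fin.last n) : ℝ) - (γ (Fin.last n) : ℝ))) * lam := by
            rw [← hlaml]; ring
    have hYmem : (Fin.snoc ((1 - l) • a + l • e) hY : Fin (n+1) → ℝ) ∈ hull (LS u γ) := by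
      rcases eq_or_lt_of_le hl0 with hl00 | hlpos
      · -- l = 0
        have hae : (1 - l) • a + l • e = a := by rw [← hl00]; simp
        rw [hae]
        refine slice_mem_hull (le_refl (γ (Fin.last n))) hbase hbase ha ?_ ?_
        · rw [← hl00] at hYlb; simpa using hYlb
        · rw [← hl00] at hYub; simpa using hYub
      · -- 0 < l
        have hlamlampos : 0 < lam - lamR := by
          by_contra hcon
          push_neg at hcon
          have : lam - lamR = 0 := le_antisymm hcon (by linarith)
          rw [hldef, this] at hlpos; simp at hlpos
        have hmg1 : (1:ℝ) ≤ (u (Fin.last n) : ℝ) - (γ (Fin.last n) : ℝ) := by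
          have h' : (lam - lamR) * 1
              ≤ (lam - lamR) * ((u (Fin.last n) : ℝ) - (γ (Fin.last n) : ℝ)) := by
            rw [mul_one]; exact hne
          exact le_of_mul_le_mul_left h' hlamlampos
        have hmgZ : γ (Fin.last n) + 1 ≤ u (Fin.last n) := by
          have hc : ((γ (Fin.last n) : ℝ)) + 1 ≤ ((u (Fin.last n) : ℝ)) := by linarith
          exact_mod_cast hc
        obtain ⟨h2, hh2def⟩ : ∃ h2 : ℝ,
            h2 = (hY - (1 - l) * (γ (Fin.last n) : ℝ)) / l := ⟨_, rfl⟩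
        have hlh2 : l * h2 = hY - (1 - l) * (γ (Fin.last n) : ℝ) := by
          rw [hh2def]; field_simp
        have h2lb : ((γ (Fin.last n) : ℝ) + 1) ≤ h2 := by
          rw [hh2def, le_div_iff₀ hlpos]
          nlinarith [hYlb]
        have h2ub : h2 ≤ (u (Fin.last n) : ℝ) := by
          rw [hh2def, div_le_iff₀ hlpos]
          nlinarith [hYub]
        have hupmem : ∀ p ∈ BOX (Fin.init u), ∀ k : ℤ,
            γ (Fin.last n) + 1 ≤ k → k ≤ u (Fin.last n) → Fin.snoc p k ∈ LS u γ :=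
          fun p hp k hk1 hk2 => snoc_mem_LS_upper hγ hp hk1 hk2
        have hmem1 : (Fin.snoc a (γ (Fin.last n) : ℝ) : Fin (n+1) → ℝ) ∈ hull (LS u γ) :=
          slice_mem_hull (le_refl (γ (Fin.last n))) hbase hbase ha (le_refl _) (le_refl _)
        have hmem2 : (Fin.snoc e h2 : Fin (n+1) → ℝ) ∈ hull (LS u γ) := by
          refine slice_mem_hull (c := γ (Fin.last n) + 1) (d := u (Fin.last n)) hmgZ
            (fun p hp => hupmem p hp _ (le_refl _) hmgZ)
            (fun p hp => hupmem p hp _ hmgZ (le_refl _)) he ?_ ?_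
          · exact_mod_cast h2lb
          · exact h2ub
        have hcombo : (Fin.snoc ((1 - l) • a + l • e) hY : Fin (n+1) → ℝ)
            = (1 - l) • (Fin.snoc a ((γ (Fin.last n) : ℝ)) : Fin (n+1) → ℝ)
              + l • (Fin.snoc e h2 : Fin (n+1) → ℝ) := by
          rw [snoc_combo2]
          have hval : (1 - l) * ((γ (Fin.last n) : ℝ)) + l * h2 = hY := by linarith [hlh2]
          rw [hval]
        rw [hcombo]
        exact (hull_convex _) hmem1 hmem2 (by linarith) hl0 (by ring)
    refine ⟨_, hYmem, ?_⟩
    rw [snoc_smul]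
    have hv : lam * (1 - l) = lamR := by rw [mul_sub, mul_one, hlaml]; ring
    rw [smul_add, smul_smul, smul_smul, hlaml, hv, hlamhY]


theorem Ucomp {u θ : Fin (n+1) → ℤ} (hu : ∀ i, 1 ≤ u i) (hθ : θ ∈ BOX u)
    {c e : Fin n → ℝ} (hc : c ∈ hull (US (Fin.init u) (Fin.init θ)))
    (he : e ∈ hull (BOX (Fin.init u))) {mu muR kU : ℝ}
    (h0R : 0 ≤ muR) (hRm : muR ≤ mu) (hmu1 : mu ≤ 1)
    (hne : muR * (θ (Fin.last n) : ℝ) ≤ mu * (θ (Fin.last n) : ℝ) - (mu - muR))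
    (hk1 : muR * (θ (Fin.last n) : ℝ) ≤ kU)
    (hk2 : kU ≤ mu * (θ (Fin.last n) : ℝ) - (mu - muR)) :
    ∃ W, W ∈ hull (US u θ) ∧
      mu • W = (Fin.snoc (muR • c + (mu - muR) • e) kU : Fin (n+1) → ℝ) := by
  have hbase : ∀ p ∈ US (Fin.init u) (Fin.init θ), Fin.snoc p (θ (Fin.last n)) ∈ US u θ :=
    fun p hp => snoc_mem_US_base hθ hp
  rcases eq_or_lt_of_le (le_trans h0R hRm) with hmu | hmupos
  · -- mu = 0
    have hmuR : muR = 0 := le_antisymm (hmu ▸ hRm) h0R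
    have hk1' : 0 ≤ kU := by rw [hmuR] at hk1; simpa using hk1
    have hk2' : kU ≤ 0 := by rw [← hmu, hmuR] at hk2; simpa using hk2
    have hk0 : kU = 0 := le_antisymm hk2' hk1'
    refine ⟨toReal θ, mem_hull_of_mem ⟨hθ, lexLe_refl θ⟩, ?_⟩
    rw [← hmu, hmuR, hk0]
    funext i
    refine Fin.lastCases ?_ (fun j => ?_) i <;> simp
  · have hmune : mu ≠ 0 := hmupos.ne'
    obtain ⟨l, hldef⟩ : ∃ l : ℝ, l = (mu - muR) / mu := ⟨_, rfl⟩
    have hmul : mu * l = mu - muR := by rw [hldef]; field_simp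
    have hl0 : 0 ≤ l := by rw [hldef]; exact div_nonneg (by linarith) hmupos.le
    have hl1 : l ≤ 1 := by rw [hldef, div_le_one hmupos]; linarith
    obtain ⟨kW, hkWdef⟩ : ∃ kW : ℝ, kW = kU / mu := ⟨_, rfl⟩
    have hmukW : mu * kW = kU := by rw [hkWdef]; field_simp
    have h1l : (1 - l) * mu = muR := by linear_combination -hmul
    have hWlb : (1 - l) * (θ (Fin.last n) : ℝ) ≤ kW := by
      rw [hkWdef, le_div_iff₀ hmupos]
      calc (1 - l) * (θ (Fin.last n) : ℝ) * mu
          = ((1-l)*mu) * (θ (Fin.last n) : ℝ) := by ring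
        _ = muR * (θ (Fin.last n) : ℝ) := by rw [h1l]
        _ ≤ kU := hk1
    have hWub : kW ≤ (θ (Fin.last n) : ℝ) - l := by
      rw [hkWdef, div_le_iff₀ hmupos]
      calc kU ≤ mu * (θ (Fin.last n) : ℝ) - (mu - muR) := hk2
        _ = ((θ (Fin.last n) : ℝ) - l) * mu := by rw [← hmul]; ring
    have hWmem : (Fin.snoc ((1 - l) • c + l • e) kW : Fin (n+1) → ℝ) ∈ hull (US u θ) := by
      rcases eq_or_lt_of_le hl0 with hl00 | hlpos
      · have hae : (1 - l) • c + l • e = c := by rw [← hl00]; simp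
        rw [hae]
        refine slice_mem_hull (le_refl (θ (Fin.last n))) hbase hbase hc ?_ ?_
        · rw [← hl00] at hWlb; simpa using hWlb
        · rw [← hl00] at hWub; simpa using hWub
      · have hmumupos : 0 < mu - muR := by
          by_contra hcon
          push_neg at hcon
          have : mu - muR = 0 := le_antisymm hcon (by linarith)
          rw [hldef, this] at hlpos; simp at hlpos
        have ht1 : (1:ℝ) ≤ (θ (Fin.last n) : ℝ) := by
          have hdiff : 0 ≤ (mu - muR) * ((θ (Fin.last n) : ℝ) - 1) := by nlinarith [hne]
          nlinarith
        have htZ : 1 ≤ θ (Fin.last n) := by exact_mod_cast ht1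
        obtain ⟨h2, hh2def⟩ : ∃ h2 : ℝ,
            h2 = (kW - (1 - l) * (θ (Fin.last n) : ℝ)) / l := ⟨_, rfl⟩
        have hlh2 : l * h2 = kW - (1 - l) * (θ (Fin.last n) : ℝ) := by
          rw [hh2def]; field_simp
        have h2lb : (0:ℝ) ≤ h2 := by
          rw [hh2def]
          exact div_nonneg (by linarith) hlpos.le
        have h2ub : h2 ≤ (θ (Fin.last n) : ℝ) - 1 := by
          rw [hh2def, div_le_iff₀ hlpos]
          nlinarith [hWub]
        have hlowmem : ∀ p ∈ BOX (Fin.init u), ∀ k : ℤ,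
            0 ≤ k → k + 1 ≤ θ (Fin.last n) → Fin.snoc p k ∈ US u θ :=
          fun p hp k hk1' hk2' => snoc_mem_US_lower hθ hp hk1' hk2'
        have hmem1 : (Fin.snoc c ((θ (Fin.last n) : ℝ)) : Fin (n+1) → ℝ) ∈ hull (US u θ) :=
          slice_mem_hull (le_refl (θ (Fin.last n))) hbase hbase hc (le_refl _) (le_refl _)
        have hmem2 : (Fin.snoc e h2 : Fin (n+1) → ℝ) ∈ hull (US u θ) := by
          refine slice_mem_hull (c := 0) (d := θ (Fin.last n) - 1) (by omega)
            (fun p hp => hlowmem p hp _ (le_refl _) (by omega))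
            (fun p hp => hlowmem p hp _ (by omega) (by omega)) he ?_ ?_
          · simpa using h2lb
          · push_cast; exact h2ub
        have hcombo : (Fin.snoc ((1 - l) • c + l • e) kW : Fin (n+1) → ℝ)
            = (1 - l) • (Fin.snoc c ((θ (Fin.last n) : ℝ)) : Fin (n+1) → ℝ)
              + l • (Fin.snoc e h2 : Fin (n+1) → ℝ) := by
          rw [snoc_combo2]
          have hval : (1 - l) * ((θ (Fin.last n) : ℝ)) + l * h2 = kW := by linarith [hlh2]
          rw [hval]
        rw [hcombo]
        exact (hull_convex _) hmem1 hmem2 (by linarith) hl0 (by ring)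
    refine ⟨_, hWmem, ?_⟩
    rw [snoc_smul]
    have hv : mu * (1 - l) = muR := by rw [mul_sub, mul_one, hmul]; ring
    rw [smul_add, smul_smul, smul_smul, hmul, hv, hmukW]

theorem Bcomp {u : Fin (n+1) → ℤ} (hu : ∀ i, 1 ≤ u i)
    {e : Fin n → ℝ} (he : e ∈ hull (BOX (Fin.init u))) {rem hB : ℝ}
    (h0 : 0 ≤ rem) (hk1 : 0 ≤ hB) (hk2 : hB ≤ rem * (u (Fin.last n) : ℝ)) :
    ∃ Z, Z ∈ hull (BOX u) ∧ rem • Z = (Fin.snoc (rem • e) hB : Fin (n+1) → ℝ) := by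
  have hbox : ∀ k : ℤ, 0 ≤ k → k ≤ u (Fin.last n) →
      ∀ p ∈ BOX (Fin.init u), Fin.snoc p k ∈ BOX u :=
    fun k hk1' hk2' p hp => snoc_mem_BOX hp hk1' hk2'
  have hul : (1:ℤ) ≤ u (Fin.last n) := hu _
  rcases eq_or_lt_of_le h0 with hrem | hrempos
  · have hB0 : hB = 0 := by
      refine le_antisymm ?_ hk1
      rw [← hrem] at hk2; simpa using hk2
    refine ⟨toReal (fun _ => 0), mem_hull_of_mem (zero_mem_BOX hu), ?_⟩
    rw [← hrem, hB0]
    funext i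
    refine Fin.lastCases ?_ (fun j => ?_) i <;> simp
  · have hremne : rem ≠ 0 := hrempos.ne'
    refine ⟨Fin.snoc e (hB / rem), ?_, ?_⟩
    · refine slice_mem_hull (c := 0) (d := u (Fin.last n)) (by omega)
        (fun p hp => hbox 0 (le_refl _) (by omega) p hp)
        (fun p hp => hbox _ (by omega) (le_refl _) p hp) he ?_ ?_
      · simpa using div_nonneg hk1 hrempos.le
      · rw [div_le_iff₀ hrempos]
        calc hB ≤ rem * (u (Fin.last n) : ℝ) := hk2
          _ = (u (Fin.last n) : ℝ) * rem := by ring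
    · rw [snoc_smul]
      have h3 : rem * (hB / rem) = hB := by field_simp
      rw [h3]

end Comp

-- main statements
def GP (n : ℕ) : Prop := ∀ (u γ θ : Fin n → ℤ), (∀ i, 1 ≤ u i) → γ ∈ BOX u → θ ∈ BOX u →
  ∀ (lam mu : ℝ), 0 ≤ lam → 0 ≤ mu → lam + mu ≤ 1 →
  ∀ (x y z w v : Fin n → ℝ), y ∈ hull (LS u γ) → z ∈ hull (BOX u) →
    w ∈ hull (US u θ) → v ∈ hull (BOX u) →
    x = lam • y + (1 - lam) • z → x = mu • w + (1 - mu) • v →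
    ∃ y' w' z', y' ∈ hull (LS u γ) ∧ w' ∈ hull (US u θ) ∧ z' ∈ hull (BOX u) ∧
      x = lam • y' + mu • w' + (1 - lam - mu) • z'

def MP (n : ℕ) : Prop := ∀ (u γ θ : Fin n → ℤ), (∀ i, 1 ≤ u i) → γ ∈ BOX u → θ ∈ BOX u →
  lexLe γ θ → ∀ x, x ∈ hull (LS u γ) → x ∈ hull (US u θ) → x ∈ hull (BAND u γ θ)

theorem LS_subset_BOX {n : ℕ} {u γ : Fin n → ℤ} : LS u γ ⊆ BOX u := fun _ hx => hx.1
theorem US_subset_BOX {n : ℕ} {u θ : Fin n → ℤ} : US u θ ⊆ BOX u := fun _ hx => hx.1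

theorem fin0_eq (f g : Fin 0 → ℝ) : f = g := funext (fun i => i.elim0)

theorem GP0 : GP 0 := by
  intro u γ θ hu hγ hθ lam mu hlam hmu hsum x y z w v hy hz hw hv hxy hxw
  refine ⟨toReal γ, toReal θ, toReal γ, mem_hull_of_mem ⟨hγ, lexLe_refl γ⟩,
    mem_hull_of_mem ⟨hθ, lexLe_refl θ⟩, mem_hull_of_mem hγ, fin0_eq _ _⟩

theorem MP0 : MP 0 := by
  intro u γ θ hu hγ hθ hγθ x hxL hxU
  have : x = toReal γ := fin0_eq _ _
  rw [this]
  exact mem_hull_of_mem ⟨hγ, lexLe_refl γ, hγθ⟩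

theorem GPstep {n : ℕ} (ih : GP n) : GP (n+1) := by
  intro u γ θ hu hγ hθ lam mu hlam0 hmu0 hsum x y z w v hy hz hw hv hxy hxw
  have hu' : ∀ i, 1 ≤ Fin.init u i := fun i => hu i.castSucc
  have hlam1 : lam ≤ 1 := by linarith
  have hmu1 : mu ≤ 1 := by linarith
  obtain ⟨l1, a1, b1, hl10, hl11, ha1, hb1, hyinit, hyl1, hyl2⟩ := Ldec hu hγ hy
  obtain ⟨hzinit, hzl1, hzl2⟩ := Bdec hz
  obtain ⟨nu, c1, d1, hn0, hn1, hc1, hd1, hwinit, hwl1, hwl2⟩ := Udec hu hθ hw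
  obtain ⟨hvinit, hvl1, hvl2⟩ := Bdec hv
  set gR : ℝ := (γ (Fin.last n) : ℝ) with hgRdef
  set tR : ℝ := (θ (Fin.last n) : ℝ) with htRdef
  set mR : ℝ := (u (Fin.last n) : ℝ) with hmRdef
  have hg0 : 0 ≤ gR := by rw [hgRdef]; exact_mod_cast (hγ (Fin.last n)).1
  have hgm : gR ≤ mR := by rw [hgRdef, hmRdef]; exact_mod_cast (hγ (Fin.last n)).2
  have ht0 : 0 ≤ tR := by rw [htRdef]; exact_mod_cast (hθ (Fin.last n)).1
  have htm : tR ≤ mR := by rw [htRdef, hmRdef]; exact_mod_cast (hθ (Fin.last n)).2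
  have hgmZ : gR = mR ∨ gR + 1 ≤ mR := by
    rcases eq_or_lt_of_le ((hγ (Fin.last n)).2) with h | h
    · left; rw [hgRdef, hmRdef, h]
    · right; rw [hgRdef, hmRdef]; exact_mod_cast h
  have htZ : tR = 0 ∨ 1 ≤ tR := by
    rcases eq_or_lt_of_le ((hθ (Fin.last n)).1) with h | h
    · left; rw [htRdef, ← h]; norm_num
    · right; rw [htRdef]; exact_mod_cast h
  -- init equation
  have hx'1 : Fin.init x = lam • Fin.init y + (1 - lam) • Fin.init z := by
    funext j
    have h := congrFun hxy (Fin.castSucc j)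
    simpa [Fin.init] using h
  have hx'2 : Fin.init x = mu • Fin.init w + (1 - mu) • Fin.init v := by
    funext j
    have h := congrFun hxw (Fin.castSucc j)
    simpa [Fin.init] using h
  obtain ⟨lam2, hlam2⟩ : ∃ lam2 : ℝ, lam2 = lam * (1 - l1) := ⟨_, rfl⟩
  obtain ⟨mu2, hmu2⟩ : ∃ mu2 : ℝ, mu2 = mu * (1 - nu) := ⟨_, rfl⟩
  have hlam2' : lam - lam2 = lam * l1 := by rw [hlam2]; ring
  have hmu2' : mu - mu2 = mu * nu := by rw [hmu2]; ring
  have hlam20 : 0 ≤ lam2 := by rw [hlam2]; exact mul_nonneg hlam0 (by linarith)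
  have hmu20 : 0 ≤ mu2 := by rw [hmu2]; exact mul_nonneg hmu0 (by linarith)
  have hlam2l : lam2 ≤ lam := by
    have := mul_nonneg hlam0 hl10
    calc lam2 = lam - lam * l1 := by rw [hlam2]; ring
      _ ≤ lam := by linarith
  have hmu2l : mu2 ≤ mu := by
    have := mul_nonneg hmu0 hn0
    calc mu2 = mu - mu * nu := by rw [hmu2]; ring
      _ ≤ mu := by linarith
  -- merge
  have hx'3 : Fin.init x = lam2 • a1 + (lam * l1) • b1 + (1 - lam) • Fin.init z := by
    rw [hx'1, hyinit, hlam2]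
    module
  obtain ⟨bL, hbL, hxL'⟩ := merge2 (hull_convex (BOX (Fin.init u))) hb1 hzinit
    (mul_nonneg hlam0 hl10) (by linarith) (by rw [hlam2]; ring) hx'3
  have hx'4 : Fin.init x = mu2 • c1 + (mu * nu) • d1 + (1 - mu) • Fin.init v := by
    rw [hx'2, hwinit, hmu2]
    module
  obtain ⟨dU, hdU, hxU'⟩ := merge2 (hull_convex (BOX (Fin.init u))) hd1 hvinit
    (mul_nonneg hmu0 hn0) (by linarith) (by rw [hmu2]; ring) hx'4
  -- heights
  set S : ℝ := x (Fin.last n) with hSdef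
  have hSeq1 : S = lam * y (Fin.last n) + (1 - lam) * z (Fin.last n) := by
    rw [hSdef]
    have h := congrFun hxy (Fin.last n)
    simpa using h
  have hSeq2 : S = mu * w (Fin.last n) + (1 - mu) * v (Fin.last n) := by
    rw [hSdef]
    have h := congrFun hxw (Fin.last n)
    simpa using h
  have p1 := mul_le_mul_of_nonneg_left hyl1 hlam0
  have p2 := mul_le_mul_of_nonneg_left hyl2 hlam0
  have p3 := mul_nonneg (by linarith : (0:ℝ) ≤ 1 - lam) hzl1
  have p4 := mul_le_mul_of_nonneg_left hzl2 (by linarith : (0:ℝ) ≤ 1 - lam)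
  have q1 := mul_le_mul_of_nonneg_left hwl1 hmu0
  have q2 := mul_le_mul_of_nonneg_left hwl2 hmu0
  have q3 := mul_nonneg (by linarith : (0:ℝ) ≤ 1 - mu) hvl1
  have q4 := mul_le_mul_of_nonneg_left hvl2 (by linarith : (0:ℝ) ≤ 1 - mu)
  have hS1 : lam * gR + (lam - lam2) ≤ S := by
    calc lam * gR + (lam - lam2) = lam * (gR + l1) := by rw [hlam2']; ring
      _ ≤ lam * y (Fin.last n) := p1
      _ ≤ S := by linarith [p3, hSeq1]
  have hS3 : S ≤ lam * gR + (lam - lam2) * (mR - gR) + (1 - lam) * mR := by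
    calc S = lam * y (Fin.last n) + (1 - lam) * z (Fin.last n) := hSeq1
      _ ≤ lam * (gR + l1 * (mR - gR)) + (1 - lam) * mR := add_le_add p2 p4
      _ = lam * gR + (lam - lam2) * (mR - gR) + (1 - lam) * mR := by rw [hlam2']; ring
  have hS2 : mu2 * tR ≤ S := by
    calc mu2 * tR = mu * (tR - nu * tR) := by rw [hmu2]; ring
      _ ≤ mu * w (Fin.last n) := q1
      _ ≤ S := by linarith [q3, hSeq2]
  have hS4 : S ≤ mu * tR - (mu - mu2) + (1 - mu) * mR := by
    calc S = mu * w (Fin.last n) + (1 - mu) * v (Fin.last n) := hSeq2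
      _ ≤ mu * (tR - nu) + (1 - mu) * mR := add_le_add q2 q4
      _ = mu * tR - (mu - mu2) + (1 - mu) * mR := by rw [hmu2']; ring
  have hPne : lam - lam2 ≤ (lam - lam2) * (mR - gR) := by
    have hll : l1 ≤ l1 * (mR - gR) := by linarith [hyl1, hyl2]
    calc lam - lam2 = lam * l1 := hlam2'
      _ ≤ lam * (l1 * (mR - gR)) := mul_le_mul_of_nonneg_left hll hlam0
      _ = (lam - lam2) * (mR - gR) := by rw [hlam2']; ring
  have hUne : mu2 * tR ≤ mu * tR - (mu - mu2) := by
    have hnn : nu ≤ nu * tR := by linarith [hwl1, hwl2]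
    have hmm : mu * nu ≤ mu * (nu * tR) := mul_le_mul_of_nonneg_left hnn hmu0
    calc mu2 * tR = mu * tR - mu * (nu * tR) := by rw [hmu2]; ring
      _ ≤ mu * tR - mu * nu := by linarith
      _ = mu * tR - (mu - mu2) := by rw [hmu2']
  obtain ⟨lamR, muR, hR1, hR2, hR3, hR4, hR5, hR6, hR7, hR8⟩ :=
    EX hlam20 hlam2l hmu20 hmu2l hsum hg0 hgm ht0 htm hgmZ htZ hPne hUne hS1 hS2 hS3 hS4
  -- split heights
  obtain ⟨hL, kU, hB, hsp1, hsp2, hsp3, hsp4, hsp5, hsp6, hsp7⟩ :=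
    split3 (a1 := lam * gR + (lam - lamR)) (b1 := lam * gR + (lam - lamR) * (mR - gR))
      (a2 := muR * tR) (b2 := mu * tR - (mu - muR)) (a3 := 0) (b3 := (1 - lam - mu) * mR)
      (S := S) (by linarith) hR6
      (mul_nonneg (by linarith) (by linarith : (0:ℝ) ≤ mR))
      (by linarith) (by linarith)
  -- shrink
  obtain ⟨b3, hb3, hx5⟩ := shrink (hull_convex (BOX (Fin.init u)))
    (hull_mono LS_subset_BOX ha1) hbL hR1 hR2 (by linarith) hxL'
  obtain ⟨d3, hd3, hx6⟩ := shrink (hull_convex (BOX (Fin.init u)))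
    (hull_mono US_subset_BOX hc1) hdU hR3 hR4 (by linarith) hxU'
  obtain ⟨as, cs, es, has, hcs, hes, hxeq⟩ := ih (Fin.init u) (Fin.init γ) (Fin.init θ)
    hu' (init_mem_BOX hγ) (init_mem_BOX hθ) lamR muR hR1 hR3 (by linarith)
    (Fin.init x) a1 b3 c1 d3 ha1 hb3 hc1 hd3 hx5 hx6
  -- components
  obtain ⟨Y, hY, hYeq⟩ := Lcomp hu hγ has hes hR1 (by linarith) hlam1 hR5 hsp1 hsp2
  obtain ⟨W, hW, hWeq⟩ := Ucomp hu hθ hcs hes hR3 (by linarith) hmu1 hR6 hsp3 hsp4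
  obtain ⟨Z, hZ, hZeq⟩ := Bcomp hu hes (by linarith : (0:ℝ) ≤ 1 - lam - mu) hsp5 hsp6
  refine ⟨Y, W, Z, hY, hW, hZ, ?_⟩
  have hv : Fin.init x = (lamR • as + (lam - lamR) • es) + (muR • cs + (mu - muR) • es)
      + ((1 - lam - mu) • es) := by
    rw [hxeq]
    module
  have hs : S = hL + kU + hB := hsp7.symm
  calc x = Fin.snoc (Fin.init x) (x (Fin.last n)) := (Fin.snoc_init_self x).symm
    _ = lam • Y + mu • W + (1 - lam - mu) • Z := by
        rw [hYeq, hWeq, hZeq, snoc_add, snoc_add, hv, ← hSdef, hs]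

theorem MPstep {n : ℕ} (ihM : MP n) (ihG : GP n) : MP (n+1) := by
  intro u γ θ hu hγ hθ hγθ x hxL hxU
  have hu' : ∀ i, 1 ≤ Fin.init u i := fun i => hu i.castSucc
  obtain ⟨l1, a1, b1, hl10, hl11, ha1, hb1, hxinit1, hSL1, hSL2⟩ := Ldec hu hγ hxL
  obtain ⟨nu, c1, d1, hn0, hn1, hc1, hd1, hxinit2, hSU1, hSU2⟩ := Udec hu hθ hxU
  set gR : ℝ := (γ (Fin.last n) : ℝ) with hgRdef
  set tR : ℝ := (θ (Fin.last n) : ℝ) with htRdef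
  set mR : ℝ := (u (Fin.last n) : ℝ) with hmRdef
  set S : ℝ := x (Fin.last n) with hSdef
  have hgt : γ (Fin.last n) ≤ θ (Fin.last n) := lexLe_last_le hγθ
  rcases eq_or_lt_of_le hgt with hge | hglt
  · -- g = t
    have hgtR : gR = tR := by rw [hgRdef, htRdef, hge]
    have hl1nu : l1 = 0 ∧ nu = 0 := by
      constructor <;> nlinarith [hSL1, hSU2, hgtR]
    have hxa : Fin.init x = a1 := by
      rw [hxinit1, hl1nu.1]; simp
    have hxc : Fin.init x = c1 := by
      rw [hxinit2, hl1nu.2]; simp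
    have hband : Fin.init x ∈ hull (BAND (Fin.init u) (Fin.init γ) (Fin.init θ)) := by
      refine ihM (Fin.init u) (Fin.init γ) (Fin.init θ) hu' (init_mem_BOX hγ)
        (init_mem_BOX hθ) (lexLe_init hγθ hge) (Fin.init x) ?_ ?_
      · rw [hxa]; exact ha1
      · rw [hxc]; exact hc1
    have hSg : S = gR := by
      have h1 : gR + l1 ≤ S := hSL1
      have h2 : S ≤ tR - nu := hSU2
      rw [hl1nu.1] at h1
      rw [hl1nu.2] at h2
      rw [← hgtR] at h2
      linarith
    have hx' : x = Fin.snoc (Fin.init x) S := by rw [hSdef, Fin.snoc_init_self]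
    rw [hx']
    refine slice_mem_hull (le_refl (γ (Fin.last n)))
      (fun p hp => snoc_mem_BAND_eq hγ hge hp) (fun p hp => snoc_mem_BAND_eq hγ hge hp)
      hband ?_ ?_
    · rw [hSg]
    · rw [hSg]
  · -- g < t
    have hgtZ : γ (Fin.last n) + 1 ≤ θ (Fin.last n) := hglt
    have hgtR : gR + 1 ≤ tR := by rw [hgRdef, htRdef]; exact_mod_cast hgtZ
    have hint : tR = gR + 1 ∨ gR + 2 ≤ tR := by
      rcases eq_or_lt_of_le hgtZ with h | h
      · left; rw [hgRdef, htRdef, ← h]; push_cast; ring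
      · right; rw [hgRdef, htRdef]
        have h2 : γ (Fin.last n) + 2 ≤ θ (Fin.last n) := by omega
        exact_mod_cast h2
    obtain ⟨lamR, muR, hR1, hR2, hR3, hR4, hR5, hdeg, hLB, hUB⟩ :=
      EXM (lam := 1 - l1) (mu := 1 - nu) (by linarith) (by linarith) (by linarith)
        (by linarith) hgtR hint (by linarith [hSL1]) (by linarith [hSU2])
    have hxinit1' : Fin.init x = (1 - l1) • a1 + (1 - (1 - l1)) • b1 := by
      rw [hxinit1]; module
    have hxinit2' : Fin.init x = (1 - nu) • c1 + (1 - (1 - nu)) • d1 := by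
      rw [hxinit2]; module
    obtain ⟨b3, hb3, hx5⟩ := shrink (hull_convex (BOX (Fin.init u)))
      (hull_mono LS_subset_BOX ha1) hb1 hR1 hR2 (by linarith) hxinit1'
    obtain ⟨d3, hd3, hx6⟩ := shrink (hull_convex (BOX (Fin.init u)))
      (hull_mono US_subset_BOX hc1) hd1 hR3 hR4 (by linarith) hxinit2'
    obtain ⟨as, cs, es, has, hcs, hes, hxeq⟩ := ihG (Fin.init u) (Fin.init γ) (Fin.init θ)
      hu' (init_mem_BOX hγ) (init_mem_BOX hθ) lamR muR hR1 hR3 hR5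
      (Fin.init x) a1 b3 c1 d3 ha1 hb3 hc1 hd3 hx5 hx6
    have hx' : x = Fin.snoc (Fin.init x) S := by rw [hSdef, Fin.snoc_init_self]
    have hmem1 : (Fin.snoc as gR : Fin (n+1) → ℝ) ∈ hull (BAND u γ θ) := by
      refine slice_mem_hull (le_refl (γ (Fin.last n)))
        (fun p hp => snoc_mem_BAND_g hγ hglt hp) (fun p hp => snoc_mem_BAND_g hγ hglt hp)
        has (le_refl _) (le_refl _)
    have hmem2 : (Fin.snoc cs tR : Fin (n+1) → ℝ) ∈ hull (BAND u γ θ) := by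
      refine slice_mem_hull (le_refl (θ (Fin.last n)))
        (fun p hp => snoc_mem_BAND_t hθ hglt hp) (fun p hp => snoc_mem_BAND_t hθ hglt hp)
        hcs (le_refl _) (le_refl _)
    by_cases hrem : 1 - lamR - muR = 0
    · -- two-point combination
      have hSval : S = lamR * gR + muR * tR := by
        rw [hrem] at hLB hUB
        simp at hLB hUB
        linarith
      have hv : Fin.init x = lamR • as + muR • cs := by
        rw [hxeq, hrem, zero_smul, add_zero]
      rw [hx']
      have hco : (Fin.snoc (Fin.init x) S : Fin (n+1) → ℝ)
          = lamR • (Fin.snoc as gR : Fin (n+1) → ℝ) + muR • (Fin.snoc cs tR : Fin (n+1) → ℝ) := by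
        rw [snoc_combo2, ← hv, ← hSval]
      rw [hco]
      exact (hull_convex _) hmem1 hmem2 hR1 hR3 (by linarith)
    · -- three-point combination
      have ht2 : gR + 2 ≤ tR := by
        rcases hdeg with h | h
        · exact absurd h hrem
        · exact h
      have hrempos : 0 < 1 - lamR - muR := by
        rcases lt_or_eq_of_le (by linarith : (0:ℝ) ≤ 1 - lamR - muR) with h | h
        · exact h
        · exact absurd h.symm hrem
      obtain ⟨hmid, hmiddef⟩ : ∃ hmid : ℝ,
          hmid = (S - lamR * gR - muR * tR) / (1 - lamR - muR) := ⟨_, rfl⟩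
      have hmideq : (1 - lamR - muR) * hmid = S - lamR * gR - muR * tR := by
        rw [hmiddef]; field_simp
      have hmid1 : gR + 1 ≤ hmid := by
        rw [hmiddef, le_div_iff₀ hrempos]
        nlinarith [hLB]
      have hmid2 : hmid ≤ tR - 1 := by
        rw [hmiddef, div_le_iff₀ hrempos]
        nlinarith [hUB]
      have hmidZc : γ (Fin.last n) + 1 ≤ θ (Fin.last n) - 1 := by
        have : gR + 1 ≤ tR - 1 := by linarith
        rw [hgRdef, htRdef] at this
        have h2 : ((γ (Fin.last n) + 1 : ℤ) : ℝ) ≤ ((θ (Fin.last n) - 1 : ℤ) : ℝ) := by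
          push_cast; linarith
        exact_mod_cast h2
      have hmem3 : (Fin.snoc es hmid : Fin (n+1) → ℝ) ∈ hull (BAND u γ θ) := by
        refine slice_mem_hull (c := γ (Fin.last n) + 1) (d := θ (Fin.last n) - 1) hmidZc
          (fun p hp => snoc_mem_BAND_mid hγ hθ hp (le_refl _) (by omega))
          (fun p hp => snoc_mem_BAND_mid hγ hθ hp hmidZc (by omega)) hes ?_ ?_
        · push_cast; rw [← hgRdef]; exact hmid1
        · push_cast; rw [← htRdef]; exact hmid2
      rw [hx']
      have hco : (Fin.snoc (Fin.init x) S : Fin (n+1) → ℝ)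
          = lamR • (Fin.snoc as gR : Fin (n+1) → ℝ)
            + muR • (Fin.snoc cs tR : Fin (n+1) → ℝ)
            + (1 - lamR - muR) • (Fin.snoc es hmid : Fin (n+1) → ℝ) := by
        rw [snoc_smul, snoc_smul, snoc_smul, snoc_add, snoc_add, ← hxeq]
        have : lamR * gR + muR * tR + (1 - lamR - muR) * hmid = S := by
          rw [hmideq]; ring
        rw [this]
      rw [hco]
      exact conv3 (hull_convex _) hmem1 hmem2 hmem3 hR1 hR3 (by linarith) (by ring)

theorem master : ∀ n, MP n ∧ GP n := by
  intro n
  induction n with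
  | zero => exact ⟨MP0, GP0⟩
  | succ k ih => exact ⟨MPstep ih.1 ih.2, GPstep ih.2⟩

end Stmt12

/-- the convex hull operator distributes over the intersection of the
`⪰ γ` set and the `⪯ θ` set inside the box `rect u`. -/
theorem stmt_12 {n : ℕ} (hn : 1 ≤ n)
    (u γ θ : Fin n → ℤ) (hu : ∀ i, 1 ≤ u i)
    (hγ : ∀ i, 0 ≤ γ i ∧ γ i ≤ u i) (hθ : ∀ i, 0 ≤ θ i ∧ θ i ≤ u i)
    (hγθ : lexLe γ θ) :
    convexHull ℝ (toReal ''
        {x : Fin n → ℤ | (∀ i, 0 ≤ x i ∧ x i ≤ u i) ∧ lexLe γ x ∧ lexLe x θ}) =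
      convexHull ℝ (toReal ''
          {x : Fin n → ℤ | (∀ i, 0 ≤ x i ∧ x i ≤ u i) ∧ lexLe γ x}) ∩
        convexHull ℝ (toReal ''
          {x : Fin n → ℤ | (∀ i, 0 ≤ x i ∧ x i ≤ u i) ∧ lexLe x θ}) := by
  apply Set.Subset.antisymm
  · apply Set.subset_inter
    · exact convexHull_mono (Set.image_mono (fun p hp => ⟨hp.1, hp.2.1⟩))
    · exact convexHull_mono (Set.image_mono (fun p hp => ⟨hp.1, hp.2.2⟩))
  · rintro x ⟨hxL, hxU⟩
    exact (Stmt12.master n).1 u γ θ hu hγ hθ hγθ x hxL hxU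
end

section
/- Let n ≥ 1, let a_1,…,a_n, w_1,…,w_n, u_1,…,u_n be positive integers such that both {(a_i,u_i)}_{i=1}^n and {(w_i,u_i)}_{i=1}^n are superincreasing sequences, and let b, d be positive integers. Let K^≤ = {x ∈ rect(u) : ∑_i a_i x_i ≤ b} and K^≥ = {x ∈ rect(u) : ∑_i w_i x_i ≥ d}. If K^≤ ∩ K^≥ ≠ ∅, then conv(K^≤ ∩ K^≥) = conv(K^≤) ∩ conv(K^≥). -/
/-- integer box -/
def SKBox {m : ℕ} (u : Fin m → ℤ) : Set (Fin m → ℤ) := {x | ∀ i, 0 ≤ x i ∧ x i ≤ u i}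

/-- reverse-lexicographic order (most significant = highest index) -/
def SKle {m : ℕ} (x y : Fin m → ℤ) : Prop :=
  x = y ∨ ∃ j, x j < y j ∧ ∀ k, j < k → x k = y k

def SKDown {m : ℕ} (u c : Fin m → ℤ) : Set (Fin m → ℤ) := {x | x ∈ SKBox u ∧ SKle x c}
def SKUp {m : ℕ} (u e : Fin m → ℤ) : Set (Fin m → ℤ) := {x | x ∈ SKBox u ∧ SKle e x}
def SKIval {m : ℕ} (u e c : Fin m → ℤ) : Set (Fin m → ℤ) :=
  {x | x ∈ SKBox u ∧ SKle e x ∧ SKle x c}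

noncomputable def SKFH {m : ℕ} (u : Fin m → ℤ) : Set (Fin m → ℝ) :=
  convexHull ℝ (toReal '' SKBox u)
noncomputable def SKDH {m : ℕ} (u c : Fin m → ℤ) : Set (Fin m → ℝ) :=
  convexHull ℝ (toReal '' SKDown u c)
noncomputable def SKUH {m : ℕ} (u e : Fin m → ℤ) : Set (Fin m → ℝ) :=
  convexHull ℝ (toReal '' SKUp u e)
noncomputable def SKIH {m : ℕ} (u e c : Fin m → ℤ) : Set (Fin m → ℝ) :=
  convexHull ℝ (toReal '' SKIval u e c)

theorem SKle_refl {m : ℕ} (x : Fin m → ℤ) : SKle x x := Or.inl rfl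

theorem SKle_trans {m : ℕ} {x y z : Fin m → ℤ} (h1 : SKle x y) (h2 : SKle y z) : SKle x z := by
  rcases h1 with rfl | ⟨j1, hj1, hk1⟩
  · exact h2
  rcases h2 with rfl | ⟨j2, hj2, hk2⟩
  · exact Or.inr ⟨j1, hj1, hk1⟩
  rcases lt_trichotomy j1 j2 with h | rfl | h
  · exact Or.inr ⟨j2, (hk1 j2 h) ▸ hj2, fun k hk => (hk1 k (h.trans hk)).trans (hk2 k hk)⟩
  · exact Or.inr ⟨j1, hj1.trans hj2, fun k hk => (hk1 k hk).trans (hk2 k hk)⟩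
  · exact Or.inr ⟨j1, hj1.trans_le (le_of_eq (hk2 j1 h)),
      fun k hk => (hk1 k hk).trans (hk2 k (h.trans hk))⟩

theorem SKle_total {m : ℕ} (x y : Fin m → ℤ) : SKle x y ∨ SKle y x := by
  by_cases hxy : x = y
  · exact Or.inl (Or.inl hxy)
  have hne : (Finset.univ.filter (fun j => x j ≠ y j)).Nonempty := by
    by_contra h
    apply hxy
    funext i
    by_contra hi
    exact h ⟨i, Finset.mem_filter.mpr ⟨Finset.mem_univ _, hi⟩⟩
  set s := Finset.univ.filter (fun j => x j ≠ y j) with hs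
  let j := s.max' hne
  have hjmem : j ∈ s := s.max'_mem hne
  have hjne : x j ≠ y j := (Finset.mem_filter.mp hjmem).2
  have hk : ∀ k, j < k → x k = y k := by
    intro k hk
    by_contra hne'
    exact absurd (s.le_max' k (Finset.mem_filter.mpr ⟨Finset.mem_univ _, hne'⟩)) (not_le.mpr hk)
  rcases lt_or_gt_of_ne hjne with h | h
  · exact Or.inl (Or.inr ⟨j, h, hk⟩)
  · exact Or.inr (Or.inr ⟨j, h, fun k hkk => (hk k hkk).symm⟩)

theorem SKle_split {m : ℕ} {x y : Fin (m+1) → ℤ} :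
    SKle x y ↔ (x (Fin.last m) = y (Fin.last m) ∧ SKle (Fin.init x) (Fin.init y)) ∨
      x (Fin.last m) < y (Fin.last m) := by
  constructor
  · rintro (rfl | ⟨j, hj, hk⟩)
    · exact Or.inl ⟨rfl, SKle_refl _⟩
    rcases Fin.eq_castSucc_or_eq_last j with ⟨i, rfl⟩ | rfl
    · refine Or.inl ⟨hk _ (Fin.castSucc_lt_last i), Or.inr ⟨i, hj, fun k' hk' => ?_⟩⟩
      exact hk _ (Fin.castSucc_lt_castSucc_iff.mpr hk')
    · exact Or.inr hj
  · rintro (⟨hlast, (hinit | ⟨i, hi, hk⟩)⟩ | hlt)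
    · refine Or.inl (funext fun k => ?_)
      rcases Fin.eq_castSucc_or_eq_last k with ⟨i, rfl⟩ | rfl
      · exact congrFun hinit i
      · exact hlast
    · refine Or.inr ⟨i.castSucc, hi, fun k hkk => ?_⟩
      rcases Fin.eq_castSucc_or_eq_last k with ⟨k', rfl⟩ | rfl
      · exact hk k' (Fin.castSucc_lt_castSucc_iff.mp hkk)
      · exact hlast
    · exact Or.inr ⟨Fin.last m, hlt, fun k hkk => absurd (Fin.le_last k) (not_le.mpr hkk)⟩

theorem SKle_last_mono {m : ℕ} {x y : Fin (m+1) → ℤ} (h : SKle x y) :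
    x (Fin.last m) ≤ y (Fin.last m) := by
  rcases SKle_split.mp h with ⟨h1, _⟩ | h1
  · exact le_of_eq h1
  · exact le_of_lt h1

theorem init_combo {m : ℕ} (a b : ℝ) (x y : Fin (m+1) → ℝ) :
    Fin.init (a • x + b • y) = a • Fin.init x + b • Fin.init y := rfl

theorem snoc_combo {m : ℕ} {a b : ℝ} (hab : a + b = 1) (x y : Fin m → ℝ) (t : ℝ) :
    Fin.snoc (a • x + b • y) t
      = a • (Fin.snoc x t : Fin (m+1) → ℝ) + b • (Fin.snoc y t : Fin (m+1) → ℝ) := by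
  funext j
  refine Fin.lastCases ?_ (fun i => ?_) j
  · simp [Fin.snoc_last]
    have h : a * t + b * t = t := by rw [← add_mul, hab, one_mul]
    linarith
  · simp [Fin.snoc_castSucc]

theorem toReal_snoc {m : ℕ} (x : Fin m → ℤ) (k : ℤ) :
    toReal (Fin.snoc x k) = (Fin.snoc (toReal x) (k : ℝ) : Fin (m+1) → ℝ) := by
  funext j
  refine Fin.lastCases ?_ (fun i => ?_) j
  · simp [toReal, Fin.snoc_last]
  · simp [toReal, Fin.snoc_castSucc]

theorem toReal_init {m : ℕ} (x : Fin (m+1) → ℤ) :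
    Fin.init (toReal x) = toReal (Fin.init x) := rfl

theorem snoc_mem_hull {m : ℕ} {S : Set (Fin m → ℤ)} {T : Set (Fin (m+1) → ℤ)} {a b : ℤ}
    (hsub : ∀ x ∈ S, ∀ k : ℤ, a ≤ k → k ≤ b → Fin.snoc x k ∈ T)
    {q : Fin m → ℝ} (hq : q ∈ convexHull ℝ (toReal '' S))
    {t : ℝ} (hta : (a:ℝ) ≤ t) (htb : t ≤ (b:ℝ)) :
    (Fin.snoc q t : Fin (m+1) → ℝ) ∈ convexHull ℝ (toReal '' T) := by
  have hM : Convex ℝ {x : Fin m → ℝ | (Fin.snoc x t : Fin (m+1) → ℝ) ∈ convexHull ℝ (toReal '' T)} := by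
    intro x hx y hy α β hα hβ hαβ
    show (Fin.snoc (α • x + β • y) t : Fin (m+1) → ℝ) ∈ convexHull ℝ (toReal '' T)
    rw [snoc_combo hαβ]
    exact (convex_convexHull ℝ _) hx hy hα hβ hαβ
  refine convexHull_min ?_ hM hq
  rintro _ ⟨x, hx, rfl⟩
  simp only [Set.mem_setOf_eq]
  set k1 := ⌊t⌋ with hk1
  set k2 := ⌈t⌉ with hk2
  have h1a : a ≤ k1 := Int.le_floor.mpr hta
  have h1b : k1 ≤ b := by
    have : (k1:ℝ) ≤ (b:ℝ) := (Int.floor_le t).trans htb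
    exact_mod_cast this
  have h2a : a ≤ k2 := by
    have : (a:ℝ) ≤ (k2:ℝ) := hta.trans (Int.le_ceil t)
    exact_mod_cast this
  have h2b : k2 ≤ b := Int.ceil_le.mpr htb
  have hp1 : toReal (Fin.snoc x k1) ∈ toReal '' T := ⟨_, hsub x hx k1 h1a h1b, rfl⟩
  have hp2 : toReal (Fin.snoc x k2) ∈ toReal '' T := ⟨_, hsub x hx k2 h2a h2b, rfl⟩
  set θ : ℝ := (k2:ℝ) - t with hθ
  have hθ0 : 0 ≤ θ := sub_nonneg.mpr (Int.le_ceil t)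
  have hθ1 : θ ≤ 1 := by
    have h' : (k2:ℝ) ≤ (k1:ℝ) + 1 := by exact_mod_cast Int.ceil_le_floor_add_one t
    have h'' := Int.floor_le t
    simp only [hθ]
    linarith
  have hlast : θ * (k1:ℝ) + (1-θ) * (k2:ℝ) = t := by
    rcases eq_or_lt_of_le (Int.floor_le_ceil t) with heq | hlt
    · have ht' : t = (k1:ℝ) := le_antisymm (by rw [hk1, heq]; exact Int.le_ceil t) (Int.floor_le t)
      have hkk : (k2:ℝ) = (k1:ℝ) := by exact_mod_cast heq.symm
      rw [hθ, hkk, ht']; ring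
    · have : k2 = k1 + 1 := le_antisymm (Int.ceil_le_floor_add_one t) (by omega)
      rw [this]
      push_cast
      simp only [hθ, this]
      push_cast
      ring
  have key : (Fin.snoc (toReal x) t : Fin (m+1) → ℝ) =
      θ • toReal (Fin.snoc x k1) + (1-θ) • toReal (Fin.snoc x k2) := by
    rw [toReal_snoc, toReal_snoc]
    funext j
    refine Fin.lastCases ?_ (fun i => ?_) j
    · simp [Fin.snoc_last]
      linarith [hlast]
    · simp [Fin.snoc_castSucc]
      ring
  rw [key]
  exact (convex_convexHull ℝ _) (subset_convexHull ℝ _ hp1) (subset_convexHull ℝ _ hp2)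
    hθ0 (by linarith) (by ring)

theorem hull_slab {m : ℕ} (S : Set (Fin m → ℤ)) (a b : ℤ) :
    convexHull ℝ (toReal ''
      {x : Fin (m+1) → ℤ | Fin.init x ∈ S ∧ a ≤ x (Fin.last m) ∧ x (Fin.last m) ≤ b}) =
    {p : Fin (m+1) → ℝ | Fin.init p ∈ convexHull ℝ (toReal '' S) ∧
      (a:ℝ) ≤ p (Fin.last m) ∧ p (Fin.last m) ≤ (b:ℝ)} := by
  apply Set.Subset.antisymm
  · apply convexHull_min
    · rintro _ ⟨x, ⟨hx1, hx2, hx3⟩, rfl⟩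
      refine ⟨?_, ?_, ?_⟩
      · rw [toReal_init]
        exact subset_convexHull ℝ _ ⟨_, hx1, rfl⟩
      · show (a:ℝ) ≤ ((x (Fin.last m) : ℤ) : ℝ)
        exact_mod_cast hx2
      · show ((x (Fin.last m) : ℤ) : ℝ) ≤ (b:ℝ)
        exact_mod_cast hx3
    · intro p hp q hq α β hα hβ hαβ
      obtain ⟨hp1, hp2, hp3⟩ := hp
      obtain ⟨hq1, hq2, hq3⟩ := hq
      refine ⟨?_, ?_, ?_⟩
      · rw [init_combo]
        exact (convex_convexHull ℝ _) hp1 hq1 hα hβ hαβ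
      · show (a:ℝ) ≤ α * p (Fin.last m) + β * q (Fin.last m)
        have h1 := mul_le_mul_of_nonneg_left hp2 hα
        have h2 := mul_le_mul_of_nonneg_left hq2 hβ
        have h3 : α * (a:ℝ) + β * (a:ℝ) = (a:ℝ) := by rw [← add_mul, hαβ, one_mul]
        linarith
      · show α * p (Fin.last m) + β * q (Fin.last m) ≤ (b:ℝ)
        have h1 := mul_le_mul_of_nonneg_left hp3 hα
        have h2 := mul_le_mul_of_nonneg_left hq3 hβ
        have h3 : α * (b:ℝ) + β * (b:ℝ) = (b:ℝ) := by rw [← add_mul, hαβ, one_mul]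
        linarith
  · rintro p ⟨hp1, hp2, hp3⟩
    have h := snoc_mem_hull (T := {x : Fin (m+1) → ℤ | Fin.init x ∈ S ∧
        a ≤ x (Fin.last m) ∧ x (Fin.last m) ≤ b})
      (fun x hx k hka hkb => by
        refine ⟨?_, ?_, ?_⟩
        · rw [Fin.init_snoc]; exact hx
        · rw [Fin.snoc_last]; exact hka
        · rw [Fin.snoc_last]; exact hkb) hp1 hp2 hp3
    rwa [Fin.snoc_init_self p] at h

/-! basic inclusions and membership -/

theorem box_init {m : ℕ} {u c : Fin (m+1) → ℤ} (hc : c ∈ SKBox u) :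
    Fin.init c ∈ SKBox (Fin.init u) := fun i => hc i.castSucc

theorem down_subset_box {m : ℕ} (u c : Fin m → ℤ) : SKDown u c ⊆ SKBox u := fun _ h => h.1
theorem up_subset_box {m : ℕ} (u e : Fin m → ℤ) : SKUp u e ⊆ SKBox u := fun _ h => h.1

theorem SKDH_subset_FH {m : ℕ} (u c : Fin m → ℤ) : SKDH u c ⊆ SKFH u :=
  convexHull_mono (Set.image_mono (down_subset_box u c))
theorem SKUH_subset_FH {m : ℕ} (u e : Fin m → ℤ) : SKUH u e ⊆ SKFH u :=
  convexHull_mono (Set.image_mono (up_subset_box u e))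

theorem mem_SKDH_self {m : ℕ} {u c : Fin m → ℤ} (hc : c ∈ SKBox u) : toReal c ∈ SKDH u c :=
  subset_convexHull ℝ _ ⟨c, ⟨hc, SKle_refl c⟩, rfl⟩
theorem mem_SKUH_self {m : ℕ} {u e : Fin m → ℤ} (he : e ∈ SKBox u) : toReal e ∈ SKUH u e :=
  subset_convexHull ℝ _ ⟨e, ⟨he, SKle_refl e⟩, rfl⟩
theorem mem_SKFH_self {m : ℕ} {u c : Fin m → ℤ} (hc : c ∈ SKBox u) : toReal c ∈ SKFH u :=
  subset_convexHull ℝ _ ⟨c, hc, rfl⟩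

theorem combo2 {m : ℕ} {C : Set (Fin m → ℝ)} (hC : Convex ℝ C) {x y : Fin m → ℝ} {a b : ℝ}
    (ha : 0 ≤ a) (hb : 0 ≤ b) (hx : x ∈ C) (hy : b ≠ 0 → y ∈ C) :
    ∃ z ∈ C, a • x + b • y = (a + b) • z := by
  by_cases hb0 : b = 0
  · exact ⟨x, hx, by subst hb0; simp⟩
  · have hbpos : 0 < b := lt_of_le_of_ne hb (Ne.symm hb0)
    have habpos : 0 < a + b := by linarith
    refine ⟨(a/(a+b)) • x + (b/(a+b)) • y,
      hC hx (hy hb0) (by positivity) (by positivity) (by field_simp), ?_⟩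
    rw [smul_add, smul_smul, smul_smul]
    congr 1 <;> congr 1 <;> field_simp

/-! splitting of integer sets along the last coordinate -/

theorem box_split {m : ℕ} (u : Fin (m+1) → ℤ) :
    SKBox u = {x : Fin (m+1) → ℤ | Fin.init x ∈ SKBox (Fin.init u) ∧
      0 ≤ x (Fin.last m) ∧ x (Fin.last m) ≤ u (Fin.last m)} := by
  ext x
  constructor
  · intro h
    exact ⟨fun i => h i.castSucc, (h (Fin.last m)).1, (h (Fin.last m)).2⟩
  · rintro ⟨h1, h2, h3⟩ i
    refine Fin.lastCases ?_ (fun i => ?_) i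
    · exact ⟨h2, h3⟩
    · exact h1 i

theorem down_split {m : ℕ} {u c : Fin (m+1) → ℤ} (hcm : 1 ≤ c (Fin.last m))
    (hc : c ∈ SKBox u) :
    SKDown u c =
      {x : Fin (m+1) → ℤ | Fin.init x ∈ SKDown (Fin.init u) (Fin.init c) ∧
        c (Fin.last m) ≤ x (Fin.last m) ∧ x (Fin.last m) ≤ c (Fin.last m)} ∪
      {x : Fin (m+1) → ℤ | Fin.init x ∈ SKBox (Fin.init u) ∧
        0 ≤ x (Fin.last m) ∧ x (Fin.last m) ≤ c (Fin.last m) - 1} := by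
  ext x
  constructor
  · rintro ⟨hbox, hle⟩
    have hb' := (box_split u) ▸ hbox
    obtain ⟨hb1, hb2, hb3⟩ : Fin.init x ∈ SKBox (Fin.init u) ∧ _ ∧ _ := hb'
    rcases SKle_split.mp hle with ⟨heq, hinit⟩ | hlt
    · exact Or.inl ⟨⟨hb1, hinit⟩, le_of_eq heq.symm, le_of_eq heq⟩
    · exact Or.inr ⟨hb1, hb2, by omega⟩
  · rintro (⟨⟨hb1, hle1⟩, h2, h3⟩ | ⟨hb1, h2, h3⟩)
    · refine ⟨(box_split u) ▸ ⟨hb1, ?_, ?_⟩, SKle_split.mpr (Or.inl ⟨le_antisymm h3 h2, hle1⟩)⟩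
      · have := (hc (Fin.last m)).1; omega
      · have := (hc (Fin.last m)).2; omega
    · refine ⟨(box_split u) ▸ ⟨hb1, h2, ?_⟩, SKle_split.mpr (Or.inr (by omega))⟩
      have := (hc (Fin.last m)).2; omega

theorem down_zero {m : ℕ} {u c : Fin (m+1) → ℤ} (hcm : c (Fin.last m) = 0)
    (hc : c ∈ SKBox u) :
    SKDown u c = {x : Fin (m+1) → ℤ | Fin.init x ∈ SKDown (Fin.init u) (Fin.init c) ∧
      0 ≤ x (Fin.last m) ∧ x (Fin.last m) ≤ 0} := by
  ext x
  constructor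
  · rintro ⟨hbox, hle⟩
    obtain ⟨hb1, hb2, hb3⟩ : Fin.init x ∈ SKBox (Fin.init u) ∧ _ ∧ _ := (box_split u) ▸ hbox
    have hxle := SKle_last_mono hle
    rcases SKle_split.mp hle with ⟨heq, hinit⟩ | hlt
    · exact ⟨⟨hb1, hinit⟩, hb2, by omega⟩
    · omega
  · rintro ⟨⟨hb1, hle1⟩, h2, h3⟩
    have hx0 : x (Fin.last m) = 0 := le_antisymm h3 h2
    refine ⟨(box_split u) ▸ ⟨hb1, h2, ?_⟩, SKle_split.mpr (Or.inl ⟨by omega, hle1⟩)⟩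
    have := (hc (Fin.last m)).2; omega

theorem up_split {m : ℕ} {u e : Fin (m+1) → ℤ} (hem : e (Fin.last m) + 1 ≤ u (Fin.last m))
    (he : e ∈ SKBox u) :
    SKUp u e =
      {x : Fin (m+1) → ℤ | Fin.init x ∈ SKUp (Fin.init u) (Fin.init e) ∧
        e (Fin.last m) ≤ x (Fin.last m) ∧ x (Fin.last m) ≤ e (Fin.last m)} ∪
      {x : Fin (m+1) → ℤ | Fin.init x ∈ SKBox (Fin.init u) ∧
        e (Fin.last m) + 1 ≤ x (Fin.last m) ∧ x (Fin.last m) ≤ u (Fin.last m)} := by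
  ext x
  constructor
  · rintro ⟨hbox, hle⟩
    obtain ⟨hb1, hb2, hb3⟩ : Fin.init x ∈ SKBox (Fin.init u) ∧ _ ∧ _ := (box_split u) ▸ hbox
    rcases SKle_split.mp hle with ⟨heq, hinit⟩ | hlt
    · exact Or.inl ⟨⟨hb1, hinit⟩, le_of_eq heq, le_of_eq heq.symm⟩
    · exact Or.inr ⟨hb1, by omega, hb3⟩
  · rintro (⟨⟨hb1, hle1⟩, h2, h3⟩ | ⟨hb1, h2, h3⟩)
    · refine ⟨(box_split u) ▸ ⟨hb1, ?_, ?_⟩, SKle_split.mpr (Or.inl ⟨le_antisymm h2 h3, hle1⟩)⟩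
      · have := (he (Fin.last m)).1; omega
      · have := (he (Fin.last m)).2; omega
    · refine ⟨(box_split u) ▸ ⟨hb1, ?_, h3⟩, SKle_split.mpr (Or.inr (by omega))⟩
      have := (he (Fin.last m)).1; omega

theorem up_top {m : ℕ} {u e : Fin (m+1) → ℤ} (hem : e (Fin.last m) = u (Fin.last m))
    (he : e ∈ SKBox u) :
    SKUp u e = {x : Fin (m+1) → ℤ | Fin.init x ∈ SKUp (Fin.init u) (Fin.init e) ∧
      e (Fin.last m) ≤ x (Fin.last m) ∧ x (Fin.last m) ≤ e (Fin.last m)} := by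
  ext x
  constructor
  · rintro ⟨hbox, hle⟩
    obtain ⟨hb1, hb2, hb3⟩ : Fin.init x ∈ SKBox (Fin.init u) ∧ _ ∧ _ := (box_split u) ▸ hbox
    have hxle := SKle_last_mono hle
    rcases SKle_split.mp hle with ⟨heq, hinit⟩ | hlt
    · exact ⟨⟨hb1, hinit⟩, by omega, by omega⟩
    · omega
  · rintro ⟨⟨hb1, hle1⟩, h2, h3⟩
    refine ⟨(box_split u) ▸ ⟨hb1, ?_, ?_⟩, SKle_split.mpr (Or.inl ⟨le_antisymm (by omega) (by omega), hle1⟩)⟩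
    · have := (he (Fin.last m)).1; omega
    · omega

/-! decomposition of hulls of unions of two slabs -/

theorem hull_union_slabs {m : ℕ} {S1 S2 : Set (Fin m → ℤ)} {k a b : ℤ}
    (h1 : S1.Nonempty) (h2 : S2.Nonempty) (hab : a ≤ b) {p : Fin (m+1) → ℝ}
    (hp : p ∈ convexHull ℝ (toReal ''
      ({x : Fin (m+1) → ℤ | Fin.init x ∈ S1 ∧ k ≤ x (Fin.last m) ∧ x (Fin.last m) ≤ k} ∪
       {x : Fin (m+1) → ℤ | Fin.init x ∈ S2 ∧ a ≤ x (Fin.last m) ∧ x (Fin.last m) ≤ b}))) :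
    ∃ μ : ℝ, 0 ≤ μ ∧ μ ≤ 1 ∧
      ∃ q1 ∈ convexHull ℝ (toReal '' S1), ∃ q2 ∈ convexHull ℝ (toReal '' S2),
      ∃ ρ : ℝ, (a:ℝ) ≤ ρ ∧ ρ ≤ (b:ℝ) ∧
      p = μ • (Fin.snoc q1 (k:ℝ) : Fin (m+1) → ℝ) + (1-μ) • (Fin.snoc q2 ρ : Fin (m+1) → ℝ) := by
  rw [Set.image_union] at hp
  obtain ⟨s1, hs1⟩ := h1
  obtain ⟨s2, hs2⟩ := h2
  have hT1 : (toReal '' {x : Fin (m+1) → ℤ | Fin.init x ∈ S1 ∧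
      k ≤ x (Fin.last m) ∧ x (Fin.last m) ≤ k}).Nonempty := by
    refine ⟨toReal (Fin.snoc s1 k), ⟨Fin.snoc s1 k, ⟨?_, ?_, ?_⟩, rfl⟩⟩ <;>
      simp [Fin.init_snoc, Fin.snoc_last, hs1]
  have hT2 : (toReal '' {x : Fin (m+1) → ℤ | Fin.init x ∈ S2 ∧
      a ≤ x (Fin.last m) ∧ x (Fin.last m) ≤ b}).Nonempty := by
    refine ⟨toReal (Fin.snoc s2 a), ⟨Fin.snoc s2 a, ⟨?_, ?_, ?_⟩, rfl⟩⟩ <;>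
      simp [Fin.init_snoc, Fin.snoc_last, hs2, hab]
  rw [convexHull_union hT1 hT2] at hp
  rw [hull_slab, hull_slab] at hp
  obtain ⟨q, hq, r, hr, hseg⟩ := mem_convexJoin.mp hp
  obtain ⟨μ, ν, hμ, hν, hμν, heq⟩ := hseg
  obtain ⟨hq1, hq2, hq3⟩ := hq
  obtain ⟨hr1, hr2, hr3⟩ := hr
  have hqlast : q (Fin.last m) = (k:ℝ) := le_antisymm hq3 hq2
  refine ⟨μ, hμ, by linarith, Fin.init q, hq1, Fin.init r, hr1, r (Fin.last m), hr2, hr3, ?_⟩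
  have hq' : (Fin.snoc (Fin.init q) (k:ℝ) : Fin (m+1) → ℝ) = q := by
    rw [← hqlast]; exact Fin.snoc_init_self q
  have hr' : (Fin.snoc (Fin.init r) (r (Fin.last m)) : Fin (m+1) → ℝ) = r := Fin.snoc_init_self r
  rw [hq', hr']
  have : ν = 1 - μ := by linarith
  rw [← this, heq]

/-! extraction lemmas -/

theorem Dside {m : ℕ} {u c : Fin (m+1) → ℤ} (hc : c ∈ SKBox u) {p : Fin (m+1) → ℝ}
    (hp : p ∈ SKDH u c) :
    ∃ μ : ℝ, 0 ≤ μ ∧ μ ≤ 1 ∧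
      ∃ q1 ∈ SKDH (Fin.init u) (Fin.init c), ∃ q2 ∈ SKFH (Fin.init u), ∃ ρ : ℝ,
      0 ≤ ρ ∧ (1 - μ ≠ 0 → ρ ≤ (c (Fin.last m) : ℝ) - 1) ∧
      p = μ • (Fin.snoc q1 ((c (Fin.last m) : ℤ) : ℝ) : Fin (m+1) → ℝ)
        + (1-μ) • (Fin.snoc q2 ρ : Fin (m+1) → ℝ) := by
  by_cases hcm : 1 ≤ c (Fin.last m)
  · rw [SKDH, down_split hcm hc] at hp
    have hne1 : (SKDown (Fin.init u) (Fin.init c)).Nonempty :=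
      ⟨Fin.init c, box_init hc, SKle_refl _⟩
    have hne2 : (SKBox (Fin.init u)).Nonempty := ⟨Fin.init c, box_init hc⟩
    obtain ⟨μ, h0, h1, q1, hq1, q2, hq2, ρ, hρ1, hρ2, heq⟩ :=
      hull_union_slabs hne1 hne2 (by omega) hp
    refine ⟨μ, h0, h1, q1, hq1, q2, hq2, ρ, by exact_mod_cast hρ1, fun _ => ?_, heq⟩
    have : ((c (Fin.last m) - 1 : ℤ) : ℝ) = (c (Fin.last m) : ℝ) - 1 := by push_cast; ring
    rw [← this]; exact hρ2
  · have hcm0 : c (Fin.last m) = 0 := by have := (hc (Fin.last m)).1; omega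
    rw [SKDH, down_zero hcm0 hc, hull_slab] at hp
    obtain ⟨hp1, hp2, hp3⟩ := hp
    have hplast : p (Fin.last m) = 0 := le_antisymm (by exact_mod_cast hp3) (by exact_mod_cast hp2)
    refine ⟨1, zero_le_one, le_refl 1, Fin.init p, hp1, Fin.init p,
      SKDH_subset_FH _ _ hp1, 0, le_refl 0, by simp, ?_⟩
    have : ((c (Fin.last m) : ℤ) : ℝ) = p (Fin.last m) := by rw [hcm0, hplast]; simp
    rw [this]
    simp [Fin.snoc_init_self]

theorem Uside {m : ℕ} {u e : Fin (m+1) → ℤ} (he : e ∈ SKBox u) {p : Fin (m+1) → ℝ}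
    (hp : p ∈ SKUH u e) :
    ∃ ν : ℝ, 0 ≤ ν ∧ ν ≤ 1 ∧
      ∃ q1 ∈ SKUH (Fin.init u) (Fin.init e), ∃ q2 ∈ SKFH (Fin.init u), ∃ τ : ℝ,
      τ ≤ (u (Fin.last m) : ℝ) ∧ (1 - ν ≠ 0 → (e (Fin.last m) : ℝ) + 1 ≤ τ) ∧
      p = ν • (Fin.snoc q1 ((e (Fin.last m) : ℤ) : ℝ) : Fin (m+1) → ℝ)
        + (1-ν) • (Fin.snoc q2 τ : Fin (m+1) → ℝ) := by
  by_cases hem : e (Fin.last m) + 1 ≤ u (Fin.last m)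
  · rw [SKUH, up_split hem he] at hp
    have hne1 : (SKUp (Fin.init u) (Fin.init e)).Nonempty :=
      ⟨Fin.init e, box_init he, SKle_refl _⟩
    have hne2 : (SKBox (Fin.init u)).Nonempty := ⟨Fin.init e, box_init he⟩
    obtain ⟨ν, h0, h1, q1, hq1, q2, hq2, τ, hτ1, hτ2, heq⟩ :=
      hull_union_slabs hne1 hne2 hem hp
    refine ⟨ν, h0, h1, q1, hq1, q2, hq2, τ, by exact_mod_cast hτ2, fun _ => ?_, heq⟩
    have : ((e (Fin.last m) + 1 : ℤ) : ℝ) = (e (Fin.last m) : ℝ) + 1 := by push_cast; ring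
    rw [← this]; exact hτ1
  · have hem0 : e (Fin.last m) = u (Fin.last m) := by have := (he (Fin.last m)).2; omega
    rw [SKUH, up_top hem0 he, hull_slab] at hp
    obtain ⟨hp1, hp2, hp3⟩ := hp
    refine ⟨1, zero_le_one, le_refl 1, Fin.init p, hp1, Fin.init p,
      SKUH_subset_FH _ _ hp1, (u (Fin.last m) : ℝ), le_refl _, by simp, ?_⟩
    have hplast : p (Fin.last m) = ((e (Fin.last m) : ℤ) : ℝ) :=
      le_antisymm (by exact_mod_cast hp3) (by exact_mod_cast hp2)
    rw [← hplast]
    simp [Fin.snoc_init_self]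

theorem Fside {m : ℕ} {u : Fin (m+1) → ℤ} {p : Fin (m+1) → ℝ} (hp : p ∈ SKFH u) :
    Fin.init p ∈ SKFH (Fin.init u) ∧ 0 ≤ p (Fin.last m) ∧ p (Fin.last m) ≤ (u (Fin.last m) : ℝ) := by
  rw [SKFH, box_split u, hull_slab] at hp
  obtain ⟨h1, h2, h3⟩ := hp
  exact ⟨h1, by exact_mod_cast h2, h3⟩

/-! introduction lemmas: building hull members via `Fin.snoc` -/

theorem FH_intro {m : ℕ} {u : Fin (m+1) → ℤ} {q : Fin m → ℝ} (hq : q ∈ SKFH (Fin.init u))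
    {ρ : ℝ} (h0 : 0 ≤ ρ) (h1 : ρ ≤ (u (Fin.last m) : ℝ)) :
    (Fin.snoc q ρ : Fin (m+1) → ℝ) ∈ SKFH u := by
  refine snoc_mem_hull (a := 0) (b := u (Fin.last m)) ?_ hq (by exact_mod_cast h0) h1
  intro x hx k hk0 hk1
  rw [box_split u]
  exact ⟨by rw [Fin.init_snoc]; exact hx, by rw [Fin.snoc_last]; exact ⟨hk0, hk1⟩⟩

theorem DH_intro_top {m : ℕ} {u c : Fin (m+1) → ℤ} (hc : c ∈ SKBox u) {q : Fin m → ℝ}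
    (hq : q ∈ SKDH (Fin.init u) (Fin.init c)) :
    (Fin.snoc q ((c (Fin.last m) : ℤ) : ℝ) : Fin (m+1) → ℝ) ∈ SKDH u c := by
  refine snoc_mem_hull (a := c (Fin.last m)) (b := c (Fin.last m)) ?_ hq le_rfl le_rfl
  rintro x ⟨hxb, hxle⟩ k hk0 hk1
  have hk : k = c (Fin.last m) := le_antisymm hk1 hk0
  subst hk
  refine ⟨?_, SKle_split.mpr (Or.inl ⟨by rw [Fin.snoc_last], by rwa [Fin.init_snoc]⟩)⟩
  rw [box_split u]
  exact ⟨by rw [Fin.init_snoc]; exact hxb,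
    by rw [Fin.snoc_last]; exact ⟨(hc (Fin.last m)).1, (hc (Fin.last m)).2⟩⟩

theorem DH_intro_low {m : ℕ} {u c : Fin (m+1) → ℤ} (hc : c ∈ SKBox u) {q : Fin m → ℝ}
    (hq : q ∈ SKFH (Fin.init u)) {ρ : ℝ} (h0 : 0 ≤ ρ) (h1 : ρ ≤ (c (Fin.last m) : ℝ) - 1) :
    (Fin.snoc q ρ : Fin (m+1) → ℝ) ∈ SKDH u c := by
  refine snoc_mem_hull (a := 0) (b := c (Fin.last m) - 1) ?_ hq (by exact_mod_cast h0)
    (by push_cast; linarith)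
  intro x hx k hk0 hk1
  refine ⟨?_, SKle_split.mpr (Or.inr (by rw [Fin.snoc_last]; omega))⟩
  rw [box_split u]
  exact ⟨by rw [Fin.init_snoc]; exact hx,
    by rw [Fin.snoc_last]; have := (hc (Fin.last m)).2; omega⟩

theorem UH_intro_bot {m : ℕ} {u e : Fin (m+1) → ℤ} (he : e ∈ SKBox u) {q : Fin m → ℝ}
    (hq : q ∈ SKUH (Fin.init u) (Fin.init e)) :
    (Fin.snoc q ((e (Fin.last m) : ℤ) : ℝ) : Fin (m+1) → ℝ) ∈ SKUH u e := by
  refine snoc_mem_hull (a := e (Fin.last m)) (b := e (Fin.last m)) ?_ hq le_rfl le_rfl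
  rintro x ⟨hxb, hxle⟩ k hk0 hk1
  have hk : k = e (Fin.last m) := le_antisymm hk1 hk0
  subst hk
  refine ⟨?_, SKle_split.mpr (Or.inl ⟨by rw [Fin.snoc_last], by rwa [Fin.init_snoc]⟩)⟩
  rw [box_split u]
  exact ⟨by rw [Fin.init_snoc]; exact hxb,
    by rw [Fin.snoc_last]; exact ⟨(he (Fin.last m)).1, (he (Fin.last m)).2⟩⟩

theorem UH_intro_high {m : ℕ} {u e : Fin (m+1) → ℤ} (he : e ∈ SKBox u) {q : Fin m → ℝ}
    (hq : q ∈ SKFH (Fin.init u)) {τ : ℝ} (h0 : (e (Fin.last m) : ℝ) + 1 ≤ τ)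
    (h1 : τ ≤ (u (Fin.last m) : ℝ)) :
    (Fin.snoc q τ : Fin (m+1) → ℝ) ∈ SKUH u e := by
  refine snoc_mem_hull (a := e (Fin.last m) + 1) (b := u (Fin.last m)) ?_ hq
    (by push_cast; linarith) h1
  intro x hx k hk0 hk1
  refine ⟨?_, SKle_split.mpr (Or.inr (by rw [Fin.snoc_last]; omega))⟩
  rw [box_split u]
  exact ⟨by rw [Fin.init_snoc]; exact hx,
    by rw [Fin.snoc_last]; have := (he (Fin.last m)).1; omega⟩

theorem IH_intro_c {m : ℕ} {u e c : Fin (m+1) → ℤ} (hc : c ∈ SKBox u)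
    (hlt : e (Fin.last m) < c (Fin.last m)) {q : Fin m → ℝ}
    (hq : q ∈ SKDH (Fin.init u) (Fin.init c)) :
    (Fin.snoc q ((c (Fin.last m) : ℤ) : ℝ) : Fin (m+1) → ℝ) ∈ SKIH u e c := by
  refine snoc_mem_hull (a := c (Fin.last m)) (b := c (Fin.last m)) ?_ hq le_rfl le_rfl
  rintro x ⟨hxb, hxle⟩ k hk0 hk1
  have hk : k = c (Fin.last m) := le_antisymm hk1 hk0
  subst hk
  refine ⟨?_, SKle_split.mpr (Or.inr (by rw [Fin.snoc_last]; omega)),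
    SKle_split.mpr (Or.inl ⟨by rw [Fin.snoc_last], by rwa [Fin.init_snoc]⟩)⟩
  rw [box_split u]
  exact ⟨by rw [Fin.init_snoc]; exact hxb,
    by rw [Fin.snoc_last]; exact ⟨(hc (Fin.last m)).1, (hc (Fin.last m)).2⟩⟩

theorem IH_intro_e {m : ℕ} {u e c : Fin (m+1) → ℤ} (he : e ∈ SKBox u)
    (hlt : e (Fin.last m) < c (Fin.last m)) {q : Fin m → ℝ}
    (hq : q ∈ SKUH (Fin.init u) (Fin.init e)) :
    (Fin.snoc q ((e (Fin.last m) : ℤ) : ℝ) : Fin (m+1) → ℝ) ∈ SKIH u e c := by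
  refine snoc_mem_hull (a := e (Fin.last m)) (b := e (Fin.last m)) ?_ hq le_rfl le_rfl
  rintro x ⟨hxb, hxle⟩ k hk0 hk1
  have hk : k = e (Fin.last m) := le_antisymm hk1 hk0
  subst hk
  refine ⟨?_, SKle_split.mpr (Or.inl ⟨by rw [Fin.snoc_last], by rwa [Fin.init_snoc]⟩),
    SKle_split.mpr (Or.inr (by rw [Fin.snoc_last]; omega))⟩
  rw [box_split u]
  exact ⟨by rw [Fin.init_snoc]; exact hxb,
    by rw [Fin.snoc_last]; exact ⟨(he (Fin.last m)).1, (he (Fin.last m)).2⟩⟩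

theorem IH_intro_mid {m : ℕ} {u e c : Fin (m+1) → ℤ} (hc : c ∈ SKBox u)
    (he : e ∈ SKBox u) {q : Fin m → ℝ} (hq : q ∈ SKFH (Fin.init u)) {ρ : ℝ}
    (h0 : (e (Fin.last m) : ℝ) + 1 ≤ ρ) (h1 : ρ ≤ (c (Fin.last m) : ℝ) - 1) :
    (Fin.snoc q ρ : Fin (m+1) → ℝ) ∈ SKIH u e c := by
  refine snoc_mem_hull (a := e (Fin.last m) + 1) (b := c (Fin.last m) - 1) ?_ hq
    (by push_cast; linarith) (by push_cast; linarith)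
  intro x hx k hk0 hk1
  refine ⟨?_, SKle_split.mpr (Or.inr (by rw [Fin.snoc_last]; omega)),
    SKle_split.mpr (Or.inr (by rw [Fin.snoc_last]; omega))⟩
  rw [box_split u]
  exact ⟨by rw [Fin.init_snoc]; exact hx,
    by rw [Fin.snoc_last]; have h1 := (he (Fin.last m)).1; have h2 := (hc (Fin.last m)).2; omega⟩

theorem IH_intro_eq {m : ℕ} {u e c : Fin (m+1) → ℤ} (hc : c ∈ SKBox u)
    (heq : e (Fin.last m) = c (Fin.last m)) {q : Fin m → ℝ}
    (hq : q ∈ SKIH (Fin.init u) (Fin.init e) (Fin.init c)) :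
    (Fin.snoc q ((c (Fin.last m) : ℤ) : ℝ) : Fin (m+1) → ℝ) ∈ SKIH u e c := by
  refine snoc_mem_hull (a := c (Fin.last m)) (b := c (Fin.last m)) ?_ hq le_rfl le_rfl
  rintro x ⟨hxb, hxle1, hxle2⟩ k hk0 hk1
  have hk : k = c (Fin.last m) := le_antisymm hk1 hk0
  subst hk
  refine ⟨?_, SKle_split.mpr (Or.inl ⟨by rw [Fin.snoc_last]; omega, by rwa [Fin.init_snoc]⟩),
    SKle_split.mpr (Or.inl ⟨by rw [Fin.snoc_last], by rwa [Fin.init_snoc]⟩)⟩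
  rw [box_split u]
  exact ⟨by rw [Fin.init_snoc]; exact hxb,
    by rw [Fin.snoc_last]; exact ⟨(hc (Fin.last m)).1, (hc (Fin.last m)).2⟩⟩

/-! real-arithmetic selection gadgets -/

theorem pick_theta {lo0 lo1 hi0 hi1 t : ℝ} (h00 : lo0 ≤ hi0) (h11 : lo1 ≤ hi1)
    (h0 : lo0 ≤ t) (h1 : t ≤ hi1) :
    ∃ θ : ℝ, 0 ≤ θ ∧ θ ≤ 1 ∧ (1-θ)*lo0 + θ*lo1 ≤ t ∧ t ≤ (1-θ)*hi0 + θ*hi1 := by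
  by_cases h : t ≤ hi0
  · exact ⟨0, le_rfl, zero_le_one, by linarith, by linarith⟩
  · push_neg at h
    have hd : 0 < hi1 - hi0 := by linarith
    refine ⟨(t - hi0)/(hi1-hi0), div_nonneg (by linarith) (by linarith), ?_, ?_, ?_⟩
    · rw [div_le_one hd]; linarith
    · have hθ0 : 0 ≤ (t - hi0)/(hi1-hi0) := div_nonneg (by linarith) (by linarith)
      have hθ1 : (t - hi0)/(hi1-hi0) ≤ 1 := by rw [div_le_one hd]; linarith
      have hhi : (1-(t - hi0)/(hi1-hi0))*hi0 + ((t - hi0)/(hi1-hi0))*hi1 = t := by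
        field_simp
        ring
      nlinarith [mul_le_mul_of_nonneg_left h00 (by linarith : (0:ℝ) ≤ 1-(t - hi0)/(hi1-hi0)),
        mul_le_mul_of_nonneg_left h11 hθ0]
    · have hhi : (1-(t - hi0)/(hi1-hi0))*hi0 + ((t - hi0)/(hi1-hi0))*hi1 = t := by
        field_simp
        ring
      linarith

theorem split1 {w a b s : ℝ} (hw : 0 ≤ w) (hab : a ≤ b) (h1 : w*a ≤ s) (h2 : s ≤ w*b) :
    ∃ x, a ≤ x ∧ x ≤ b ∧ w*x = s := by
  rcases eq_or_lt_of_le hw with rfl | hw'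
  · exact ⟨a, le_rfl, hab, by linarith⟩
  · refine ⟨s/w, ?_, ?_, by field_simp⟩
    · rw [le_div_iff₀ hw']; linarith
    · rw [div_le_iff₀ hw']; linarith

theorem splitCore {w a b A B s : ℝ} (hw : 0 ≤ w) (hab : a ≤ b) (hAB : A ≤ B)
    (h1 : w*a + A ≤ s) (h2 : s ≤ w*b + B) :
    ∃ x, a ≤ x ∧ x ≤ b ∧ A ≤ s - w*x ∧ s - w*x ≤ B := by
  by_cases h : A ≤ s - w*b
  · exact ⟨b, hab, le_rfl, h, by linarith⟩
  · push_neg at h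
    have hwb : w*a < w*b := by linarith
    have hw' : 0 < w := by nlinarith
    refine ⟨(s-A)/w, ?_, ?_, ?_, ?_⟩
    · rw [le_div_iff₀ hw']; linarith
    · rw [div_le_iff₀ hw']; linarith
    · have : w * ((s-A)/w) = s - A := by field_simp
      rw [this]; linarith
    · have : w * ((s-A)/w) = s - A := by field_simp
      rw [this]; linarith

theorem split3 {w1 w2 w3 a1 b1 a2 b2 a3 b3 s : ℝ} (hw1 : 0 ≤ w1) (hw2 : 0 ≤ w2)
    (hw3 : 0 ≤ w3) (h1 : a1 ≤ b1) (h2 : a2 ≤ b2) (h3 : a3 ≤ b3)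
    (hlo : w1*a1 + w2*a2 + w3*a3 ≤ s) (hhi : s ≤ w1*b1 + w2*b2 + w3*b3) :
    ∃ x1 x2 x3, a1 ≤ x1 ∧ x1 ≤ b1 ∧ a2 ≤ x2 ∧ x2 ≤ b2 ∧ a3 ≤ x3 ∧ x3 ≤ b3 ∧
      w1*x1 + w2*x2 + w3*x3 = s := by
  have hA : w2*a2 + w3*a3 ≤ w2*b2 + w3*b3 := by
    have := mul_le_mul_of_nonneg_left h2 hw2
    have := mul_le_mul_of_nonneg_left h3 hw3
    linarith
  obtain ⟨x1, hx1a, hx1b, hr1, hr2⟩ := splitCore hw1 h1 hA (by linarith) (by linarith)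
  have hA3 : w3*a3 ≤ w3*b3 := mul_le_mul_of_nonneg_left h3 hw3
  obtain ⟨x2, hx2a, hx2b, hs1, hs2⟩ := splitCore (s := s - w1*x1) hw2 h2 hA3 (by linarith) (by linarith)
  obtain ⟨x3, hx3a, hx3b, he⟩ := split1 (s := s - w1*x1 - w2*x2) hw3 h3 (by linarith) (by linarith)
  exact ⟨x1, x2, x3, hx1a, hx1b, hx2a, hx2b, hx3a, hx3b, by linarith⟩

/-! top-coordinate selection for the P-step -/

theorem topSelectP {cn en : ℤ} {α'' β'' t : ℝ}
    (hlt : en + 1 ≤ cn)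
    (hα0 : 0 ≤ α'') (hα1 : α'' ≤ 1) (hβ0 : 0 ≤ β'') (hβ1 : β'' ≤ 1)
    (hUB : t ≤ α''*(cn:ℝ) + (1-α'')*((cn:ℝ)-1))
    (hLB : β''*(en:ℝ) + (1-β'')*((en:ℝ)+1) ≤ t) :
    ∃ αh βh ρ : ℝ, 0 ≤ αh ∧ αh ≤ α'' ∧ 0 ≤ βh ∧ βh ≤ β'' ∧ αh + βh ≤ 1 ∧
      (1-αh-βh ≠ 0 → ((en:ℝ)+1 ≤ ρ ∧ ρ ≤ (cn:ℝ)-1)) ∧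
      αh*(cn:ℝ) + βh*(en:ℝ) + (1-αh-βh)*ρ = t := by
  by_cases hmid : en + 2 ≤ cn
  · have hmid' : (en:ℝ) + 2 ≤ (cn:ℝ) := by exact_mod_cast hmid
    have h00 : β''*(en:ℝ) + (1-β'')*((en:ℝ)+1) ≤ β''*(en:ℝ) + (1-β'')*((cn:ℝ)-1) := by
      nlinarith [mul_le_mul_of_nonneg_left (by linarith : (en:ℝ)+1 ≤ (cn:ℝ)-1)
        (by linarith : (0:ℝ) ≤ 1-β'')]
    have h11 : α''*(cn:ℝ) + (1-α'')*((en:ℝ)+1) ≤ α''*(cn:ℝ) + (1-α'')*((cn:ℝ)-1) := by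
      nlinarith [mul_le_mul_of_nonneg_left (by linarith : (en:ℝ)+1 ≤ (cn:ℝ)-1)
        (by linarith : (0:ℝ) ≤ 1-α'')]
    obtain ⟨θ, hθ0, hθ1, hloθ, hhiθ⟩ := pick_theta h00 h11 hLB hUB
    have hαt : θ*α'' ≤ α'' := mul_le_of_le_one_left hα0 hθ1
    have hβt : (1-θ)*β'' ≤ β'' := mul_le_of_le_one_left hβ0 (by linarith)
    have hαt0 : 0 ≤ θ*α'' := mul_nonneg hθ0 hα0
    have hβt0 : 0 ≤ (1-θ)*β'' := mul_nonneg (by linarith) hβ0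
    have hw : 0 ≤ 1 - θ*α'' - (1-θ)*β'' := by nlinarith
    have eqlo : (1-θ)*(β''*(en:ℝ) + (1-β'')*((en:ℝ)+1)) + θ*(α''*(cn:ℝ) + (1-α'')*((en:ℝ)+1))
        = (1 - θ*α'' - (1-θ)*β'')*((en:ℝ)+1) + ((θ*α'')*(cn:ℝ) + ((1-θ)*β'')*(en:ℝ)) := by
      ring
    have eqhi : (1-θ)*(β''*(en:ℝ) + (1-β'')*((cn:ℝ)-1)) + θ*(α''*(cn:ℝ) + (1-α'')*((cn:ℝ)-1))
        = (1 - θ*α'' - (1-θ)*β'')*((cn:ℝ)-1) + ((θ*α'')*(cn:ℝ) + ((1-θ)*β'')*(en:ℝ)) := by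
      ring
    obtain ⟨ρ, hρa, hρb, hρe⟩ := split1 (w := 1 - θ*α'' - (1-θ)*β'')
      (a := (en:ℝ)+1) (b := (cn:ℝ)-1) (s := t - (θ*α'')*(cn:ℝ) - ((1-θ)*β'')*(en:ℝ))
      hw (by linarith) (by linarith [hloθ, eqlo]) (by linarith [hhiθ, eqhi])
    exact ⟨θ*α'', (1-θ)*β'', ρ, hαt0, hαt, hβt0, hβt,
      by linarith, fun _ => ⟨hρa, hρb⟩, by linarith⟩
  · have hcn : cn = en + 1 := by omega
    have hcast : (cn:ℝ) = (en:ℝ) + 1 := by exact_mod_cast hcn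
    have e1 : α''*(cn:ℝ) + (1-α'')*((cn:ℝ)-1) = (cn:ℝ) - 1 + α'' := by ring
    have e2 : β''*(en:ℝ) + (1-β'')*((en:ℝ)+1) = (en:ℝ) + 1 - β'' := by ring
    have hUB' : t ≤ (en:ℝ) + α'' := by rw [e1, hcast] at hUB; linarith
    have hLB' : (en:ℝ) + 1 - β'' ≤ t := by rw [e2] at hLB; linarith
    refine ⟨t - (en:ℝ), (cn:ℝ) - t, 0, by linarith, by linarith,
      by rw [hcast]; linarith, by rw [hcast]; linarith,
      by rw [hcast]; linarith, ?_, by rw [hcast]; ring⟩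
    intro h
    exact absurd (by rw [hcast]; ring) h

/-! top-coordinate selection for the G-step -/

theorem topSelectG {cm em um : ℤ} {α β α' β' t : ℝ}
    (hcm0 : 0 ≤ cm) (hcmu : cm ≤ um) (hem0 : 0 ≤ em) (hemu : em ≤ um)
    (hα : 0 ≤ α) (hβ : 0 ≤ β) (hαβ : α + β ≤ 1)
    (hα'0 : 0 ≤ α') (hα'α : α' ≤ α) (hβ'0 : 0 ≤ β') (hβ'β : β' ≤ β)
    (hg1 : α - α' ≠ 0 → 1 ≤ cm) (hg2 : β - β' ≠ 0 → em + 1 ≤ um)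
    (hUB : t ≤ α'*(cm:ℝ) + (α-α')*((cm:ℝ)-1) + (1-α)*(um:ℝ))
    (hLB : β'*(em:ℝ) + (β-β')*((em:ℝ)+1) ≤ t) :
    ∃ αt βt σ τ ρ : ℝ,
      0 ≤ αt ∧ αt ≤ α' ∧ 0 ≤ βt ∧ βt ≤ β' ∧
      (α - αt ≠ 0 → 0 ≤ σ ∧ σ ≤ (cm:ℝ)-1) ∧
      (β - βt ≠ 0 → (em:ℝ)+1 ≤ τ ∧ τ ≤ (um:ℝ)) ∧
      0 ≤ ρ ∧ ρ ≤ (um:ℝ) ∧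
      αt*(cm:ℝ) + (α-αt)*σ + βt*(em:ℝ) + (β-βt)*τ + (1-α-β)*ρ = t := by
  have hum0 : (0:ℝ) ≤ (um:ℝ) := by exact_mod_cast le_trans hem0 hemu
  have hemu' : (em:ℝ) ≤ (um:ℝ) := by exact_mod_cast hemu
  by_cases hc1 : 1 ≤ cm
  · have hc1' : (1:ℝ) ≤ (cm:ℝ) := by exact_mod_cast hc1
    by_cases he1 : em + 1 ≤ um
    · -- case TT
      have he1' : (em:ℝ) + 1 ≤ (um:ℝ) := by exact_mod_cast he1
      have h00 : β'*(em:ℝ) + (β-β')*((em:ℝ)+1) ≤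
          α*((cm:ℝ)-1) + β'*(em:ℝ) + (β-β')*(um:ℝ) + (1-α-β)*(um:ℝ) := by
        nlinarith [mul_le_mul_of_nonneg_left he1' (by linarith : (0:ℝ) ≤ β-β'),
          mul_nonneg hα (by linarith : (0:ℝ) ≤ (cm:ℝ)-1),
          mul_nonneg (by linarith : (0:ℝ) ≤ 1-α-β) hum0]
      have h11 : α'*(cm:ℝ) + β*((em:ℝ)+1) ≤
          α'*(cm:ℝ) + (α-α')*((cm:ℝ)-1) + β*(um:ℝ) + (1-α-β)*(um:ℝ) := by
        nlinarith [mul_le_mul_of_nonneg_left he1' hβ,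
          mul_nonneg (by linarith : (0:ℝ) ≤ α-α') (by linarith : (0:ℝ) ≤ (cm:ℝ)-1),
          mul_nonneg (by linarith : (0:ℝ) ≤ 1-α-β) hum0]
      have h1 : t ≤ α'*(cm:ℝ) + (α-α')*((cm:ℝ)-1) + β*(um:ℝ) + (1-α-β)*(um:ℝ) := by
        have e3 : (1-α)*(um:ℝ) = β*(um:ℝ) + (1-α-β)*(um:ℝ) := by ring
        linarith [hUB]
      obtain ⟨θ, hθ0, hθ1, hloθ, hhiθ⟩ := pick_theta h00 h11 hLB h1
      have hαt : θ*α' ≤ α' := mul_le_of_le_one_left hα'0 hθ1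
      have hβt : (1-θ)*β' ≤ β' := mul_le_of_le_one_left hβ'0 (by linarith)
      have hαt0 : 0 ≤ θ*α' := mul_nonneg hθ0 hα'0
      have hβt0 : 0 ≤ (1-θ)*β' := mul_nonneg (by linarith) hβ'0
      have eqlo : (1-θ)*(β'*(em:ℝ) + (β-β')*((em:ℝ)+1)) + θ*(α'*(cm:ℝ) + β*((em:ℝ)+1))
          = (α - θ*α')*0 + (β - (1-θ)*β')*((em:ℝ)+1) + (1-α-β)*0
            + ((θ*α')*(cm:ℝ) + ((1-θ)*β')*(em:ℝ)) := by ring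
      have eqhi : (1-θ)*(α*((cm:ℝ)-1) + β'*(em:ℝ) + (β-β')*(um:ℝ) + (1-α-β)*(um:ℝ))
            + θ*(α'*(cm:ℝ) + (α-α')*((cm:ℝ)-1) + β*(um:ℝ) + (1-α-β)*(um:ℝ))
          = (α - θ*α')*((cm:ℝ)-1) + (β - (1-θ)*β')*(um:ℝ) + (1-α-β)*(um:ℝ)
            + ((θ*α')*(cm:ℝ) + ((1-θ)*β')*(em:ℝ)) := by ring
      obtain ⟨σ, τ, ρ, hσa, hσb, hτa, hτb, hρa, hρb, heq⟩ :=
        split3 (w1 := α - θ*α') (w2 := β - (1-θ)*β') (w3 := 1-α-β)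
          (a1 := 0) (b1 := (cm:ℝ)-1) (a2 := (em:ℝ)+1) (b2 := (um:ℝ))
          (a3 := 0) (b3 := (um:ℝ))
          (s := t - (θ*α')*(cm:ℝ) - ((1-θ)*β')*(em:ℝ))
          (by linarith) (by linarith) (by linarith) (by linarith) he1' hum0
          (by linarith [hloθ, eqlo]) (by linarith [hhiθ, eqhi])
      exact ⟨θ*α', (1-θ)*β', σ, τ, ρ, hαt0, hαt, hβt0, hβt,
        fun _ => ⟨hσa, hσb⟩, fun _ => ⟨hτa, hτb⟩, hρa, hρb, by linarith⟩
    · -- case TF : em = um, β' = β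
      obtain rfl : em = um := by omega
      obtain rfl : β = β' := by
        have h : β - β' = 0 := by by_contra h; exact absurd (hg2 h) he1
        linarith
      have h00 : β*(em:ℝ) ≤ α*((cm:ℝ)-1) + β*(em:ℝ) + (1-α-β)*(em:ℝ) := by
        nlinarith [mul_nonneg hα (by linarith : (0:ℝ) ≤ (cm:ℝ)-1),
          mul_nonneg (by linarith : (0:ℝ) ≤ 1-α-β) hum0]
      have h11 : α'*(cm:ℝ) + β*(em:ℝ) ≤
          α'*(cm:ℝ) + (α-α')*((cm:ℝ)-1) + β*(em:ℝ) + (1-α-β)*(em:ℝ) := by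
        nlinarith [mul_nonneg (by linarith : (0:ℝ) ≤ α-α') (by linarith : (0:ℝ) ≤ (cm:ℝ)-1),
          mul_nonneg (by linarith : (0:ℝ) ≤ 1-α-β) hum0]
      have h0 : β*(em:ℝ) ≤ t := by
        have e2 : β*(em:ℝ) + (β-β)*((em:ℝ)+1) = β*(em:ℝ) := by ring
        rw [e2] at hLB; exact hLB
      have h1 : t ≤ α'*(cm:ℝ) + (α-α')*((cm:ℝ)-1) + β*(em:ℝ) + (1-α-β)*(em:ℝ) := by
        have e3 : (1-α)*(em:ℝ) = β*(em:ℝ) + (1-α-β)*(em:ℝ) := by ring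
        linarith [hUB]
      obtain ⟨θ, hθ0, hθ1, hloθ, hhiθ⟩ := pick_theta h00 h11 h0 h1
      have hαt : θ*α' ≤ α' := mul_le_of_le_one_left hα'0 hθ1
      have hαt0 : 0 ≤ θ*α' := mul_nonneg hθ0 hα'0
      have eqlo : (1-θ)*(β*(em:ℝ)) + θ*(α'*(cm:ℝ) + β*(em:ℝ))
          = (α - θ*α')*0 + (β - β)*(em:ℝ) + (1-α-β)*0
            + ((θ*α')*(cm:ℝ) + β*(em:ℝ)) := by ring
      have eqhi : (1-θ)*(α*((cm:ℝ)-1) + β*(em:ℝ) + (1-α-β)*(em:ℝ))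
            + θ*(α'*(cm:ℝ) + (α-α')*((cm:ℝ)-1) + β*(em:ℝ) + (1-α-β)*(em:ℝ))
          = (α - θ*α')*((cm:ℝ)-1) + (β - β)*(em:ℝ) + (1-α-β)*(em:ℝ)
            + ((θ*α')*(cm:ℝ) + β*(em:ℝ)) := by ring
      obtain ⟨σ, τ, ρ, hσa, hσb, hτa, hτb, hρa, hρb, heq⟩ :=
        split3 (w1 := α - θ*α') (w2 := β - β) (w3 := 1-α-β)
          (a1 := 0) (b1 := (cm:ℝ)-1) (a2 := (em:ℝ)) (b2 := (em:ℝ))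
          (a3 := 0) (b3 := (em:ℝ))
          (s := t - (θ*α')*(cm:ℝ) - β*(em:ℝ))
          (by linarith) (by linarith) (by linarith) (by linarith) le_rfl
          (by exact_mod_cast hem0)
          (by linarith [hloθ, eqlo]) (by linarith [hhiθ, eqhi])
      exact ⟨θ*α', β, σ, τ, ρ, hαt0, hαt, hβ, le_rfl,
        fun _ => ⟨hσa, hσb⟩, fun h => absurd (sub_self β) h, hρa,
        by linarith [hρb, hemu'], by linarith⟩
  · -- cm = 0, α' = α
    obtain rfl : cm = 0 := by omega
    obtain rfl : α = α' := by
      have h : α - α' = 0 := by by_contra h; exact absurd (hg1 h) hc1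
      linarith
    have hc0 : ((0:ℤ):ℝ) = (0:ℝ) := by norm_num
    by_cases he1 : em + 1 ≤ um
    · -- case FT
      have he1' : (em:ℝ) + 1 ≤ (um:ℝ) := by exact_mod_cast he1
      have h00 : β'*(em:ℝ) + (β-β')*((em:ℝ)+1) ≤
          β'*(em:ℝ) + (β-β')*(um:ℝ) + (1-α-β)*(um:ℝ) := by
        nlinarith [mul_le_mul_of_nonneg_left he1' (by linarith : (0:ℝ) ≤ β-β'),
          mul_nonneg (by linarith : (0:ℝ) ≤ 1-α-β) hum0]
      have h11 : β*((em:ℝ)+1) ≤ β*(um:ℝ) + (1-α-β)*(um:ℝ) := by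
        nlinarith [mul_le_mul_of_nonneg_left he1' hβ,
          mul_nonneg (by linarith : (0:ℝ) ≤ 1-α-β) hum0]
      have h1 : t ≤ β*(um:ℝ) + (1-α-β)*(um:ℝ) := by
        rw [hc0] at hUB
        have e3 : (1-α)*(um:ℝ) = β*(um:ℝ) + (1-α-β)*(um:ℝ) := by ring
        linarith [hUB]
      obtain ⟨θ, hθ0, hθ1, hloθ, hhiθ⟩ := pick_theta h00 h11 hLB h1
      have hβt : (1-θ)*β' ≤ β' := mul_le_of_le_one_left hβ'0 (by linarith)
      have hβt0 : 0 ≤ (1-θ)*β' := mul_nonneg (by linarith) hβ'0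
      have eqlo : (1-θ)*(β'*(em:ℝ) + (β-β')*((em:ℝ)+1)) + θ*(β*((em:ℝ)+1))
          = (α - α)*0 + (β - (1-θ)*β')*((em:ℝ)+1) + (1-α-β)*0
            + (α*((0:ℤ):ℝ) + ((1-θ)*β')*(em:ℝ)) := by rw [hc0]; ring
      have eqhi : (1-θ)*(β'*(em:ℝ) + (β-β')*(um:ℝ) + (1-α-β)*(um:ℝ))
            + θ*(β*(um:ℝ) + (1-α-β)*(um:ℝ))
          = (α - α)*0 + (β - (1-θ)*β')*(um:ℝ) + (1-α-β)*(um:ℝ)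
            + (α*((0:ℤ):ℝ) + ((1-θ)*β')*(em:ℝ)) := by rw [hc0]; ring
      obtain ⟨σ, τ, ρ, hσa, hσb, hτa, hτb, hρa, hρb, heq⟩ :=
        split3 (w1 := α - α) (w2 := β - (1-θ)*β') (w3 := 1-α-β)
          (a1 := 0) (b1 := 0) (a2 := (em:ℝ)+1) (b2 := (um:ℝ))
          (a3 := 0) (b3 := (um:ℝ))
          (s := t - α*((0:ℤ):ℝ) - ((1-θ)*β')*(em:ℝ))
          (by linarith) (by linarith) (by linarith) le_rfl he1' hum0
          (by linarith [hloθ, eqlo]) (by linarith [hhiθ, eqhi])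
      exact ⟨α, (1-θ)*β', σ, τ, ρ, hα, le_rfl, hβt0, hβt,
        fun h => absurd (sub_self α) h, fun _ => ⟨hτa, hτb⟩, hρa, hρb, by linarith⟩
    · -- case FF
      obtain rfl : em = um := by omega
      obtain rfl : β = β' := by
        have h : β - β' = 0 := by by_contra h; exact absurd (hg2 h) he1
        linarith
      have hw3 : 0 ≤ 1-α-β := by linarith
      have hLB' : β*(em:ℝ) ≤ t := by
        have e2 : β*(em:ℝ) + (β-β)*((em:ℝ)+1) = β*(em:ℝ) := by ring
        rw [e2] at hLB; exact hLB
      have hUB' : t ≤ β*(em:ℝ) + (1-α-β)*(em:ℝ) := by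
        rw [hc0] at hUB
        have e3 : (1-α)*(em:ℝ) = β*(em:ℝ) + (1-α-β)*(em:ℝ) := by ring
        linarith [hUB]
      obtain ⟨ρ, hρa, hρb, hρe⟩ := split1 (w := 1-α-β) (a := 0) (b := (em:ℝ))
        (s := t - β*(em:ℝ)) hw3 (by exact_mod_cast hem0) (by linarith) (by linarith)
      refine ⟨α, β, 0, (em:ℝ), ρ, hα, le_rfl, hβ, le_rfl,
        fun h => absurd (sub_self α) h, fun h => absurd (sub_self β) h, hρa,
        by linarith [hemu'], ?_⟩
      rw [hc0]
      linarith [hρe]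

/-! the joint induction -/

def GS (m : ℕ) : Prop :=
  ∀ u c e : Fin m → ℤ, c ∈ SKBox u → e ∈ SKBox u →
  ∀ α β : ℝ, 0 ≤ α → 0 ≤ β → α + β ≤ 1 → ∀ p : Fin m → ℝ,
  (∃ d ∈ SKDH u c, ∃ f ∈ SKFH u, p = α • d + (1-α) • f) →
  (∃ v ∈ SKUH u e, ∃ f ∈ SKFH u, p = β • v + (1-β) • f) →
  ∃ d ∈ SKDH u c, ∃ v ∈ SKUH u e, ∃ f ∈ SKFH u, p = α • d + β • v + (1-α-β) • f

def PS (m : ℕ) : Prop :=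
  ∀ u c e : Fin m → ℤ, c ∈ SKBox u → e ∈ SKBox u → SKle e c →
  ∀ p : Fin m → ℝ, p ∈ SKDH u c → p ∈ SKUH u e → p ∈ SKIH u e c

theorem GP_zero : GS 0 ∧ PS 0 := by
  have huniq : ∀ x y : Fin 0 → ℝ, x = y := fun x y => funext fun i => i.elim0
  constructor
  · intro u c e hc he α β hα hβ hαβ p _ _
    exact ⟨toReal c, mem_SKDH_self hc, toReal e, mem_SKUH_self he, toReal c,
      mem_SKFH_self hc, huniq _ _⟩
  · intro u c e hc he hec p _ _
    have : toReal e ∈ SKIH u e c := subset_convexHull ℝ _ ⟨e, ⟨he, SKle_refl e, hec⟩, rfl⟩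
    exact (huniq p (toReal e)) ▸ this

theorem GP_succ (m : ℕ) (Gm : GS m) (Pm : PS m) : GS (m+1) ∧ PS (m+1) := by
  constructor
  · -- G-step
    intro u c e hc he α β hα hβ hαβ p hD hU
    obtain ⟨d, hd, f1, hf1, hp1⟩ := hD
    obtain ⟨v, hv, f2, hf2, hp2⟩ := hU
    obtain ⟨μ, hμ0, hμ1, d1, hd1, d2, hd2, ρd, hρd0, hρdg, hdeq⟩ := Dside hc hd
    obtain ⟨ν, hν0, hν1, v1, hv1, v2, hv2, τv, hτvu, hτvg, hveq⟩ := Uside he hv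
    obtain ⟨hf1i, hf1l0, hf1lu⟩ := Fside hf1
    obtain ⟨hf2i, hf2l0, hf2lu⟩ := Fside hf2
    -- last coordinate equations
    have hdlast : d (Fin.last m) = μ*((c (Fin.last m) : ℤ):ℝ) + (1-μ)*ρd := by
      rw [hdeq]
      simp [Pi.add_apply, Pi.smul_apply, smul_eq_mul, Fin.snoc_last]
    have hvlast : v (Fin.last m) = ν*((e (Fin.last m) : ℤ):ℝ) + (1-ν)*τv := by
      rw [hveq]
      simp [Pi.add_apply, Pi.smul_apply, smul_eq_mul, Fin.snoc_last]
    have hplast1 : p (Fin.last m) = α*(μ*((c (Fin.last m) : ℤ):ℝ) + (1-μ)*ρd) + (1-α)*(f1 (Fin.last m)) := by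
      rw [hp1]
      simp [Pi.add_apply, Pi.smul_apply, smul_eq_mul, hdlast]
    have hplast2 : p (Fin.last m) = β*(ν*((e (Fin.last m) : ℤ):ℝ) + (1-ν)*τv) + (1-β)*(f2 (Fin.last m)) := by
      rw [hp2]
      simp [Pi.add_apply, Pi.smul_apply, smul_eq_mul, hvlast]
    -- init equations
    have e1 : Fin.init p = α • Fin.init d + (1-α) • Fin.init f1 := by
      rw [hp1, init_combo]
    have e2 : Fin.init d = μ • d1 + (1-μ) • d2 := by
      rw [hdeq, init_combo, Fin.init_snoc, Fin.init_snoc]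
    have e1' : Fin.init p = β • Fin.init v + (1-β) • Fin.init f2 := by
      rw [hp2, init_combo]
    have e2' : Fin.init v = ν • v1 + (1-ν) • v2 := by
      rw [hveq, init_combo, Fin.init_snoc, Fin.init_snoc]
    obtain ⟨fd, hfd, c3⟩ := combo2 (convex_convexHull ℝ _)
      (mul_nonneg hα (by linarith : (0:ℝ) ≤ 1-μ)) (by linarith : (0:ℝ) ≤ 1-α)
      hd2 (fun _ => hf1i)
    obtain ⟨fv, hfv, c3'⟩ := combo2 (convex_convexHull ℝ _)
      (mul_nonneg hβ (by linarith : (0:ℝ) ≤ 1-ν)) (by linarith : (0:ℝ) ≤ 1-β)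
      hv2 (fun _ => hf2i)
    have hinit1 : Fin.init p = (α*μ) • d1 + (1-α*μ) • fd := by
      funext i
      have h1 := congrFun e1 i
      have h2 := congrFun e2 i
      have h3 := congrFun c3 i
      simp only [Pi.add_apply, Pi.smul_apply, smul_eq_mul] at h1 h2 h3 ⊢
      linear_combination h1 + α * h2 + h3
    have hinit2 : Fin.init p = (β*ν) • v1 + (1-β*ν) • fv := by
      funext i
      have h1 := congrFun e1' i
      have h2 := congrFun e2' i
      have h3 := congrFun c3' i
      simp only [Pi.add_apply, Pi.smul_apply, smul_eq_mul] at h1 h2 h3 ⊢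
      linear_combination h1 + β * h2 + h3
    have hαμα : α*μ ≤ α := mul_le_of_le_one_right hα hμ1
    have hβνβ : β*ν ≤ β := mul_le_of_le_one_right hβ hν1
    obtain ⟨D, hD', V, hV', W, hW', eG⟩ := Gm (Fin.init u) (Fin.init c) (Fin.init e)
      (box_init hc) (box_init he) (α*μ) (β*ν) (mul_nonneg hα hμ0) (mul_nonneg hβ hν0)
      (by linarith) (Fin.init p) ⟨d1, hd1, fd, hfd, hinit1⟩ ⟨v1, hv1, fv, hfv, hinit2⟩
    -- bounds for selection
    have hUB : p (Fin.last m) ≤ (α*μ)*((c (Fin.last m) : ℤ):ℝ) + (α-α*μ)*(((c (Fin.last m) : ℤ):ℝ)-1) + (1-α)*((u (Fin.last m) : ℤ):ℝ) := by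
      have hb1 : (α*(1-μ))*ρd ≤ (α-α*μ)*(((c (Fin.last m) : ℤ):ℝ)-1) := by
        by_cases h : 1-μ = 0
        · have hz : α*(1-μ) = 0 := by rw [h, mul_zero]
          have hz' : α-α*μ = 0 := by nlinarith [hz]
          rw [hz, hz', zero_mul, zero_mul]
        · have := hρdg h
          have hco : α - α*μ = α*(1-μ) := by ring
          rw [hco]
          exact mul_le_mul_of_nonneg_left this (mul_nonneg hα (by linarith))
      have hb2 : (1-α)*(f1 (Fin.last m)) ≤ (1-α)*((u (Fin.last m) : ℤ):ℝ) :=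
        mul_le_mul_of_nonneg_left hf1lu (by linarith)
      linarith [hplast1, hb1, hb2]
    have hLB : (β*ν)*((e (Fin.last m) : ℤ):ℝ) + (β-β*ν)*(((e (Fin.last m) : ℤ):ℝ)+1) ≤ p (Fin.last m) := by
      have hb1 : (β-β*ν)*(((e (Fin.last m) : ℤ):ℝ)+1) ≤ (β*(1-ν))*τv := by
        by_cases h : 1-ν = 0
        · have hz : β*(1-ν) = 0 := by rw [h, mul_zero]
          have hz' : β-β*ν = 0 := by nlinarith [hz]
          rw [hz, hz', zero_mul, zero_mul]
        · have := hτvg h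
          have hco : β - β*ν = β*(1-ν) := by ring
          rw [hco]
          exact mul_le_mul_of_nonneg_left this (mul_nonneg hβ (by linarith))
      have hb2 : 0 ≤ (1-β)*(f2 (Fin.last m)) :=
        mul_nonneg (by linarith) hf2l0
      linarith [hplast2, hb1, hb2]
    have hg1 : α - α*μ ≠ 0 → 1 ≤ c (Fin.last m) := by
      intro h
      have h' : 1-μ ≠ 0 := by
        intro hz; apply h; rw [show α - α*μ = α*(1-μ) by ring, hz, mul_zero]
      have := hρdg h'
      have : (1:ℝ) ≤ ((c (Fin.last m) : ℤ):ℝ) := by linarith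
      exact_mod_cast this
    have hg2 : β - β*ν ≠ 0 → e (Fin.last m) + 1 ≤ u (Fin.last m) := by
      intro h
      have h' : 1-ν ≠ 0 := by
        intro hz; apply h; rw [show β - β*ν = β*(1-ν) by ring, hz, mul_zero]
      have h1 := hτvg h'
      have : ((e (Fin.last m) : ℤ):ℝ) + 1 ≤ ((u (Fin.last m) : ℤ):ℝ) := by linarith
      exact_mod_cast this
    obtain ⟨αt, βt, σ, τ, ρ, hαt0, hαtle, hβt0, hβtle, hgσ, hgτ, hρ0, hρu, heqt⟩ :=
      topSelectG (hc (Fin.last m)).1 (hc (Fin.last m)).2 (he (Fin.last m)).1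
        (he (Fin.last m)).2 hα hβ hαβ (mul_nonneg hα hμ0) hαμα (mul_nonneg hβ hν0) hβνβ
        hg1 hg2 hUB hLB
    -- fold the inner representation
    obtain ⟨W1, hW1, cf1⟩ := combo2 (convex_convexHull ℝ _)
      (by linarith : (0:ℝ) ≤ α*μ - αt) (by linarith : (0:ℝ) ≤ β*ν - βt)
      (SKDH_subset_FH _ _ hD') (fun _ => SKUH_subset_FH _ _ hV')
    obtain ⟨W2, hW2, cf2⟩ := combo2 (convex_convexHull ℝ _)
      (by linarith : (0:ℝ) ≤ (α*μ - αt) + (β*ν - βt)) (by linarith : (0:ℝ) ≤ 1-α*μ-β*ν)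
      hW1 (fun _ => hW')
    -- assemble the three final points
    obtain ⟨dd, hdd, cD⟩ := combo2 (C := SKDH u c) (convex_convexHull ℝ _)
      hαt0 (by linarith : (0:ℝ) ≤ α - αt) (DH_intro_top hc hD')
      (fun h => DH_intro_low hc hW2 (hgσ h).1 (hgσ h).2)
    obtain ⟨vv, hvv, cV⟩ := combo2 (C := SKUH u e) (convex_convexHull ℝ _)
      hβt0 (by linarith : (0:ℝ) ≤ β - βt) (UH_intro_bot he hV')
      (fun h => UH_intro_high he hW2 (hgτ h).1 (hgτ h).2)
    refine ⟨dd, hdd, vv, hvv, Fin.snoc W2 ρ, FH_intro hW2 hρ0 hρu, ?_⟩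
    funext j
    refine Fin.lastCases ?_ (fun i => ?_) j
    · have hcD := congrFun cD (Fin.last m)
      have hcV := congrFun cV (Fin.last m)
      simp only [Pi.add_apply, Pi.smul_apply, smul_eq_mul, Fin.snoc_last] at hcD hcV ⊢
      linear_combination hcD + hcV - heqt
    · have hcD := congrFun cD (Fin.castSucc i)
      have hcV := congrFun cV (Fin.castSucc i)
      have heG := congrFun eG i
      have hcf1 := congrFun cf1 i
      have hcf2 := congrFun cf2 i
      have hip : Fin.init p i = p (Fin.castSucc i) := rfl
      simp only [Pi.add_apply, Pi.smul_apply, smul_eq_mul, Fin.snoc_castSucc] at hcD hcV heG hcf1 hcf2 ⊢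
      rw [hip] at heG
      linear_combination heG + hcD + hcV + hcf1 + hcf2
  · -- P-step
    intro u c e hc he hec p hpD hpU
    obtain ⟨μ, hμ0, hμ1, d1, hd1, d2, hd2, ρd, hρd0, hρdg, hdeq⟩ := Dside hc hpD
    obtain ⟨ν, hν0, hν1, v1, hv1, v2, hv2, τv, hτvu, hτvg, hveq⟩ := Uside he hpU
    have hplast1 : p (Fin.last m) = μ*((c (Fin.last m) : ℤ):ℝ) + (1-μ)*ρd := by
      rw [hdeq]
      simp [Pi.add_apply, Pi.smul_apply, smul_eq_mul, Fin.snoc_last]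
    have hplast2 : p (Fin.last m) = ν*((e (Fin.last m) : ℤ):ℝ) + (1-ν)*τv := by
      rw [hveq]
      simp [Pi.add_apply, Pi.smul_apply, smul_eq_mul, Fin.snoc_last]
    have e2 : Fin.init p = μ • d1 + (1-μ) • d2 := by
      rw [hdeq, init_combo, Fin.init_snoc, Fin.init_snoc]
    have e2' : Fin.init p = ν • v1 + (1-ν) • v2 := by
      rw [hveq, init_combo, Fin.init_snoc, Fin.init_snoc]
    have hUBp : p (Fin.last m) ≤ μ*((c (Fin.last m) : ℤ):ℝ) + (1-μ)*(((c (Fin.last m) : ℤ):ℝ)-1) := by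
      have : (1-μ)*ρd ≤ (1-μ)*(((c (Fin.last m) : ℤ):ℝ)-1) := by
        by_cases h : 1-μ = 0
        · rw [h, zero_mul, zero_mul]
        · exact mul_le_mul_of_nonneg_left (hρdg h) (by linarith)
      linarith [hplast1]
    have hLBp : ν*((e (Fin.last m) : ℤ):ℝ) + (1-ν)*(((e (Fin.last m) : ℤ):ℝ)+1) ≤ p (Fin.last m) := by
      have : (1-ν)*(((e (Fin.last m) : ℤ):ℝ)+1) ≤ (1-ν)*τv := by
        by_cases h : 1-ν = 0
        · rw [h, zero_mul, zero_mul]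
        · exact mul_le_mul_of_nonneg_left (hτvg h) (by linarith)
      linarith [hplast2]
    rcases eq_or_lt_of_le (SKle_last_mono hec) with heql | hltl
    · -- equal top digits
      have heql' : ((e (Fin.last m) : ℤ):ℝ) = ((c (Fin.last m) : ℤ):ℝ) := by exact_mod_cast heql
      have hUBp' := hUBp
      rw [← heql'] at hUBp'
      have hA : 1-μ = 0 ∧ 1-ν = 0 := by
        constructor <;> linarith [hUBp', hLBp]
      have hμ' : μ = 1 := by linarith [hA.1]
      have hν' : ν = 1 := by linarith [hA.2]
      have hpd : p = (Fin.snoc d1 ((c (Fin.last m) : ℤ):ℝ) : Fin (m+1) → ℝ) := by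
        rw [hdeq, hμ']; simp
      have hpv : p = (Fin.snoc v1 ((e (Fin.last m) : ℤ):ℝ) : Fin (m+1) → ℝ) := by
        rw [hveq, hν']; simp
      have hinitd : Fin.init p = d1 := by rw [hpd, Fin.init_snoc]
      have hinitv : Fin.init p = v1 := by rw [hpv, Fin.init_snoc]
      have hecinit : SKle (Fin.init e) (Fin.init c) := by
        rcases SKle_split.mp hec with ⟨_, h⟩ | h
        · exact h
        · omega
      have hIH := Pm (Fin.init u) (Fin.init c) (Fin.init e) (box_init hc) (box_init he)
        hecinit (Fin.init p) (hinitd ▸ hd1) (hinitv ▸ hv1)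
      have hmem := IH_intro_eq hc heql hIH
      have hp' : p = (Fin.snoc (Fin.init p) ((c (Fin.last m) : ℤ):ℝ) : Fin (m+1) → ℝ) := by
        rw [hpd, Fin.init_snoc]
      rwa [← hp'] at hmem
    · -- e last < c last
      obtain ⟨αh, βh, ρ, hαh0, hαhle, hβh0, hβhle, hsum, hguard, heqt⟩ :=
        topSelectP (by omega) hμ0 hμ1 hν0 hν1 hUBp hLBp
      -- inputs for Gm
      obtain ⟨fd, hfd, cfold1⟩ := combo2 (convex_convexHull ℝ _)
        (by linarith : (0:ℝ) ≤ μ - αh) (by linarith : (0:ℝ) ≤ 1-μ)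
        (SKDH_subset_FH _ _ hd1) (fun _ => hd2)
      obtain ⟨fv, hfv, cfold2⟩ := combo2 (convex_convexHull ℝ _)
        (by linarith : (0:ℝ) ≤ ν - βh) (by linarith : (0:ℝ) ≤ 1-ν)
        (SKUH_subset_FH _ _ hv1) (fun _ => hv2)
      have hinput1 : Fin.init p = αh • d1 + (1-αh) • fd := by
        funext i
        have h1 := congrFun e2 i
        have h2 := congrFun cfold1 i
        simp only [Pi.add_apply, Pi.smul_apply, smul_eq_mul] at h1 h2 ⊢
        linear_combination h1 + h2
      have hinput2 : Fin.init p = βh • v1 + (1-βh) • fv := by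
        funext i
        have h1 := congrFun e2' i
        have h2 := congrFun cfold2 i
        simp only [Pi.add_apply, Pi.smul_apply, smul_eq_mul] at h1 h2 ⊢
        linear_combination h1 + h2
      obtain ⟨D, hD', V, hV', W, hW', eG⟩ := Gm (Fin.init u) (Fin.init c) (Fin.init e)
        (box_init hc) (box_init he) αh βh hαh0 hβh0 hsum (Fin.init p)
        ⟨d1, hd1, fd, hfd, hinput1⟩ ⟨v1, hv1, fv, hfv, hinput2⟩
      -- assemble inside the interval hull
      obtain ⟨z1, hz1, cz1⟩ := combo2 (C := SKIH u e c) (convex_convexHull ℝ _)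
        hαh0 hβh0 (IH_intro_c hc hltl hD') (fun _ => IH_intro_e he hltl hV')
      obtain ⟨z2, hz2, cz2⟩ := combo2 (C := SKIH u e c) (convex_convexHull ℝ _)
        (by linarith : (0:ℝ) ≤ αh + βh) (by linarith : (0:ℝ) ≤ 1-αh-βh)
        hz1 (fun h => IH_intro_mid hc he hW' (hguard h).1 (hguard h).2)
      have hfinal : p = ((αh+βh) + (1-αh-βh)) • z2 := by
        rw [← cz2, ← cz1]
        funext j
        refine Fin.lastCases ?_ (fun i => ?_) j
        · simp only [Pi.add_apply, Pi.smul_apply, smul_eq_mul, Fin.snoc_last]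
          linarith [heqt]
        · have heG := congrFun eG i
          have hip : Fin.init p i = p (Fin.castSucc i) := rfl
          simp only [Pi.add_apply, Pi.smul_apply, smul_eq_mul, Fin.snoc_castSucc] at heG ⊢
          rw [hip] at heG
          linarith [heG]
      have : ((αh+βh) + (1-αh-βh)) = 1 := by ring
      rw [this, one_smul] at hfinal
      rwa [hfinal]

theorem GPmain : ∀ m, GS m ∧ PS m := by
  intro m
  induction m with
  | zero => exact GP_zero
  | succ m ih => exact GP_succ m ih.1 ih.2

/-! monotonicity of superincreasing knapsack sums with respect to SKle -/

theorem si_mono {n : ℕ} {a u : Fin n → ℤ} (ha : ∀ i, 0 < a i)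
    (hsi : ∀ i j : Fin n, (j : ℕ) = (i : ℕ) + 1 →
      ∑ k ∈ Finset.Iic i, a k * u k ≤ a j)
    {x y : Fin n → ℤ} (hx : x ∈ SKBox u) (hy : y ∈ SKBox u) (hxy : SKle x y) :
    ∑ i, a i * x i ≤ ∑ i, a i * y i := by
  rcases hxy with rfl | ⟨j, hj, hk⟩
  · exact le_rfl
  have hsplit : ∑ i ∈ Finset.Iic j, (a i * y i - a i * x i)
      = ∑ i, (a i * y i - a i * x i) := by
    apply Finset.sum_subset (Finset.subset_univ _)
    intro i _ hni
    have hji : j < i := by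
      simp only [Finset.mem_Iic] at hni
      exact lt_of_not_ge hni
    rw [hk i hji]; ring
  have hsum2 : ∑ i ∈ Finset.Iic j, (a i * y i - a i * x i)
      = (a j * y j - a j * x j) + ∑ i ∈ Finset.Iio j, (a i * y i - a i * x i) := by
    rw [← Finset.Iio_insert, Finset.sum_insert (by simp)]
  have hterm : a j ≤ a j * y j - a j * x j := by
    have h1 : (1:ℤ) ≤ y j - x j := by omega
    have := mul_le_mul_of_nonneg_left h1 (le_of_lt (ha j))
    nlinarith
  have hlow : ∀ i ∈ Finset.Iio j, -(a i * u i) ≤ a i * y i - a i * x i := by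
    intro i _
    have h1 : -(u i) ≤ y i - x i := by
      have := (hx i).2; have := (hy i).1; omega
    have := mul_le_mul_of_nonneg_left h1 (le_of_lt (ha i))
    nlinarith
  have hlowsum : -(∑ i ∈ Finset.Iio j, a i * u i)
      ≤ ∑ i ∈ Finset.Iio j, (a i * y i - a i * x i) := by
    rw [← Finset.sum_neg_distrib]
    exact Finset.sum_le_sum hlow
  have hcap : ∑ i ∈ Finset.Iio j, a i * u i ≤ a j := by
    rcases Nat.eq_zero_or_pos (j : ℕ) with h0 | hpos
    · have hempty : Finset.Iio j = ∅ := by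
        ext k
        simp only [Finset.mem_Iio, Finset.notMem_empty, iff_false]
        intro hc
        rw [Fin.lt_def, h0] at hc
        omega
      rw [hempty, Finset.sum_empty]
      exact le_of_lt (ha j)
    · have hjn : (j:ℕ) < n := j.isLt
      set i0 : Fin n := ⟨(j:ℕ) - 1, by omega⟩ with hi0
      have hij : (j:ℕ) = (i0:ℕ) + 1 := by simp [hi0]; omega
      have hcap' := hsi i0 j hij
      have hIeq : Finset.Iic i0 = Finset.Iio j := by
        ext k
        simp only [Finset.mem_Iic, Finset.mem_Iio, Fin.le_def, Fin.lt_def]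
        simp [hi0]
        omega
      rwa [hIeq] at hcap'
  have hpos : 0 ≤ ∑ i, (a i * y i - a i * x i) := by
    rw [← hsplit, hsum2]; linarith
  have hfin : ∑ i, (a i * y i - a i * x i) = ∑ i, a i * y i - ∑ i, a i * x i :=
    Finset.sum_sub_distrib _ _
  linarith

/-! extrema of finite sets under SKle -/

theorem finset_skmax {n : ℕ} (F : Finset (Fin n → ℤ)) (h : F.Nonempty) :
    ∃ c ∈ F, ∀ x ∈ F, SKle x c := by
  classical
  induction F using Finset.induction_on with
  | empty => exact absurd h (by simp)
  | @insert a F hni ih =>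
    rcases F.eq_empty_or_nonempty with rfl | hFne
    · refine ⟨a, Finset.mem_insert_self _ _, ?_⟩
      intro x hx
      simp only [Finset.mem_insert, Finset.notMem_empty, or_false] at hx
      subst hx; exact SKle_refl _
    · obtain ⟨c, hcF, hmax⟩ := ih hFne
      rcases SKle_total c a with hca | hac
      · refine ⟨a, Finset.mem_insert_self _ _, fun x hx => ?_⟩
        rcases Finset.mem_insert.mp hx with rfl | hxF
        · exact SKle_refl _
        · exact SKle_trans (hmax x hxF) hca
      · refine ⟨c, Finset.mem_insert_of_mem hcF, fun x hx => ?_⟩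
        rcases Finset.mem_insert.mp hx with rfl | hxF
        · exact hac
        · exact hmax x hxF

theorem finset_skmin {n : ℕ} (F : Finset (Fin n → ℤ)) (h : F.Nonempty) :
    ∃ e ∈ F, ∀ x ∈ F, SKle e x := by
  classical
  induction F using Finset.induction_on with
  | empty => exact absurd h (by simp)
  | @insert a F hni ih =>
    rcases F.eq_empty_or_nonempty with rfl | hFne
    · refine ⟨a, Finset.mem_insert_self _ _, ?_⟩
      intro x hx
      simp only [Finset.mem_insert, Finset.notMem_empty, or_false] at hx
      subst hx; exact SKle_refl _
    · obtain ⟨e, heF, hmin⟩ := ih hFne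
      rcases SKle_total a e with hae | hea
      · refine ⟨a, Finset.mem_insert_self _ _, fun x hx => ?_⟩
        rcases Finset.mem_insert.mp hx with rfl | hxF
        · exact SKle_refl _
        · exact SKle_trans hae (hmin x hxF)
      · refine ⟨e, Finset.mem_insert_of_mem heF, fun x hx => ?_⟩
        rcases Finset.mem_insert.mp hx with rfl | hxF
        · exact hea
        · exact hmin x hxF

theorem set_skmax {n : ℕ} {S : Set (Fin n → ℤ)} (hfin : S.Finite) (hne : S.Nonempty) :
    ∃ c ∈ S, ∀ x ∈ S, SKle x c := by
  obtain ⟨c, hc, hmax⟩ := finset_skmax hfin.toFinset (hfin.toFinset_nonempty.mpr hne)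
  exact ⟨c, (hfin.mem_toFinset).mp hc, fun x hx => hmax x (hfin.mem_toFinset.mpr hx)⟩

theorem set_skmin {n : ℕ} {S : Set (Fin n → ℤ)} (hfin : S.Finite) (hne : S.Nonempty) :
    ∃ e ∈ S, ∀ x ∈ S, SKle e x := by
  obtain ⟨e, he, hmin⟩ := finset_skmin hfin.toFinset (hfin.toFinset_nonempty.mpr hne)
  exact ⟨e, (hfin.mem_toFinset).mp he, fun x hx => hmin x (hfin.mem_toFinset.mpr hx)⟩

theorem box_finite {n : ℕ} (u : Fin n → ℤ) : (SKBox u).Finite := by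
  apply (Set.finite_Icc (0 : Fin n → ℤ) u).subset
  intro x hx
  rw [Set.mem_Icc]
  exact ⟨fun i => (hx i).1, fun i => (hx i).2⟩

/-- for a `≤`-type and a `≥`-type superincreasing knapsack with nonempty
intersection, the convex hull operator distributes over the intersection. -/
theorem stmt_13 {n : ℕ} (hn : 1 ≤ n)
    (a w u : Fin n → ℤ)
    (ha : ∀ i, 0 < a i) (hw : ∀ i, 0 < w i) (hu : ∀ i, 1 ≤ u i)
    (hsia : ∀ i j : Fin n, (j : ℕ) = (i : ℕ) + 1 →
      ∑ k ∈ Finset.Iic i, a k * u k ≤ a j)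
    (hsiw : ∀ i j : Fin n, (j : ℕ) = (i : ℕ) + 1 →
      ∑ k ∈ Finset.Iic i, w k * u k ≤ w j)
    (b d : ℤ) (hb : 0 < b) (hd : 0 < d)
    (hne : ∃ x : Fin n → ℤ, (∀ i, 0 ≤ x i ∧ x i ≤ u i) ∧
      ∑ i, a i * x i ≤ b ∧ d ≤ ∑ i, w i * x i) :
    convexHull ℝ (toReal ''
        {x : Fin n → ℤ | (∀ i, 0 ≤ x i ∧ x i ≤ u i) ∧
          ∑ i, a i * x i ≤ b ∧ d ≤ ∑ i, w i * x i}) =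
      convexHull ℝ (toReal ''
          {x : Fin n → ℤ | (∀ i, 0 ≤ x i ∧ x i ≤ u i) ∧ ∑ i, a i * x i ≤ b}) ∩
        convexHull ℝ (toReal ''
          {x : Fin n → ℤ | (∀ i, 0 ≤ x i ∧ x i ≤ u i) ∧ d ≤ ∑ i, w i * x i}) := by
  classical
  obtain ⟨z, hzbox, hzab, hzwd⟩ := hne
  have hzbox' : z ∈ SKBox u := hzbox
  have hK1fin : ({x : Fin n → ℤ | (∀ i, 0 ≤ x i ∧ x i ≤ u i) ∧
      ∑ i, a i * x i ≤ b}).Finite := (box_finite u).subset (fun x hx => hx.1)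
  have hK2fin : ({x : Fin n → ℤ | (∀ i, 0 ≤ x i ∧ x i ≤ u i) ∧
      d ≤ ∑ i, w i * x i}).Finite := (box_finite u).subset (fun x hx => hx.1)
  obtain ⟨c, hcK, hcmax⟩ := set_skmax hK1fin ⟨z, hzbox, hzab⟩
  obtain ⟨e, heK, hemin⟩ := set_skmin hK2fin ⟨z, hzbox, hzwd⟩
  have hcbox : c ∈ SKBox u := hcK.1
  have hebox : e ∈ SKBox u := heK.1
  have hK1eq : {x : Fin n → ℤ | (∀ i, 0 ≤ x i ∧ x i ≤ u i) ∧ ∑ i, a i * x i ≤ b}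
      = SKDown u c := by
    ext x
    constructor
    · intro hx
      exact ⟨hx.1, hcmax x hx⟩
    · rintro ⟨hbx, hle⟩
      exact ⟨hbx, le_trans (si_mono ha hsia hbx hcbox hle) hcK.2⟩
  have hK2eq : {x : Fin n → ℤ | (∀ i, 0 ≤ x i ∧ x i ≤ u i) ∧ d ≤ ∑ i, w i * x i}
      = SKUp u e := by
    ext x
    constructor
    · intro hx
      exact ⟨hx.1, hemin x hx⟩
    · rintro ⟨hbx, hle⟩
      exact ⟨hbx, le_trans heK.2 (si_mono hw hsiw hebox hbx hle)⟩
  have hK12eq : {x : Fin n → ℤ | (∀ i, 0 ≤ x i ∧ x i ≤ u i) ∧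
      ∑ i, a i * x i ≤ b ∧ d ≤ ∑ i, w i * x i} = SKIval u e c := by
    ext x
    constructor
    · intro hx
      exact ⟨hx.1, hemin x ⟨hx.1, hx.2.2⟩, hcmax x ⟨hx.1, hx.2.1⟩⟩
    · rintro ⟨hbx, hle1, hle2⟩
      exact ⟨hbx, le_trans (si_mono ha hsia hbx hcbox hle2) hcK.2,
        le_trans heK.2 (si_mono hw hsiw hebox hbx hle1)⟩
  have hec : SKle e c := SKle_trans (hemin z ⟨hzbox, hzwd⟩) (hcmax z ⟨hzbox, hzab⟩)
  apply Set.Subset.antisymm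
  · apply Set.subset_inter
    · exact convexHull_mono (Set.image_mono (fun x hx => ⟨hx.1, hx.2.1⟩))
    · exact convexHull_mono (Set.image_mono (fun x hx => ⟨hx.1, hx.2.2⟩))
  · intro p hp
    have h1 : p ∈ SKDH u c := by
      rw [SKDH, ← hK1eq]; exact hp.1
    have h2 : p ∈ SKUH u e := by
      rw [SKUH, ← hK2eq]; exact hp.2
    have h3 := (GPmain n).2 u c e hcbox hebox hec p h1 h2
    rw [SKIH, ← hK12eq] at h3
    exact h3
end

section
/- Let n ≥ 1, let w_1,…,w_n, u_1,…,u_n be positive integers such that {(w_i,u_i)}_{i=1}^n is superincreasing, and let d be a positive integer with d ≤ ∑_{i=1}^n w_i u_i. Define the minimal packing γ ∈ ℤⁿ by the backward recursion γ_i = u_i − min(u_i, ⌊(∑_{k=1}^n w_k u_k − d − ∑_{k=i+1}^n w_k (u_k − γ_k))/w_i⌋) for i = n, …, 1. Then {x ∈ rect(u) : ∑_{i=1}^n w_i x_i ≥ d} = {x ∈ rect(u) : γ ⪯ x}. -/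
/-- the `≥`-type superincreasing knapsack equals the set of points of
`rect u` that are lexicographically greater than or equal to its minimal packing `γ`. -/
theorem stmt_14 {n : ℕ} (hn : 1 ≤ n)
    (w u : Fin n → ℤ) (hw : ∀ i, 0 < w i) (hu : ∀ i, 1 ≤ u i)
    (hsi : ∀ i j : Fin n, (j : ℕ) = (i : ℕ) + 1 →
      ∑ k ∈ Finset.Iic i, w k * u k ≤ w j)
    (d : ℤ) (hd : 0 < d) (hdle : d ≤ ∑ i, w i * u i)
    (γ : Fin n → ℤ)
    (hγ : ∀ i : Fin n, γ i = u i - min (u i)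
      (((∑ k, w k * u k) - d - ∑ k ∈ Finset.Ioi i, w k * (u k - γ k)).fdiv (w i))) :
    {x : Fin n → ℤ | (∀ i, 0 ≤ x i ∧ x i ≤ u i) ∧ d ≤ ∑ i, w i * x i} =
      {x : Fin n → ℤ | (∀ i, 0 ≤ x i ∧ x i ≤ u i) ∧ lexLe γ x} := by
  classical
  set S : ℤ := ∑ i, w i * u i with hS
  set c : ℤ := S - d with hc
  -- notation
  set T : Fin n → ℤ := fun i => c - ∑ k ∈ Finset.Ioi i, w k * (u k - γ k) with hT
  have hβ : ∀ i, u i - γ i = min (u i) ((T i).fdiv (w i)) := by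
    intro i
    rw [hγ i, sub_sub_cancel]
  -- sum over Ici splits
  have hIci : ∀ (i : Fin n) (f : Fin n → ℤ),
      ∑ k ∈ Finset.Ici i, f k = f i + ∑ k ∈ Finset.Ioi i, f k := by
    intro i f
    rw [Finset.Ici_eq_cons_Ioi, Finset.sum_cons]
  -- remainder nonneg
  have hR : ∀ i, 0 ≤ c - ∑ k ∈ Finset.Ici i, w k * (u k - γ k) := by
    intro i
    rw [hIci]
    have h1 : w i * (u i - γ i) ≤ w i * ((T i).fdiv (w i)) := by
      apply mul_le_mul_of_nonneg_left _ (hw i).le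
      rw [hβ i]; exact min_le_right _ _
    have h2 : w i * ((T i).fdiv (w i)) ≤ T i := by
      have := Int.fmod_nonneg_of_pos (T i) (hw i)
      rw [Int.fmod_def] at this
      linarith
    have : T i = c - ∑ k ∈ Finset.Ioi i, w k * (u k - γ k) := rfl
    linarith
  -- residue bound
  have hRes : ∀ i, T i - w i * ((T i).fdiv (w i)) < w i := by
    intro i
    have := Int.fmod_lt_of_pos (T i) (hw i)
    rw [Int.fmod_def] at this
    linarith
  -- superincreasing, Iio form
  have hsuper : ∀ s : Fin n, ∑ k ∈ Finset.Iio s, w k * u k ≤ w s := by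
    intro s
    rcases Nat.eq_zero_or_pos s.val with h0 | hpos
    · have he : Finset.Iio s = ∅ := by
        ext k; simp [Finset.mem_Iio, Fin.lt_def, h0]
      rw [he]; simpa using (hw s).le
    · obtain ⟨m, hm⟩ : ∃ m, s.val = m + 1 := ⟨s.val - 1, by omega⟩
      have hmlt : m < n := by omega
      have key := hsi ⟨m, hmlt⟩ s (by simp [hm])
      have hIic : Finset.Iio s = Finset.Iic ⟨m, hmlt⟩ := by
        ext k; simp [Finset.mem_Iio, Finset.mem_Iic, Fin.lt_def, Fin.le_def, hm]
      rw [hIic]; exact key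
  -- split univ around s
  have hsplit : ∀ (s : Fin n) (f : Fin n → ℤ),
      ∑ k, f k = ∑ k ∈ Finset.Iio s, f k + f s + ∑ k ∈ Finset.Ioi s, f k := by
    intro s f
    have : (Finset.univ : Finset (Fin n)) = Finset.Iio s ∪ Finset.Ici s := by
      ext k; simp [Finset.mem_Iio, Finset.mem_Ici, le_or_gt, lt_or_ge]
    rw [this, Finset.sum_union (by
      rw [Finset.disjoint_left]
      intro a ha hb
      rw [Finset.mem_Iio] at ha
      rw [Finset.mem_Ici] at hb
      exact absurd hb (not_le.mpr ha)), hIci s f]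
    ring
  -- knapsack ↔ complement form
  have hflip : ∀ x : Fin n → ℤ, (d ≤ ∑ i, w i * x i) ↔ (∑ i, w i * (u i - x i) ≤ c) := by
    intro x
    have : ∑ i, w i * (u i - x i) = S - ∑ i, w i * x i := by
      rw [hS, ← Finset.sum_sub_distrib]; congr 1; ext i; ring
    rw [this]; constructor <;> intro h <;> linarith
  ext x
  simp only [Set.mem_setOf_eq]
  constructor
  · rintro ⟨hrect, hdx⟩
    refine ⟨hrect, ?_⟩
    by_cases hxe : γ = x
    · exact Or.inl hxe
    -- largest differing index
    have hne : (Finset.univ.filter (fun k => γ k ≠ x k)).Nonempty := by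
      rw [Finset.filter_nonempty_iff]
      by_contra h
      push_neg at h
      exact hxe (funext fun k => h k (Finset.mem_univ k))
    set s := (Finset.univ.filter (fun k => γ k ≠ x k)).max' hne with hs
    have hsmem : γ s ≠ x s := by
      have := (Finset.univ.filter (fun k => γ k ≠ x k)).max'_mem hne
      simpa using this
    have hgt : ∀ k, s < k → γ k = x k := by
      intro k hk
      by_contra hkk
      have : k ≤ s := Finset.le_max' _ k (by simpa using hkk)
      exact absurd hk (not_lt.mpr this)
    rcases lt_or_gt_of_ne hsmem with h1 | h1
    · exact Or.inr ⟨s, h1, hgt⟩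
    · -- x s < γ s : contradiction with knapsack
      exfalso
      rw [hflip x] at hdx
      -- compute lower bound on ∑ w (u - x)
      have hsum := hsplit s (fun k => w k * (u k - x k))
      have hIoieq : ∑ k ∈ Finset.Ioi s, w k * (u k - x k)
          = ∑ k ∈ Finset.Ioi s, w k * (u k - γ k) := by
        apply Finset.sum_congr rfl
        intro k hk
        rw [Finset.mem_Ioi] at hk
        rw [hgt k hk]
      have hIio0 : 0 ≤ ∑ k ∈ Finset.Iio s, w k * (u k - x k) :=
        Finset.sum_nonneg fun k _ =>
          mul_nonneg (hw k).le (by linarith [(hrect k).2])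
      -- β s = fdiv since β s < u s
      have hβs : u s - γ s = (T s).fdiv (w s) := by
        have hγpos : 0 < γ s := lt_of_le_of_lt (hrect s).1 h1
        have : u s - γ s < u s := by linarith
        have hmin := hβ s
        rcases min_cases (u s) ((T s).fdiv (w s)) with ⟨h, _⟩ | ⟨h, _⟩
        · rw [h] at hmin; omega
        · rw [h] at hmin; exact hmin
      have hxs : u s - x s ≥ (u s - γ s) + 1 := by omega
      have hws : T s < w s * ((u s - γ s) + 1) := by
        rw [hβs, mul_add, mul_one]
        linarith [hRes s]
      have hTs : T s = c - ∑ k ∈ Finset.Ioi s, w k * (u k - γ k) := rfl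
      have : c < ∑ i, w i * (u i - x i) := by
        rw [hsum, hIoieq]
        have hws' : w s * (u s - x s) ≥ w s * ((u s - γ s) + 1) :=
          mul_le_mul_of_nonneg_left hxs (hw s).le
        linarith
      linarith
  · rintro ⟨hrect, hlex⟩
    refine ⟨hrect, ?_⟩
    rw [hflip x]
    rcases hlex with heq | ⟨s, h1, hgt⟩
    · -- x = γ
      subst heq
      have h0 : (⟨0, hn⟩ : Fin n) ∈ Finset.univ := Finset.mem_univ _
      have huniv : (Finset.univ : Finset (Fin n)) = Finset.Ici ⟨0, hn⟩ := by
        ext k; simp [Finset.mem_Ici, Fin.le_def]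
      have := hR ⟨0, hn⟩
      rw [← huniv] at this
      linarith
    · have hsum := hsplit s (fun k => w k * (u k - x k))
      have hIoieq : ∑ k ∈ Finset.Ioi s, w k * (u k - x k)
          = ∑ k ∈ Finset.Ioi s, w k * (u k - γ k) := by
        apply Finset.sum_congr rfl
        intro k hk
        rw [Finset.mem_Ioi] at hk; rw [hgt k hk]
      have hIio : ∑ k ∈ Finset.Iio s, w k * (u k - x k) ≤ w s := by
        calc ∑ k ∈ Finset.Iio s, w k * (u k - x k)
            ≤ ∑ k ∈ Finset.Iio s, w k * u k := by
              apply Finset.sum_le_sum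
              intro k _
              apply mul_le_mul_of_nonneg_left _ (hw k).le
              linarith [(hrect k).1]
          _ ≤ w s := hsuper s
      have hxs : u s - x s ≤ (u s - γ s) - 1 := by omega
      have hws : w s * (u s - x s) ≤ w s * (u s - γ s) - w s := by
        have := mul_le_mul_of_nonneg_left hxs (hw s).le
        linarith [this, mul_comm (w s) ((u s - γ s) - 1)]
      have hRs := hR s
      rw [hIci s (fun k => w k * (u k - γ k))] at hRs
      rw [hsum, hIoieq]
      linarith
end

section
/- In the two-knapsack setting, assume additionally that ∑_{i=1}^{n−1} w_i u_i + (θ_n − 1)·w_n ≥ d and that γ_n = θ_n − 1. Then K^≤ ∩ K^≥ = {x ∈ K^≤ : x_n = θ_n} ∪ {x ∈ K^≥ : x_n = θ_n − 1}. -/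
/-- In a superincreasing sequence, the sum of terms strictly below `j` is at most the `j`-th
coefficient. -/
lemma stmt15_aux_si {n : ℕ} (a u : Fin n → ℤ) (ha : ∀ i, 0 < a i) (hu : ∀ i, 1 ≤ u i)
    (hsi : ∀ i j : Fin n, (j : ℕ) = (i : ℕ) + 1 →
      ∑ k ∈ Finset.Iic i, a k * u k ≤ a j)
    (j : Fin n) : ∑ k ∈ Finset.Iio j, a k * u k ≤ a j := by
  rcases Nat.eq_zero_or_pos (j : ℕ) with h0 | hpos
  · have : Finset.Iio j = ∅ := by
      apply Finset.eq_empty_of_forall_notMem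
      intro k hk
      rw [Finset.mem_Iio] at hk
      omega
    rw [this]
    simpa using (ha j).le
  · set i : Fin n := ⟨(j : ℕ) - 1, by omega⟩ with hi
    have hIio : Finset.Iio j = Finset.Iic i := by
      ext k
      simp only [Finset.mem_Iio, Finset.mem_Iic, Fin.lt_def, Fin.le_def]
      have hiv : (i : ℕ) = (j : ℕ) - 1 := rfl
      omega
    rw [hIio]
    exact hsi i j (by simp [hi]; omega)

/-- in the two-knapsack setting with `γ_n = θ_n − 1`, the intersection
`K^≤ ∩ K^≥` decomposes as the union of `{x ∈ K^≤ : x_n = θ_n}` and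
`{x ∈ K^≥ : x_n = θ_n − 1}`.  Here `lst` denotes the last index (index `n`). -/
theorem stmt_15 {n : ℕ} (hn : 1 ≤ n)
    (a w u : Fin n → ℤ)
    (ha : ∀ i, 0 < a i) (hw : ∀ i, 0 < w i) (hu : ∀ i, 1 ≤ u i)
    (hsia : ∀ i j : Fin n, (j : ℕ) = (i : ℕ) + 1 →
      ∑ k ∈ Finset.Iic i, a k * u k ≤ a j)
    (hsiw : ∀ i j : Fin n, (j : ℕ) = (i : ℕ) + 1 →
      ∑ k ∈ Finset.Iic i, w k * u k ≤ w j)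
    (b d : ℤ) (hb : 0 < b) (hd : 0 < d)
    (hub : ∀ i, a i * u i ≤ b) (hdle : d ≤ ∑ i, w i * u i)
    (θ : Fin n → ℤ)
    (hθ : ∀ i : Fin n,
      θ i = min (u i) ((b - ∑ k ∈ Finset.Ioi i, a k * θ k).fdiv (a i)))
    (γ : Fin n → ℤ)
    (hγ : ∀ i : Fin n, γ i = u i - min (u i)
      (((∑ k, w k * u k) - d - ∑ k ∈ Finset.Ioi i, w k * (u k - γ k)).fdiv (w i)))
    (lst : Fin n) (hlst : (lst : ℕ) = n - 1)
    (h1 : d ≤ ∑ i ∈ Finset.Iio lst, w i * u i + (θ lst - 1) * w lst)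
    (h2 : γ lst = θ lst - 1) :
    {x : Fin n → ℤ | (∀ i, 0 ≤ x i ∧ x i ≤ u i) ∧
        ∑ i, a i * x i ≤ b ∧ d ≤ ∑ i, w i * x i} =
      {x : Fin n → ℤ | ((∀ i, 0 ≤ x i ∧ x i ≤ u i) ∧ ∑ i, a i * x i ≤ b) ∧
          x lst = θ lst} ∪
        {x : Fin n → ℤ | ((∀ i, 0 ≤ x i ∧ x i ≤ u i) ∧ d ≤ ∑ i, w i * x i) ∧
          x lst = θ lst - 1} := by
  -- the index `lst` is the top index
  have hle : ∀ j : Fin n, j ≤ lst := by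
    intro j
    rw [Fin.le_def]
    have := j.isLt
    omega
  have hIoi : Finset.Ioi lst = ∅ := by
    apply Finset.eq_empty_of_forall_notMem
    intro k hk
    rw [Finset.mem_Ioi] at hk
    exact absurd (hle k) (not_le.mpr hk)
  have hIic : Finset.Iic lst = Finset.univ :=
    Finset.eq_univ_iff_forall.mpr fun j => Finset.mem_Iic.mpr (hle j)
  have hsplit : ∀ f : Fin n → ℤ,
      ∑ i, f i = ∑ i ∈ Finset.Iio lst, f i + f lst := by
    intro f
    rw [← hIic, ← Finset.Iio_insert,
      Finset.sum_insert (by simp)]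
    ring
  -- θ at the last index is u lst
  have hθl : θ lst = u lst := by
    rw [hθ lst, hIoi]
    have : (b - ∑ k ∈ (∅ : Finset (Fin n)), a k * θ k).fdiv (a lst) = b / a lst := by
      rw [Finset.sum_empty, sub_zero, Int.fdiv_eq_ediv_of_nonneg _ (ha lst).le]
    rw [this, min_eq_left]
    rw [Int.le_ediv_iff_mul_le (ha lst)]
    calc u lst * a lst = a lst * u lst := by ring
    _ ≤ b := hub lst
  -- information from γ at the last index
  set S : ℤ := ∑ k, w k * u k with hS
  have hγl : min (u lst) ((S - d).fdiv (w lst)) = 1 := by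
    have := hγ lst
    rw [hIoi, Finset.sum_empty, sub_zero] at this
    rw [h2, hθl] at this
    linarith
  have hq : (S - d).fdiv (w lst) = (S - d) / w lst := Int.fdiv_eq_ediv_of_nonneg _ (hw lst).le
  have hq1 : (1 : ℤ) ≤ (S - d) / w lst := by
    rw [hq] at hγl
    have := min_le_right (u lst) ((S - d) / w lst)
    rcases le_or_gt 1 ((S - d) / w lst) with h | h
    · exact h
    · have := min_le_left (u lst) ((S - d) / w lst)
      rw [hγl] at *
      rcases min_cases (u lst) ((S - d) / w lst) with ⟨he, _⟩ | ⟨he, _⟩ <;> omega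
  have hwSd : w lst ≤ S - d := by
    have := (Int.le_ediv_iff_mul_le (hw lst)).mp hq1
    linarith
  have hcase : u lst = 1 ∨ S - d < 2 * w lst := by
    rw [hq] at hγl
    rcases min_cases (u lst) ((S - d) / w lst) with ⟨he, _⟩ | ⟨he, _⟩
    · left; omega
    · right
      have h2' : (S - d) / w lst < 2 := by omega
      have := (Int.ediv_lt_iff_lt_mul (hw lst)).mp h2'
      linarith
  -- superincreasing consequences
  have hsa : ∑ k ∈ Finset.Iio lst, a k * u k ≤ a lst :=
    stmt15_aux_si a u ha hu hsia lst
  have hsw : ∑ k ∈ Finset.Iio lst, w k * u k ≤ w lst :=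
    stmt15_aux_si w u hw hu hsiw lst
  have hSsplit : S = ∑ k ∈ Finset.Iio lst, w k * u k + w lst * u lst :=
    hsplit fun k => w k * u k
  -- bound helpers
  have hwx_le : ∀ x : Fin n → ℤ, (∀ i, 0 ≤ x i ∧ x i ≤ u i) →
      ∑ k ∈ Finset.Iio lst, w k * x k ≤ ∑ k ∈ Finset.Iio lst, w k * u k := by
    intro x hx
    apply Finset.sum_le_sum
    intro i _
    exact mul_le_mul_of_nonneg_left (hx i).2 (hw i).le
  have hwx_nonneg : ∀ x : Fin n → ℤ, (∀ i, 0 ≤ x i ∧ x i ≤ u i) →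
      (0 : ℤ) ≤ ∑ k ∈ Finset.Iio lst, w k * x k := by
    intro x hx
    apply Finset.sum_nonneg
    intro i _
    exact mul_nonneg (hw i).le (hx i).1
  have hax_le : ∀ x : Fin n → ℤ, (∀ i, 0 ≤ x i ∧ x i ≤ u i) →
      ∑ k ∈ Finset.Iio lst, a k * x k ≤ ∑ k ∈ Finset.Iio lst, a k * u k := by
    intro x hx
    apply Finset.sum_le_sum
    intro i _
    exact mul_le_mul_of_nonneg_left (hx i).2 (ha i).le
  ext x
  simp only [Set.mem_setOf_eq, Set.mem_union]
  constructor
  · rintro ⟨hx, hxa, hxw⟩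
    -- first show x lst ≥ u lst - 1
    have hxl : u lst - 1 ≤ x lst := by
      by_contra hcon
      push_neg at hcon
      have hx2 : x lst ≤ u lst - 2 := by omega
      rcases hcase with h1' | h1'
      · have := (hx lst).1; omega
      · -- then ∑ w x ≤ S - 2 w lst < d
        have hsum : ∑ i, w i * x i ≤ S - 2 * w lst := by
          rw [hsplit fun i => w i * x i]
          have hl : w lst * x lst ≤ w lst * (u lst - 2) :=
            mul_le_mul_of_nonneg_left hx2 (hw lst).le
          have := hwx_le x hx
          rw [hSsplit]
          linarith
        linarith
    rcases eq_or_lt_of_le hxl with heq | hlt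
    · right
      exact ⟨⟨hx, hxw⟩, by rw [hθl]; omega⟩
    · left
      have : x lst = u lst := by have := (hx lst).2; omega
      exact ⟨⟨hx, hxa⟩, by rw [hθl, this]⟩
  · rintro (⟨⟨hx, hxa⟩, hxl⟩ | ⟨⟨hx, hxw⟩, hxl⟩)
    · refine ⟨hx, hxa, ?_⟩
      rw [hθl] at hxl
      rw [hsplit fun i => w i * x i, hxl]
      have := hwx_nonneg x hx
      -- d ≤ w lst * u lst since ∑_{<lst} w u ≤ w lst ≤ S - d
      have : d ≤ w lst * u lst := by
        rw [hSsplit] at hwSd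
        linarith
      linarith [hwx_nonneg x hx]
    · refine ⟨hx, ?_, hxw⟩
      rw [hθl] at hxl
      rw [hsplit fun i => a i * x i, hxl]
      have h3 := hax_le x hx
      have h4 : a lst * (u lst - 1) = a lst * u lst - a lst := by ring
      calc ∑ k ∈ Finset.Iio lst, a k * x k + a lst * (u lst - 1)
          ≤ ∑ k ∈ Finset.Iio lst, a k * u k + a lst * u lst - a lst := by linarith
        _ ≤ a lst * u lst := by linarith
        _ ≤ b := hub lst
end
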